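/- arXiv:2211.00954 — 7 statements merged into one kernel-verified Lean document; each statement's English description precedes it below -/
import Mathlib

section
/- Let d ≥ 2 and for each i = 1,…,d let K_i ⊆ ℝ be the attractor of an IFS {φ_{k,i}(x) = r_{k,i}x + a_{k,i}}_{k=1}^{ℓ_i} with ℓ_i ≥ 2 and r_{k,i} ∈ (0,1), let A_i = inf K_i, B_i = sup K_i with A_i < B_i, and assume the maps are ordered so that φ_{k,i}(A_i) ≤ φ_{k+1,i}(A_i) for 1 ≤ k ≤ ℓ_i − 1. Set s_min = min over all i,k of r_{k,i}. Let f : ℝ^d → ℝ be C¹. If for every point x ∈ [A_1,B_1] × ⋯ × [A_d,B_d], every i ∈ {1,…,d} and every k ∈ {1,…,ℓ_i − 1} one has ∂_{x_i} f(x) > 0 and s_min·(Σ_{j≠i} (B_j − A_j)·∂_{x_j} f(x)) + (φ_{k,i}(B_i) − φ_{k+1,i}(A_i))·∂_{x_i} f(x) ≥ 0, then f(K_1,…,K_d) = {f(x_1,…,x_d) : x_i ∈ K_i for each i} is a finite union of closed intervals: there exist n ∈ ℕ and reals c_1 ≤ d_1, …, c_n ≤ d_n such that f(K_1,…,K_d)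 = ⋃_{j=1}^n [c_j, d_j]. -/
open Set Filter Topology

set_option maxHeartbeats 1000000 in
/-- Theorem 1.3 (Theorem `arithmetic`): under partial-derivative conditions, the continuous
image of self-similar sets with positive ratios is a finite union of closed intervals. -/
theorem continuous_image_of_self_similar_sets_finite_union_of_intervals
    (d : ℕ) (hd : 2 ≤ d)
    (ℓ : Fin d → ℕ) (hℓ : ∀ i, 2 ≤ ℓ i)
    (r a : (i : Fin d) → Fin (ℓ i) → ℝ)
    (hr : ∀ i k, r i k ∈ Set.Ioo (0 : ℝ) 1)
    (K : Fin d → Set ℝ)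
    (hKne : ∀ i, (K i).Nonempty)
    (hKc : ∀ i, IsCompact (K i))
    (hK : ∀ i, K i = ⋃ k : Fin (ℓ i), (fun x => r i k * x + a i k) '' K i)
    (A B : Fin d → ℝ)
    (hA : ∀ i, A i = sInf (K i)) (hB : ∀ i, B i = sSup (K i))
    (hAB : ∀ i, A i < B i)
    (horder : ∀ i, ∀ k : Fin (ℓ i), ∀ hk : (k : ℕ) + 1 < ℓ i,
      r i k * A i + a i k ≤ r i ⟨(k : ℕ) + 1, hk⟩ * A i + a i ⟨(k : ℕ) + 1, hk⟩)
    (smin : ℝ)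
    (hsmin_le : ∀ i k, smin ≤ r i k)
    (hsmin_mem : ∃ i k, smin = r i k)
    (f : (Fin d → ℝ) → ℝ) (hf : ContDiff ℝ 1 f)
    (hcond : ∀ x : Fin d → ℝ, (∀ i, x i ∈ Set.Icc (A i) (B i)) → ∀ i : Fin d,
      0 < fderiv ℝ f x (Pi.single i 1) ∧
      ∀ k : Fin (ℓ i), ∀ hk : (k : ℕ) + 1 < ℓ i,
        0 ≤ smin * (∑ j ∈ Finset.univ.erase i, (B j - A j) * fderiv ℝ f x (Pi.single j 1))
            + ((r i k * B i + a i k)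
                - (r i ⟨(k : ℕ) + 1, hk⟩ * A i + a i ⟨(k : ℕ) + 1, hk⟩))
              * fderiv ℝ f x (Pi.single i 1)) :
    ∃ (n : ℕ) (c e : Fin n → ℝ), (∀ j, c j ≤ e j) ∧
      {y : ℝ | ∃ x : Fin d → ℝ, (∀ i, x i ∈ K i) ∧ f x = y}
        = ⋃ j : Fin n, Set.Icc (c j) (e j) := by
  classical
  have hfd : Differentiable ℝ f := hf.differentiable one_ne_zero
  have hsmin_pos : 0 < smin := by obtain ⟨i, k, h⟩ := hsmin_mem; rw [h]; exact (hr i k).1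
  have hsmin_lt1 : smin < 1 := by
    obtain ⟨i, k, h⟩ := hsmin_mem; rw [h]; exact (hr i k).2
  have hsub : ∀ i, K i ⊆ Icc (A i) (B i) := by
    intro i x hx
    exact ⟨(hA i) ▸ csInf_le (hKc i).bddBelow hx, (hB i) ▸ le_csSup (hKc i).bddAbove hx⟩
  have hAmem : ∀ i, A i ∈ K i := fun i => (hA i) ▸ (hKc i).sInf_mem (hKne i)
  have hBmem : ∀ i, B i ∈ K i := fun i => (hB i) ▸ (hKc i).sSup_mem (hKne i)
  have hmaps : ∀ i (k : Fin (ℓ i)) x, x ∈ K i → r i k * x + a i k ∈ K i := by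
    intro i k x hx
    have h1 : r i k * x + a i k ∈ (fun x => r i k * x + a i k) '' K i := ⟨x, hx, rfl⟩
    rw [hK i]
    exact mem_iUnion.2 ⟨k, h1⟩
  -- expansion of derivative
  have expand : ∀ (p v : Fin d → ℝ),
      fderiv ℝ f p v = ∑ j, v j * fderiv ℝ f p (Pi.single j 1) := by
    intro p v
    have h1 : v = ∑ j, v j • (Pi.single j 1 : Fin d → ℝ) := by
      funext j'
      rw [Finset.sum_apply]
      simp [Pi.single_apply]
    calc fderiv ℝ f p v = fderiv ℝ f p (∑ j, v j • (Pi.single j 1 : Fin d → ℝ)) := by rw [← h1]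
    _ = ∑ j, v j * fderiv ℝ f p (Pi.single j 1) := by
        rw [map_sum]
        simp [smul_eq_mul]
  -- mean value lemma
  have key : ∀ (x z : Fin d → ℝ), (∀ i, x i ∈ Icc (A i) (B i)) → (∀ i, z i ∈ Icc (A i) (B i)) →
      (∀ p : Fin d → ℝ, (∀ i, p i ∈ Icc (A i) (B i)) →
        0 ≤ ∑ j, (z j - x j) * fderiv ℝ f p (Pi.single j 1)) →
      f x ≤ f z := by
    intro x z hx hz hderiv
    have hboxmem : ∀ t ∈ Icc (0:ℝ) 1, ∀ i, (x + t • (z - x)) i ∈ Icc (A i) (B i) := by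
      intro t ht i
      have h1 := hx i; have h2 := hz i
      simp only [Pi.add_apply, Pi.smul_apply, Pi.sub_apply, smul_eq_mul, mem_Icc] at *
      constructor
      · nlinarith [ht.1, ht.2, h1.1, h1.2, h2.1, h2.2]
      · nlinarith [ht.1, ht.2, h1.1, h1.2, h2.1, h2.2]
    have hgderiv : ∀ t : ℝ,
        HasDerivAt (fun t : ℝ => f (x + t • (z - x))) (fderiv ℝ f (x + t • (z - x)) (z - x)) t := by
      intro t
      have hL : HasDerivAt (fun t : ℝ => x + t • (z - x)) (z - x) t := by
        simpa using ((hasDerivAt_id t).smul_const (z - x)).const_add x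
      exact (hfd (x + t • (z - x))).hasFDerivAt.comp_hasDerivAt t hL
    have hgmono : MonotoneOn (fun t : ℝ => f (x + t • (z - x))) (Icc (0:ℝ) 1) := by
      apply monotoneOn_of_deriv_nonneg (convex_Icc 0 1)
      · exact (hf.continuous.comp (by fun_prop)).continuousOn
      · intro t ht
        exact (hgderiv t).differentiableAt.differentiableWithinAt
      · intro t ht
        rw [interior_Icc] at ht
        rw [(hgderiv t).deriv, expand]
        exact hderiv _ (hboxmem t (Ioo_subset_Icc_self ht))
    have h0 : x + (0:ℝ) • (z - x) = x := by simp
    have h1 : x + (1:ℝ) • (z - x) = z := by simp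
    have := hgmono (left_mem_Icc.2 zero_le_one) (right_mem_Icc.2 zero_le_one) zero_le_one
    simpa [h0, h1] using this
  -- monotonicity of f on the box
  have hmono' : ∀ (x z : Fin d → ℝ), (∀ i, x i ∈ Icc (A i) (B i)) →
      (∀ i, z i ∈ Icc (A i) (B i)) → (∀ i, x i ≤ z i) → f x ≤ f z := by
    intro x z hx hz hle
    apply key x z hx hz
    intro p hp
    apply Finset.sum_nonneg
    intro j _
    exact mul_nonneg (sub_nonneg.2 (hle j)) (le_of_lt (hcond p hp j).1)
  -- ordering of the left endpoints
  have horder' : ∀ i (k k' : Fin (ℓ i)), (k:ℕ) ≤ (k':ℕ) →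
      r i k * A i + a i k ≤ r i k' * A i + a i k' := by
    intro i k k' hkk
    obtain ⟨n, hn⟩ : ∃ n, (k':ℕ) = (k:ℕ) + n := ⟨k' - k, by omega⟩
    induction n generalizing k' with
    | zero =>
      have : k = k' := Fin.ext (by omega)
      subst this; exact le_refl _
    | succ n ih =>
      have hk'2 := k'.2
      have hlt : (k:ℕ) + n < ℓ i := by omega
      have hv : ((⟨(k:ℕ) + n, hlt⟩ : Fin (ℓ i)) : ℕ) = (k:ℕ) + n := rfl
      have h1 := ih ⟨(k:ℕ) + n, hlt⟩ (by omega) (by omega)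
      have hlt2 : ((⟨(k:ℕ) + n, hlt⟩ : Fin (ℓ i)) : ℕ) + 1 < ℓ i := by omega
      have h2 := horder i ⟨(k:ℕ) + n, hlt⟩ hlt2
      have hk'eq : k' = ⟨((⟨(k:ℕ) + n, hlt⟩ : Fin (ℓ i)) : ℕ) + 1, hlt2⟩ := Fin.ext (by simp only [Fin.val_mk]; omega)
      rw [hk'eq]
      exact le_trans h1 h2
  -- the first map fixes A
  have hfixA : ∀ i, r i ⟨0, by have := hℓ i; omega⟩ * A i + a i ⟨0, by have := hℓ i; omega⟩ = A i := by
    intro i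
    have h2 : A i ∈ K i := hAmem i
    rw [hK i] at h2
    obtain ⟨k, x, hxK, hxk⟩ := by simpa using mem_iUnion.1 h2
    have hge : A i ≤ r i ⟨0, by have := hℓ i; omega⟩ * A i + a i ⟨0, by have := hℓ i; omega⟩ :=
      (hsub i (hmaps i _ _ (hAmem i))).1
    have hle1 : r i ⟨0, by have := hℓ i; omega⟩ * A i + a i ⟨0, by have := hℓ i; omega⟩ ≤ r i k * A i + a i k :=
      horder' i _ k (by simp)
    have hle2 : r i k * A i + a i k ≤ r i k * x + a i k := by
      have hAx : A i ≤ x := (hsub i hxK).1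
      nlinarith [(hr i k).1]
    linarith [hxk ▸ hle2]
  -- some map fixes B
  have hfixB : ∀ i, ∃ k : Fin (ℓ i), r i k * B i + a i k = B i := by
    intro i
    have h2 : B i ∈ K i := hBmem i
    rw [hK i] at h2
    obtain ⟨k, x, hxK, hxk⟩ := by simpa using mem_iUnion.1 h2
    refine ⟨k, le_antisymm (hsub i (hmaps i k _ (hBmem i))).2 ?_⟩
    have hxB : x ≤ B i := (hsub i hxK).2
    nlinarith [(hr i k).1, hxk]
  -- rmax
  obtain ⟨rmax, hrmax_lt1, hrmax_ge⟩ :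
      ∃ rmax : ℝ, rmax < 1 ∧ ∀ i k, r i k ≤ rmax := by
    obtain ⟨p, -, hp⟩ := Finset.exists_max_image (Finset.univ : Finset (Σ i : Fin d, Fin (ℓ i)))
      (fun p => r p.1 p.2)
      ⟨⟨⟨0, by omega⟩, ⟨0, by have := hℓ ⟨0, by omega⟩; omega⟩⟩, Finset.mem_univ _⟩
    exact ⟨r p.1 p.2, (hr p.1 p.2).2, fun i k => hp ⟨i, k⟩ (Finset.mem_univ _)⟩
  have hrmax_pos : 0 < rmax :=
    lt_of_lt_of_le (hr ⟨0, by omega⟩ ⟨0, by have := hℓ ⟨0, by omega⟩; omega⟩).1 (hrmax_ge _ _)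
  -- reduce to a single interval
  refine ⟨1, fun _ => f A, fun _ => f B,
    fun _ => hmono' A B (fun i => ⟨le_refl _, (hAB i).le⟩)
      (fun i => ⟨(hAB i).le, le_refl _⟩) (fun i => (hAB i).le), ?_⟩
  have hiUnion : (⋃ _j : Fin 1, Icc (f A) (f B)) = Icc (f A) (f B) := iUnion_const _
  rw [hiUnion]
  ext y
  simp only [mem_setOf_eq, mem_Icc]
  constructor
  · rintro ⟨x, hx, rfl⟩
    exact ⟨hmono' A x (fun i => ⟨le_refl _, (hAB i).le⟩) (fun i => hsub i (hx i))
        (fun i => (hsub i (hx i)).1),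
      hmono' x B (fun i => hsub i (hx i)) (fun i => ⟨(hAB i).le, le_refl _⟩)
        (fun i => (hsub i (hx i)).2)⟩
  rintro ⟨hy1, hy2⟩
  -- the refinement step
  have hstep : ∀ s : {s : (Fin d → ℝ) × (Fin d → ℝ) //
      (∀ i, 0 < s.1 i) ∧ (∀ i j, smin * s.1 j ≤ s.1 i) ∧
      (∀ i, ∀ x ∈ K i, s.1 i * x + s.2 i ∈ K i) ∧
      f (fun i => s.1 i * A i + s.2 i) ≤ y ∧ y ≤ f (fun i => s.1 i * B i + s.2 i)},
      ∃ s' : {s : (Fin d → ℝ) × (Fin d → ℝ) //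
      (∀ i, 0 < s.1 i) ∧ (∀ i j, smin * s.1 j ≤ s.1 i) ∧
      (∀ i, ∀ x ∈ K i, s.1 i * x + s.2 i ∈ K i) ∧
      f (fun i => s.1 i * A i + s.2 i) ≤ y ∧ y ≤ f (fun i => s.1 i * B i + s.2 i)},
      (∀ i, s.1.1 i * A i + s.1.2 i ≤ s'.1.1 i * A i + s'.1.2 i) ∧
      (∏ j, s'.1.1 j) ≤ rmax * ∏ j, s.1.1 j := by
    rintro ⟨⟨ρ, c⟩, h1, h2, h3, h4, h5⟩
    dsimp only at h1 h2 h3 h4 h5 ⊢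
    obtain ⟨i0, -, hi0⟩ := Finset.exists_max_image (Finset.univ : Finset (Fin d)) ρ
      ⟨⟨0, by omega⟩, Finset.mem_univ _⟩
    have hi0' : ∀ j, ρ j ≤ ρ i0 := fun j => hi0 j (Finset.mem_univ j)
    set xk : Fin (ℓ i0) → (Fin d → ℝ) := fun k => Function.update (fun i => ρ i * A i + c i) i0
      (ρ i0 * (r i0 k * A i0 + a i0 k) + c i0) with hxk
    set zk : Fin (ℓ i0) → (Fin d → ℝ) := fun k => Function.update (fun i => ρ i * B i + c i) i0
      (ρ i0 * (r i0 k * B i0 + a i0 k) + c i0) with hzk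
    have hxk_at : ∀ k, xk k i0 = ρ i0 * (r i0 k * A i0 + a i0 k) + c i0 := by
      intro k; rw [hxk]; exact Function.update_self _ _ _
    have hzk_at : ∀ k, zk k i0 = ρ i0 * (r i0 k * B i0 + a i0 k) + c i0 := by
      intro k; rw [hzk]; exact Function.update_self _ _ _
    have hxk_ne : ∀ k i, i ≠ i0 → xk k i = ρ i * A i + c i := by
      intro k i h; rw [hxk]; exact Function.update_of_ne h _ _
    have hzk_ne : ∀ k i, i ≠ i0 → zk k i = ρ i * B i + c i := by
      intro k i h; rw [hzk]; exact Function.update_of_ne h _ _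
    have hxkK : ∀ k i, xk k i ∈ K i := by
      intro k i
      by_cases h : i = i0
      · subst h; rw [hxk_at]
        exact h3 i _ (hmaps i k _ (hAmem i))
      · rw [hxk_ne k i h]
        exact h3 i (A i) (hAmem i)
    have hzkK : ∀ k i, zk k i ∈ K i := by
      intro k i
      by_cases h : i = i0
      · subst h; rw [hzk_at]
        exact h3 i _ (hmaps i k _ (hBmem i))
      · rw [hzk_ne k i h]
        exact h3 i (B i) (hBmem i)
    have hxkbox : ∀ k i, xk k i ∈ Icc (A i) (B i) := fun k i => hsub i (hxkK k i)
    have hzkbox : ∀ k i, zk k i ∈ Icc (A i) (B i) := fun k i => hsub i (hzkK k i)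
    have hLmono : ∀ k k' : Fin (ℓ i0), (k:ℕ) ≤ (k':ℕ) → f (xk k) ≤ f (xk k') := by
      intro k k' hkk
      apply hmono' _ _ (hxkbox k) (hxkbox k')
      intro i
      by_cases h : i = i0
      · subst h; rw [hxk_at, hxk_at]
        have := horder' i k k' hkk
        nlinarith [h1 i]
      · rw [hxk_ne k i h, hxk_ne k' i h]
    have hLR : ∀ k, f (xk k) ≤ f (zk k) := by
      intro k
      apply hmono' _ _ (hxkbox k) (hzkbox k)
      intro i
      by_cases h : i = i0
      · subst h; rw [hxk_at, hzk_at]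
        nlinarith [mul_nonneg (mul_nonneg (h1 i).le (hr i k).1.le) (sub_nonneg.2 (hAB i).le)]
      · rw [hxk_ne k i h, hzk_ne k i h]
        nlinarith [mul_nonneg (h1 i).le (sub_nonneg.2 (hAB i).le)]
    have hchain : ∀ (k : Fin (ℓ i0)) (hk : (k:ℕ) + 1 < ℓ i0),
        f (xk ⟨(k:ℕ)+1, hk⟩) ≤ f (zk k) := by
      intro k hk
      apply key _ _ (hxkbox _) (hzkbox k)
      intro p hp
      have hC := (hcond p hp i0).2 k hk
      rw [← Finset.sum_erase_add _ _ (Finset.mem_univ i0)]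
      have hdiff : (zk k i0 - xk ⟨(k:ℕ)+1, hk⟩ i0) * fderiv ℝ f p (Pi.single i0 1)
          = ρ i0 * (((r i0 k * B i0 + a i0 k)
              - (r i0 ⟨(k:ℕ)+1, hk⟩ * A i0 + a i0 ⟨(k:ℕ)+1, hk⟩))
            * fderiv ℝ f p (Pi.single i0 1)) := by
        rw [hxk_at, hzk_at]; ring
      have hsum : ∑ j ∈ Finset.univ.erase i0,
            (smin * ρ i0) * ((B j - A j) * fderiv ℝ f p (Pi.single j 1))
          ≤ ∑ j ∈ Finset.univ.erase i0,
            (zk k j - xk ⟨(k:ℕ)+1, hk⟩ j) * fderiv ℝ f p (Pi.single j 1) := by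
        apply Finset.sum_le_sum
        intro j hj
        have hji0 : j ≠ i0 := Finset.ne_of_mem_erase hj
        rw [hxk_ne _ j hji0, hzk_ne _ j hji0]
        have h2' := h2 j i0
        have hD := (hcond p hp j).1
        nlinarith [mul_nonneg (mul_nonneg (sub_nonneg.2 h2') (sub_nonneg.2 (hAB j).le)) hD.le]
      have hmulsum : ∑ j ∈ Finset.univ.erase i0,
            (smin * ρ i0) * ((B j - A j) * fderiv ℝ f p (Pi.single j 1))
          = (smin * ρ i0) * ∑ j ∈ Finset.univ.erase i0,
            ((B j - A j) * fderiv ℝ f p (Pi.single j 1)) := by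
        rw [Finset.mul_sum]
      have hnn : 0 ≤ ρ i0 * (smin * (∑ j ∈ Finset.univ.erase i0,
            (B j - A j) * fderiv ℝ f p (Pi.single j 1))
          + ((r i0 k * B i0 + a i0 k)
              - (r i0 ⟨(k:ℕ)+1, hk⟩ * A i0 + a i0 ⟨(k:ℕ)+1, hk⟩))
            * fderiv ℝ f p (Pi.single i0 1)) := mul_nonneg (h1 i0).le hC
      rw [hmulsum] at hsum
      have hexp : ρ i0 * (smin * (∑ j ∈ Finset.univ.erase i0,
            (B j - A j) * fderiv ℝ f p (Pi.single j 1))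
          + ((r i0 k * B i0 + a i0 k)
              - (r i0 ⟨(k:ℕ)+1, hk⟩ * A i0 + a i0 ⟨(k:ℕ)+1, hk⟩))
            * fderiv ℝ f p (Pi.single i0 1))
          = (smin * ρ i0) * (∑ j ∈ Finset.univ.erase i0,
            ((B j - A j) * fderiv ℝ f p (Pi.single j 1)))
          + ρ i0 * (((r i0 k * B i0 + a i0 k)
              - (r i0 ⟨(k:ℕ)+1, hk⟩ * A i0 + a i0 ⟨(k:ℕ)+1, hk⟩))
            * fderiv ℝ f p (Pi.single i0 1)) := by ring
      rw [hexp] at hnn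
      rw [← hdiff] at hnn
      linarith
    -- find a good child
    have hℓ0 : 2 ≤ ℓ i0 := hℓ i0
    set k0 : Fin (ℓ i0) := ⟨0, by omega⟩ with hk0
    have hA0 : r i0 k0 * A i0 + a i0 k0 = A i0 := hfixA i0
    have hx0 : xk k0 = fun i => ρ i * A i + c i := by
      funext i
      by_cases h : i = i0
      · subst h; rw [hxk_at, hA0]
      · rw [hxk_ne _ _ h]
    obtain ⟨kB, hkB⟩ := hfixB i0
    have hzB : zk kB = fun i => ρ i * B i + c i := by
      funext i
      by_cases h : i = i0
      · subst h; rw [hzk_at, hkB]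
      · rw [hzk_ne _ _ h]
    set T : Finset (Fin (ℓ i0)) := Finset.univ.filter (fun k => f (xk k) ≤ y) with hT
    have hTne : T.Nonempty := ⟨k0, by
      rw [hT, Finset.mem_filter]
      exact ⟨Finset.mem_univ _, by rw [hx0]; exact h4⟩⟩
    obtain ⟨k, hkL, hkR⟩ : ∃ k : Fin (ℓ i0), f (xk k) ≤ y ∧ y ≤ f (zk k) := by
      set k1 := T.max' hTne with hk1
      have hk1L : f (xk k1) ≤ y := (Finset.mem_filter.1 (T.max'_mem hTne)).2
      by_cases hc1 : y ≤ f (zk k1)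
      · exact ⟨k1, hk1L, hc1⟩
      by_cases hc2 : f (xk kB) ≤ y
      · exact ⟨kB, hc2, by rw [hzB]; exact h5⟩
      exfalso
      push_neg at hc1 hc2
      have hlt : (k1:ℕ) < (kB:ℕ) := by
        by_contra hcon
        push_neg at hcon
        have := hLmono kB k1 hcon
        linarith
      have hk1s : (k1:ℕ) + 1 < ℓ i0 := by have := kB.2; omega
      have hch := hchain k1 hk1s
      have hmemT : (⟨(k1:ℕ)+1, hk1s⟩ : Fin (ℓ i0)) ∈ T := by
        rw [hT, Finset.mem_filter]
        exact ⟨Finset.mem_univ _, by linarith⟩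
      have hle := T.le_max' _ hmemT
      rw [← hk1] at hle
      have hle2 : ((⟨(k1:ℕ)+1, hk1s⟩ : Fin (ℓ i0)) : ℕ) ≤ (k1:ℕ) := Fin.le_def.1 hle
      have hv : ((⟨(k1:ℕ)+1, hk1s⟩ : Fin (ℓ i0)) : ℕ) = (k1:ℕ) + 1 := rfl
      omega
    -- build the new state
    set ρ' := Function.update ρ i0 (ρ i0 * r i0 k) with hρ'
    set c' := Function.update c i0 (ρ i0 * a i0 k + c i0) with hc'
    have hρ'pos : ∀ i, 0 < ρ' i := by
      intro i; rw [hρ', Function.update_apply]; split_ifs with h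
      · exact mul_pos (h1 i0) (hr i0 k).1
      · exact h1 i
    have hρ'le : ∀ i, ρ' i ≤ ρ i := by
      intro i; rw [hρ', Function.update_apply]; split_ifs with h
      · rw [h]; nlinarith [(hr i0 k).2, (hr i0 k).1, h1 i0]
      · exact le_refl _
    have hρ'i0 : ρ' i0 = ρ i0 * r i0 k := by
      rw [hρ']; exact Function.update_self _ _ _
    have hρ'ne : ∀ i, i ≠ i0 → ρ' i = ρ i := by
      intro i h; rw [hρ']; exact Function.update_of_ne h _ _
    have hinv2 : ∀ i j, smin * ρ' j ≤ ρ' i := by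
      intro i j
      have hj : ρ' j ≤ ρ i0 := le_trans (hρ'le j) (hi0' j)
      by_cases h : i = i0
      · rw [h, hρ'i0]
        nlinarith [mul_le_mul_of_nonneg_left hj hsmin_pos.le,
          mul_le_mul_of_nonneg_right (hsmin_le i0 k) (h1 i0).le]
      · rw [hρ'ne i h]
        nlinarith [mul_le_mul_of_nonneg_left (hρ'le j) hsmin_pos.le, h2 i j]
    have hinv3 : ∀ i, ∀ x ∈ K i, ρ' i * x + c' i ∈ K i := by
      intro i x hx
      rw [hρ', hc', Function.update_apply, Function.update_apply]
      split_ifs with h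
      · subst h
        have heq : (ρ i * r i k) * x + (ρ i * a i k + c i)
            = ρ i * (r i k * x + a i k) + c i := by ring
        rw [heq]
        exact h3 i _ (hmaps i k x hx)
      · exact h3 i x hx
    have hmin_eq : (fun i => ρ' i * A i + c' i) = xk k := by
      funext i
      rw [hρ', hc', Function.update_apply, Function.update_apply]
      split_ifs with h
      · subst h; rw [hxk_at]; ring
      · rw [hxk_ne _ _ h]
    have hmax_eq : (fun i => ρ' i * B i + c' i) = zk k := by
      funext i
      rw [hρ', hc', Function.update_apply, Function.update_apply]
      split_ifs with h
      · subst h; rw [hzk_at]; ring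
      · rw [hzk_ne _ _ h]
    have hmono_p : ∀ i, ρ i * A i + c i ≤ ρ' i * A i + c' i := by
      intro i
      rw [hρ', hc', Function.update_apply, Function.update_apply]
      split_ifs with h
      · subst h
        have hAk : A i ≤ r i k * A i + a i k := (hsub i (hmaps i k _ (hAmem i))).1
        nlinarith [h1 i]
      · exact le_refl _
    have hprod' : (∏ j, ρ' j) ≤ rmax * ∏ j, ρ j := by
      rw [hρ', Finset.prod_update_of_mem (Finset.mem_univ i0), Finset.sdiff_singleton_eq_erase]
      rw [← Finset.mul_prod_erase Finset.univ ρ (Finset.mem_univ i0)]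
      have hPe : 0 ≤ ∏ j ∈ Finset.univ.erase i0, ρ j :=
        Finset.prod_nonneg (fun j _ => (h1 j).le)
      have h1' : 0 ≤ ρ i0 * ∏ j ∈ Finset.univ.erase i0, ρ j := mul_nonneg (h1 i0).le hPe
      nlinarith [mul_le_mul_of_nonneg_right (hrmax_ge i0 k) h1']
    exact ⟨⟨(ρ', c'), hρ'pos, hinv2, hinv3, by rw [hmin_eq]; exact hkL,
      by rw [hmax_eq]; exact hkR⟩, hmono_p, hprod'⟩
  choose g hg1 hg2 using hstep
  -- initial state
  have hcorA : (fun i => (1:ℝ) * A i + 0) = A := by funext i; ring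
  have hcorB : (fun i => (1:ℝ) * B i + 0) = B := by funext i; ring
  have hinit : (∀ i, (0:ℝ) < (fun _ : Fin d => (1:ℝ)) i) ∧
      (∀ i j, smin * (fun _ : Fin d => (1:ℝ)) j ≤ (fun _ : Fin d => (1:ℝ)) i) ∧
      (∀ i, ∀ x ∈ K i, (fun _ : Fin d => (1:ℝ)) i * x + (fun _ : Fin d => (0:ℝ)) i ∈ K i) ∧
      f (fun i => (fun _ : Fin d => (1:ℝ)) i * A i + (fun _ : Fin d => (0:ℝ)) i) ≤ y ∧
      y ≤ f (fun i => (fun _ : Fin d => (1:ℝ)) i * B i + (fun _ : Fin d => (0:ℝ)) i) := by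
    refine ⟨fun i => one_pos, fun i j => by show smin * 1 ≤ 1; linarith,
      fun i x hx => by simpa using hx, ?_, ?_⟩
    · simpa [hcorA] using hy1
    · simpa [hcorB] using hy2
  set S := fun n => g^[n] ⟨(fun _ => (1:ℝ), fun _ => (0:ℝ)), hinit⟩ with hS
  have hSsucc : ∀ n, S (n + 1) = g (S n) := fun n => Function.iterate_succ_apply' g _ _
  set ρn : ℕ → Fin d → ℝ := fun n => (S n).1.1 with hρn
  set cn : ℕ → Fin d → ℝ := fun n => (S n).1.2 with hcn
  have hP : ∀ n, (∀ i, 0 < ρn n i) ∧ (∀ i j, smin * ρn n j ≤ ρn n i) ∧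
      (∀ i, ∀ x ∈ K i, ρn n i * x + cn n i ∈ K i) ∧
      f (fun i => ρn n i * A i + cn n i) ≤ y ∧ y ≤ f (fun i => ρn n i * B i + cn n i) :=
    fun n => (S n).2
  have hpmono1 : ∀ n i, ρn n i * A i + cn n i ≤ ρn (n+1) i * A i + cn (n+1) i := by
    intro n i
    have h := hg1 (S n) i
    rw [← hSsucc n] at h
    exact h
  have hprod : ∀ n, (∏ j, ρn n j) ≤ rmax ^ n := by
    intro n
    induction n with
    | zero =>
      have h0 : ρn 0 = fun _ => (1:ℝ) := rfl
      rw [h0]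
      simp
    | succ n ih =>
      have h := hg2 (S n)
      rw [← hSsucc n] at h
      calc (∏ j, ρn (n+1) j) ≤ rmax * ∏ j, ρn n j := h
      _ ≤ rmax * rmax ^ n := by nlinarith [pow_nonneg hrmax_pos.le n]
      _ = rmax ^ (n+1) := by ring
  -- ρn tends to 0
  obtain ⟨m, hm⟩ : ∃ m, d = m + 1 := ⟨d - 1, by omega⟩
  have hρbound : ∀ n i, smin ^ m * (ρn n i) ^ (m + 1) ≤ ∏ j, ρn n j := by
    intro n i
    have h1 := Finset.mul_prod_erase Finset.univ (ρn n) (Finset.mem_univ i)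
    have h2 : ∏ j ∈ Finset.univ.erase i, (smin * ρn n i) ≤ ∏ j ∈ Finset.univ.erase i, ρn n j :=
      Finset.prod_le_prod (fun j _ => mul_nonneg hsmin_pos.le ((hP n).1 i).le)
        (fun j _ => (hP n).2.1 j i)
    rw [Finset.prod_const] at h2
    have hcard : (Finset.univ.erase i).card = m := by
      rw [Finset.card_erase_of_mem (Finset.mem_univ i), Finset.card_univ, Fintype.card_fin]
      omega
    rw [hcard] at h2
    have h3 : smin ^ m * (ρn n i) ^ (m + 1) = ρn n i * (smin * ρn n i) ^ m := by ring
    rw [h3]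
    calc ρn n i * (smin * ρn n i) ^ m ≤ ρn n i * ∏ j ∈ Finset.univ.erase i, ρn n j := by
          have := ((hP n).1 i).le
          nlinarith
    _ = ∏ j, ρn n j := h1
  have hρtend : ∀ i, Tendsto (fun n => ρn n i) atTop (𝓝 0) := by
    intro i
    have hsm : (0:ℝ) < smin ^ m := pow_pos hsmin_pos m
    have hub : ∀ n, (ρn n i) ^ (m + 1) ≤ rmax ^ n / smin ^ m := by
      intro n
      rw [le_div_iff₀ hsm]
      calc (ρn n i) ^ (m+1) * smin ^ m = smin ^ m * (ρn n i) ^ (m+1) := by ring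
      _ ≤ ∏ j, ρn n j := hρbound n i
      _ ≤ rmax ^ n := hprod n
    have htend0 : Tendsto (fun n => rmax ^ n / smin ^ m) atTop (𝓝 0) := by
      simpa using (tendsto_pow_atTop_nhds_zero_of_lt_one hrmax_pos.le hrmax_lt1).div_const (smin ^ m)
    have hp : Tendsto (fun n => (ρn n i) ^ (m + 1)) atTop (𝓝 0) :=
      squeeze_zero (fun n => pow_nonneg ((hP n).1 i).le _) hub htend0
    rw [tendsto_order]
    constructor
    · intro b hb
      filter_upwards with n
      exact lt_trans hb ((hP n).1 i)
    · intro b hb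
      have hev : ∀ᶠ n in atTop, (ρn n i) ^ (m + 1) < b ^ (m + 1) :=
        hp.eventually_lt_const (by positivity)
      filter_upwards [hev] with n hn
      exact lt_of_pow_lt_pow_left₀ _ hb.le hn
  -- the limit point
  have hpmem : ∀ n i, ρn n i * A i + cn n i ∈ K i := fun n i => (hP n).2.2.1 i (A i) (hAmem i)
  have hpmonot : ∀ i, Monotone fun n => ρn n i * A i + cn n i :=
    fun i => monotone_nat_of_le_succ (fun n => hpmono1 n i)
  have hbdd : ∀ i, BddAbove (Set.range fun n => ρn n i * A i + cn n i) := by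
    intro i
    refine ⟨B i, ?_⟩
    rintro _ ⟨n, rfl⟩
    exact (hsub i (hpmem n i)).2
  set x : Fin d → ℝ := fun i => ⨆ n, (ρn n i * A i + cn n i) with hx
  have hxt : ∀ i, Tendsto (fun n => ρn n i * A i + cn n i) atTop (𝓝 (x i)) :=
    fun i => tendsto_atTop_ciSup (hpmonot i) (hbdd i)
  have hxK : ∀ i, x i ∈ K i := fun i =>
    (hKc i).isClosed.mem_of_tendsto (hxt i) (Filter.Eventually.of_forall fun n => hpmem n i)
  have hqt : ∀ i, Tendsto (fun n => ρn n i * B i + cn n i) atTop (𝓝 (x i)) := by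
    intro i
    have heq : ∀ n, ρn n i * B i + cn n i = (ρn n i * A i + cn n i) + ρn n i * (B i - A i) := by
      intro n; ring
    have h2 : Tendsto (fun n => (ρn n i * A i + cn n i) + ρn n i * (B i - A i)) atTop
        (𝓝 (x i + 0 * (B i - A i))) := (hxt i).add ((hρtend i).mul_const _)
    simpa [heq] using h2
  have hfp : Tendsto (fun n => f (fun i => ρn n i * A i + cn n i)) atTop (𝓝 (f x)) :=
    (hf.continuous.tendsto x).comp (tendsto_pi_nhds.2 fun i => hxt i)
  have hfq : Tendsto (fun n => f (fun i => ρn n i * B i + cn n i)) atTop (𝓝 (f x)) :=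
    (hf.continuous.tendsto x).comp (tendsto_pi_nhds.2 fun i => hqt i)
  have hle1 : f x ≤ y := le_of_tendsto hfp (Filter.Eventually.of_forall fun n => (hP n).2.2.2.1)
  have hle2 : y ≤ f x := ge_of_tendsto hfq (Filter.Eventually.of_forall fun n => (hP n).2.2.2.2)
  exact ⟨x, hxK, le_antisymm hle1 hle2⟩
end

section
/- Let d ≥ 2 and for each i = 1,…,d let K_i ⊆ ℝ be the attractor of an IFS {φ_{k,i}(x) = r_{k,i}x + a_{k,i}}_{k=1}^{ℓ_i} with ℓ_i ≥ 2 and r_{k,i} ∈ (0,1), let A_i = inf K_i, B_i = sup K_i with A_i < B_i, and assume the maps are ordered so that φ_{k,i}(A_i) ≤ φ_{k+1,i}(A_i) for 1 ≤ k ≤ ℓ_i − 1. Set s_min = min over all i,k of r_{k,i}. If for every i ∈ {1,…,d} and every k ∈ {1,…,ℓ_i − 1} one has s_min·(Σ_{j≠i} (B_j − A_j)) + (φ_{k,i}(B_i) − φ_{k+1,i}(A_i)) ≥ 0, then the arithmetic sum K_1 + K_2 + ⋯ + K_d = {x_1 + x_2 + ⋯ + x_d : x_i ∈ K_i for each i}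 is a finite union of closed intervals: there exist n ∈ ℕ and reals c_1 ≤ d_1, …, c_n ≤ d_n with K_1 + ⋯ + K_d = ⋃_{j=1}^n [c_j, d_j]. -/
open Set

set_option maxHeartbeats 2000000

/-- Invariant for the cylinder refinement argument: `s i, t i` describe an affine map
`x ↦ s i * x + t i` mapping `K i` into itself, scales are pairwise comparable via `smin`,
and the target `y` lies in the sum of the cylinder intervals. -/
def SSInv (d : ℕ) (K : Fin d → Set ℝ) (A B : Fin d → ℝ) (smin y : ℝ)
    (s t : Fin d → ℝ) : Prop :=
  (∀ i, 0 < s i) ∧ (∀ i, ∀ z ∈ K i, s i * z + t i ∈ K i) ∧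
  (∀ i j, smin * s i ≤ s j) ∧
  (∑ i, (s i * A i + t i)) ≤ y ∧ y ≤ ∑ i, (s i * B i + t i)

/-- The arithmetic sum of self-similar sets with positive ratios is a finite union of
closed intervals, under the gap condition. -/
theorem sum_of_self_similar_sets_finite_union_of_intervals
    (d : ℕ) (hd : 2 ≤ d)
    (ℓ : Fin d → ℕ) (hℓ : ∀ i, 2 ≤ ℓ i)
    (r a : (i : Fin d) → Fin (ℓ i) → ℝ)
    (hr : ∀ i k, r i k ∈ Set.Ioo (0 : ℝ) 1)
    (K : Fin d → Set ℝ)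
    (hKne : ∀ i, (K i).Nonempty)
    (hKc : ∀ i, IsCompact (K i))
    (hK : ∀ i, K i = ⋃ k : Fin (ℓ i), (fun x => r i k * x + a i k) '' K i)
    (A B : Fin d → ℝ)
    (hA : ∀ i, A i = sInf (K i)) (hB : ∀ i, B i = sSup (K i))
    (hAB : ∀ i, A i < B i)
    (horder : ∀ i, ∀ k : Fin (ℓ i), ∀ hk : (k : ℕ) + 1 < ℓ i,
      r i k * A i + a i k ≤ r i ⟨(k : ℕ) + 1, hk⟩ * A i + a i ⟨(k : ℕ) + 1, hk⟩)
    (smin : ℝ)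
    (hsmin_le : ∀ i k, smin ≤ r i k)
    (hsmin_mem : ∃ i k, smin = r i k)
    (hcond : ∀ i : Fin d, ∀ k : Fin (ℓ i), ∀ hk : (k : ℕ) + 1 < ℓ i,
      0 ≤ smin * (∑ j ∈ Finset.univ.erase i, (B j - A j))
          + ((r i k * B i + a i k)
              - (r i ⟨(k : ℕ) + 1, hk⟩ * A i + a i ⟨(k : ℕ) + 1, hk⟩))) :
    ∃ (n : ℕ) (c e : Fin n → ℝ), (∀ j, c j ≤ e j) ∧
      {y : ℝ | ∃ x : Fin d → ℝ, (∀ i, x i ∈ K i) ∧ (∑ i, x i) = y}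
        = ⋃ j : Fin n, Set.Icc (c j) (e j) := by
  classical
  have hdpos : 0 < d := by omega
  haveI : NeZero d := ⟨by omega⟩
  have hℓpos : ∀ i, 0 < ℓ i := fun i => by have := hℓ i; omega
  haveI : ∀ i, NeZero (ℓ i) := fun i => ⟨by have := hℓ i; omega⟩
  -- smin positivity
  obtain ⟨i₁, k₁, hsmineq⟩ := hsmin_mem
  have hsminpos : 0 < smin := hsmineq ▸ (hr i₁ k₁).1
  have hsminle1 : smin ≤ 1 := le_of_lt (hsmineq ▸ (hr i₁ k₁).2)
  -- basic facts about K, A, B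
  have hbddB : ∀ i, BddBelow (K i) := fun i => (hKc i).bddBelow
  have hbddA : ∀ i, BddAbove (K i) := fun i => (hKc i).bddAbove
  have hAmem : ∀ i, A i ∈ K i := fun i => (hA i) ▸ (hKc i).sInf_mem (hKne i)
  have hBmem : ∀ i, B i ∈ K i := fun i => (hB i) ▸ (hKc i).sSup_mem (hKne i)
  have hle : ∀ i, ∀ x ∈ K i, A i ≤ x := fun i x hx => (hA i) ▸ csInf_le (hbddB i) hx
  have hge : ∀ i, ∀ x ∈ K i, x ≤ B i := fun i x hx => (hB i) ▸ le_csSup (hbddA i) hx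
  have hφmem : ∀ i k, ∀ x ∈ K i, r i k * x + a i k ∈ K i := by
    intro i k x hx
    have h1 : r i k * x + a i k ∈ (fun x => r i k * x + a i k) '' K i := ⟨x, hx, rfl⟩
    rw [hK i]
    exact mem_iUnion.2 ⟨k, h1⟩
  -- monotonicity of k ↦ φ_{k,i}(A i)
  have hmono : ∀ i, ∀ m n : ℕ, ∀ (hm : m < ℓ i) (hn : n < ℓ i), m ≤ n →
      r i ⟨m, hm⟩ * A i + a i ⟨m, hm⟩ ≤ r i ⟨n, hn⟩ * A i + a i ⟨n, hn⟩ := by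
    intro i m n
    induction n with
    | zero =>
      intro hm hn hmn
      have : m = 0 := by omega
      subst this; exact le_rfl
    | succ n ih =>
      intro hm hn hmn
      rcases Nat.lt_or_ge m (n + 1) with h | h
      · have hn' : n < ℓ i := by omega
        exact (ih hm hn' (by omega)).trans (horder i ⟨n, hn'⟩ hn)
      · have : m = n + 1 := by omega
        subst this; exact le_rfl
  -- φ_{0,i}(A i) = A i
  have hA0 : ∀ i, r i ⟨0, hℓpos i⟩ * A i + a i ⟨0, hℓpos i⟩ = A i := by
    intro i
    have h1 : A i ∈ ⋃ k : Fin (ℓ i), (fun x => r i k * x + a i k) '' K i := by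
      rw [← hK i]; exact hAmem i
    obtain ⟨k, x, hx, hxeq⟩ := mem_iUnion.1 h1
    have h2 : r i k * A i + a i k ≤ A i := by
      calc r i k * A i + a i k ≤ r i k * x + a i k := by
            have := hle i x hx
            nlinarith [(hr i k).1]
        _ = A i := hxeq
    have h3 : A i ≤ r i ⟨0, hℓpos i⟩ * A i + a i ⟨0, hℓpos i⟩ :=
      hle i _ (hφmem i _ _ (hAmem i))
    have h4 : r i ⟨0, hℓpos i⟩ * A i + a i ⟨0, hℓpos i⟩ ≤ r i k * A i + a i k := by
      have := hmono i 0 (k : ℕ) (hℓpos i) k.isLt (Nat.zero_le _)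
      simpa using this
    linarith
  -- some k attains B
  have hBtop : ∀ i, ∃ k, r i k * B i + a i k = B i := by
    intro i
    have h1 : B i ∈ ⋃ k : Fin (ℓ i), (fun x => r i k * x + a i k) '' K i := by
      rw [← hK i]; exact hBmem i
    obtain ⟨k, x, hx, hxeq⟩ := mem_iUnion.1 h1
    refine ⟨k, le_antisymm (hge i _ (hφmem i _ _ (hBmem i))) ?_⟩
    calc B i = r i k * x + a i k := hxeq.symm
      _ ≤ r i k * B i + a i k := by
          have := hge i x hx
          nlinarith [(hr i k).1]
  have hφAge : ∀ i k, A i ≤ r i k * A i + a i k :=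
    fun i k => hle i _ (hφmem i k _ (hAmem i))
  have hφBle : ∀ i k, r i k * B i + a i k ≤ B i :=
    fun i k => hge i _ (hφmem i k _ (hBmem i))
  -- the uniform contraction bound ρ
  haveI : ∀ i, Nonempty (Fin (ℓ i)) := fun i => ⟨⟨0, hℓpos i⟩⟩
  obtain ⟨ρ, hρle, hρlt1, hρpos⟩ :
      ∃ ρ : ℝ, (∀ i k, r i k ≤ ρ) ∧ ρ < 1 ∧ 0 < ρ := by
    refine ⟨Finset.univ.sup' Finset.univ_nonempty
      (fun i : Fin d => Finset.univ.sup' Finset.univ_nonempty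
        (fun k : Fin (ℓ i) => r i k)), ?_, ?_, ?_⟩
    · intro i k
      refine le_trans (Finset.le_sup' (fun k : Fin (ℓ i) => r i k) (Finset.mem_univ k)) ?_
      exact Finset.le_sup'
        (fun i : Fin d => Finset.univ.sup' Finset.univ_nonempty
          (fun k : Fin (ℓ i) => r i k)) (Finset.mem_univ i)
    · refine (Finset.sup'_lt_iff Finset.univ_nonempty).2 fun i _ => ?_
      exact (Finset.sup'_lt_iff Finset.univ_nonempty).2 fun k _ => (hr i k).2
    · refine lt_of_lt_of_le (hr i₁ k₁).1 ?_
      refine le_trans (Finset.le_sup' (fun k : Fin (ℓ i₁) => r i₁ k) (Finset.mem_univ k₁)) ?_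
      exact Finset.le_sup'
        (fun i : Fin d => Finset.univ.sup' Finset.univ_nonempty
          (fun k : Fin (ℓ i) => r i k)) (Finset.mem_univ i₁)
  -- the sumset
  have hScompact : IsCompact {y : ℝ | ∃ x : Fin d → ℝ, (∀ i, x i ∈ K i) ∧ (∑ i, x i) = y} := by
    have hSim : {y : ℝ | ∃ x : Fin d → ℝ, (∀ i, x i ∈ K i) ∧ (∑ i, x i) = y}
        = (fun x : Fin d → ℝ => ∑ i, x i) '' (Set.univ.pi K) := by
      ext z
      simp only [mem_setOf_eq, mem_image, mem_pi, mem_univ, forall_true_left]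
    rw [hSim]
    exact (isCompact_univ_pi hKc).image
      (continuous_finset_sum _ fun i _ => continuous_apply i)
  have hSclosed : IsClosed {y : ℝ | ∃ x : Fin d → ℝ, (∀ i, x i ∈ K i) ∧ (∑ i, x i) = y} :=
    hScompact.isClosed
  refine ⟨1, fun _ => ∑ i, A i, fun _ => ∑ i, B i,
    fun _ => Finset.sum_le_sum fun i _ => (hAB i).le, ?_⟩
  have hUnion : (⋃ _ : Fin 1, Set.Icc (∑ i, A i) (∑ i, B i))
      = Set.Icc (∑ i, A i) (∑ i, B i) := Set.iUnion_const _
  rw [hUnion]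
  apply Set.Subset.antisymm
  · rintro y ⟨x, hx, hxy⟩
    constructor
    · rw [← hxy]; exact Finset.sum_le_sum fun i _ => hle i _ (hx i)
    · rw [← hxy]; exact Finset.sum_le_sum fun i _ => hge i _ (hx i)
  -- the hard direction
  intro y hy
  -- Step lemma
  have step : ∀ s t : Fin d → ℝ, SSInv d K A B smin y s t →
      ∀ i₀ : Fin d, (∀ j, s j ≤ s i₀) →
      ∃ s' t' : Fin d → ℝ, SSInv d K A B smin y s' t' ∧
        (∀ j, j ≠ i₀ → s' j = s j) ∧ s' i₀ ≤ ρ * s i₀ := by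
    intro s t hInv i₀ hmax
    obtain ⟨hpos, himg, hpair, hlo, hhi⟩ := hInv
    set P := ∑ j ∈ Finset.univ.erase i₀, (s j * A j + t j) with hPdef
    set Q := ∑ j ∈ Finset.univ.erase i₀, (s j * B j + t j) with hQdef
    have hsumlo : ∑ i, (s i * A i + t i) = (s i₀ * A i₀ + t i₀) + P :=
      (Finset.add_sum_erase _ _ (Finset.mem_univ i₀)).symm
    have hsumhi : ∑ i, (s i * B i + t i) = (s i₀ * B i₀ + t i₀) + Q :=
      (Finset.add_sum_erase _ _ (Finset.mem_univ i₀)).symm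
    have hPQ : Q - P = ∑ j ∈ Finset.univ.erase i₀, s j * (B j - A j) := by
      rw [hPdef, hQdef, ← Finset.sum_sub_distrib]
      apply Finset.sum_congr rfl
      intro j _; ring
    have hPleQ : P ≤ Q := by
      have h0 : (0:ℝ) ≤ ∑ j ∈ Finset.univ.erase i₀, s j * (B j - A j) :=
        Finset.sum_nonneg fun j _ => mul_nonneg (hpos j).le (by linarith [hAB j])
      linarith [hPQ ▸ h0]
    -- cylinder endpoints for coordinate i₀
    set l : Fin (ℓ i₀) → ℝ := fun k => s i₀ * (r i₀ k * A i₀ + a i₀ k) + t i₀ with hldef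
    set u : Fin (ℓ i₀) → ℝ := fun k => s i₀ * (r i₀ k * B i₀ + a i₀ k) + t i₀ with hudef
    have hl0 : l ⟨0, hℓpos i₀⟩ = s i₀ * A i₀ + t i₀ := by
      rw [hldef]; simp only; rw [hA0 i₀]
    have hlmono : ∀ m n : Fin (ℓ i₀), (m : ℕ) ≤ (n : ℕ) → l m ≤ l n := by
      intro m n hmn
      have := hmono i₀ m n m.isLt n.isLt hmn
      have hs := (hpos i₀).le
      simp only [hldef]
      nlinarith
    have huB : ∀ k, u k ≤ s i₀ * B i₀ + t i₀ := by
      intro k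
      have := hφBle i₀ k
      have hs := (hpos i₀).le
      simp only [hudef]
      nlinarith
    have hlu : ∀ k, l k ≤ u k := by
      intro k
      have h1 := (hAB i₀).le
      have h2 := (hr i₀ k).1.le
      have hs := (hpos i₀).le
      have h3 : 0 ≤ s i₀ * r i₀ k * (B i₀ - A i₀) :=
        mul_nonneg (mul_nonneg hs h2) (by linarith)
      simp only [hldef, hudef]
      nlinarith [h3]
    obtain ⟨kstar, hkstar⟩ := hBtop i₀
    have hukstar : u kstar = s i₀ * B i₀ + t i₀ := by
      simp only [hudef]; rw [hkstar]
    have hgap : ∀ (k : Fin (ℓ i₀)) (hk : (k : ℕ) + 1 < ℓ i₀),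
        l ⟨(k : ℕ) + 1, hk⟩ ≤ u k + (Q - P) := by
      intro k hk
      have h1 := hcond i₀ k hk
      have hs := (hpos i₀).le
      have h2 : s i₀ * (smin * (∑ j ∈ Finset.univ.erase i₀, (B j - A j)))
          ≤ Q - P := by
        have h2a : s i₀ * (smin * (∑ j ∈ Finset.univ.erase i₀, (B j - A j)))
            = ∑ j ∈ Finset.univ.erase i₀, (smin * s i₀) * (B j - A j) := by
          rw [show s i₀ * (smin * (∑ j ∈ Finset.univ.erase i₀, (B j - A j)))
              = (smin * s i₀) * (∑ j ∈ Finset.univ.erase i₀, (B j - A j)) from by ring,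
            Finset.mul_sum]
        rw [h2a, hPQ]
        apply Finset.sum_le_sum
        intro j hj
        have h3 := hpair i₀ j
        have h4 : (0:ℝ) ≤ B j - A j := by linarith [hAB j]
        exact mul_le_mul_of_nonneg_right h3 h4
      have h0 := mul_nonneg hs h1
      simp only [hldef, hudef]
      nlinarith [h0, h2]
    -- choose the subinterval index k₀
    have hkey : ∃ k : Fin (ℓ i₀), l k + P ≤ y ∧ y ≤ u k + Q := by
      by_cases hcase : y ≤ (s i₀ * B i₀ + t i₀) + P
      · set T := Finset.univ.filter (fun k : Fin (ℓ i₀) => l k + P ≤ y) with hTdef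
        have hT0 : (⟨0, hℓpos i₀⟩ : Fin (ℓ i₀)) ∈ T := by
          rw [hTdef, Finset.mem_filter]
          refine ⟨Finset.mem_univ _, ?_⟩
          rw [hl0]
          linarith [hsumlo ▸ hlo]
        have hTne : T.Nonempty := ⟨_, hT0⟩
        set k₀ := T.max' hTne with hk₀def
        have hk₀mem : k₀ ∈ T := T.max'_mem hTne
        have hk₀y : l k₀ + P ≤ y := (Finset.mem_filter.1 hk₀mem).2
        by_cases hy2 : y ≤ u k₀ + Q
        · exact ⟨k₀, hk₀y, hy2⟩
        · push_neg at hy2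
          by_cases hk2 : (k₀ : ℕ) + 1 < ℓ i₀
          · exfalso
            have hnotT : (⟨(k₀ : ℕ) + 1, hk2⟩ : Fin (ℓ i₀)) ∉ T := by
              intro hmem
              have h5 := T.le_max' _ hmem
              rw [← hk₀def] at h5
              have h6 : ((⟨(k₀ : ℕ) + 1, hk2⟩ : Fin (ℓ i₀)) : ℕ) ≤ (k₀ : ℕ) := h5
              have h7 : ((⟨(k₀ : ℕ) + 1, hk2⟩ : Fin (ℓ i₀)) : ℕ) = (k₀ : ℕ) + 1 := rfl
              omega
            rw [hTdef, Finset.mem_filter] at hnotT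
            push_neg at hnotT
            have h5 := hnotT (Finset.mem_univ _)
            have h6 := hgap k₀ hk2
            linarith
          · -- k₀ is the last index
            refine ⟨kstar, ?_, ?_⟩
            · have h7 : (kstar : ℕ) ≤ (k₀ : ℕ) := by
                have := kstar.isLt; omega
              linarith [hlmono kstar k₀ h7]
            · rw [hukstar]; linarith
      · push_neg at hcase
        refine ⟨kstar, ?_, ?_⟩
        · have := hlu kstar
          rw [hukstar] at this
          linarith
        · rw [hukstar]
          linarith [hsumhi ▸ hhi]
    obtain ⟨k₀, hky1, hky2⟩ := hkey
    refine ⟨Function.update s i₀ (s i₀ * r i₀ k₀),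
            Function.update t i₀ (s i₀ * a i₀ k₀ + t i₀), ?_, ?_, ?_⟩
    · constructor
      · intro i
        rcases eq_or_ne i i₀ with h | h
        · rw [h, Function.update_self]
          exact mul_pos (hpos i₀) (hr i₀ k₀).1
        · rw [Function.update_of_ne h]; exact hpos i
      refine ⟨?_, ?_, ?_, ?_⟩
      · intro i z hz
        rcases eq_or_ne i i₀ with h | h
        · rw [h] at hz ⊢
          rw [Function.update_self, Function.update_self]
          have h1 : s i₀ * r i₀ k₀ * z + (s i₀ * a i₀ k₀ + t i₀)
              = s i₀ * (r i₀ k₀ * z + a i₀ k₀) + t i₀ := by ring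
          rw [h1]
          exact himg i₀ _ (hφmem i₀ k₀ z hz)
        · rw [Function.update_of_ne h, Function.update_of_ne h]
          exact himg i z hz
      · intro i j
        rcases eq_or_ne i i₀ with hi | hi <;> rcases eq_or_ne j i₀ with hj | hj
        · rw [hi, hj, Function.update_self]
          have h1 : 0 < s i₀ * r i₀ k₀ := mul_pos (hpos i₀) (hr i₀ k₀).1
          nlinarith [hsminle1]
        · rw [hi, Function.update_self, Function.update_of_ne hj]
          have h1 := hpair i₀ j
          have h2 : smin * (s i₀ * r i₀ k₀) ≤ smin * s i₀ := by
            have h3 := (hr i₀ k₀).2.le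
            nlinarith [mul_nonneg (mul_nonneg hsminpos.le (hpos i₀).le) (sub_nonneg.2 h3)]
          linarith
        · rw [hj, Function.update_of_ne hi, Function.update_self]
          have h1 : smin * s i ≤ smin * s i₀ :=
            mul_le_mul_of_nonneg_left (hmax i) hsminpos.le
          have h2 : smin * s i₀ ≤ r i₀ k₀ * s i₀ :=
            mul_le_mul_of_nonneg_right (hsmin_le i₀ k₀) (hpos i₀).le
          calc smin * s i ≤ r i₀ k₀ * s i₀ := by linarith
            _ = s i₀ * r i₀ k₀ := by ring
        · rw [Function.update_of_ne hi, Function.update_of_ne hj]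
          exact hpair i j
      · -- lower sum bound
        have hsum : ∑ i, (Function.update s i₀ (s i₀ * r i₀ k₀) i * A i +
            Function.update t i₀ (s i₀ * a i₀ k₀ + t i₀) i) = l k₀ + P := by
          rw [← Finset.add_sum_erase _ _ (Finset.mem_univ i₀)]
          rw [Function.update_self, Function.update_self]
          congr 1
          · simp only [hldef]; ring
          · apply Finset.sum_congr rfl
            intro j hj
            have hjne : j ≠ i₀ := (Finset.mem_erase.1 hj).1
            rw [Function.update_of_ne hjne, Function.update_of_ne hjne]
        rw [hsum]; exact hky1
      · have hsum : ∑ i, (Function.update s i₀ (s i₀ * r i₀ k₀) i * B i +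
            Function.update t i₀ (s i₀ * a i₀ k₀ + t i₀) i) = u k₀ + Q := by
          rw [← Finset.add_sum_erase _ _ (Finset.mem_univ i₀)]
          rw [Function.update_self, Function.update_self]
          congr 1
          · simp only [hudef]; ring
          · apply Finset.sum_congr rfl
            intro j hj
            have hjne : j ≠ i₀ := (Finset.mem_erase.1 hj).1
            rw [Function.update_of_ne hjne, Function.update_of_ne hjne]
        rw [hsum]; exact hky2
    · intro j hj; rw [Function.update_of_ne hj]
    · rw [Function.update_self]
      calc s i₀ * r i₀ k₀ ≤ s i₀ * ρ := by
            exact mul_le_mul_of_nonneg_left (hρle i₀ k₀) (hpos i₀).le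
        _ = ρ * s i₀ := by ring
  -- Lemma A: one full round of refinement
  have lemA : ∀ n : ℕ, ∀ m : ℝ, ∀ s t : Fin d → ℝ, SSInv d K A B smin y s t →
      (∀ i, s i ≤ m) →
      (Finset.univ.filter (fun i => ρ * m < s i)).card ≤ n →
      ∃ s' t' : Fin d → ℝ, SSInv d K A B smin y s' t' ∧ ∀ i, s' i ≤ ρ * m := by
    intro n
    induction n with
    | zero =>
      intro m s t hInv hm hcard
      refine ⟨s, t, hInv, fun i => ?_⟩
      by_contra h
      push_neg at h
      have : i ∈ Finset.univ.filter (fun i => ρ * m < s i) :=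
        Finset.mem_filter.2 ⟨Finset.mem_univ _, h⟩
      have := Finset.card_pos.2 ⟨i, this⟩
      omega
    | succ n ih =>
      intro m s t hInv hm hcard
      by_cases hne : ∃ i, ρ * m < s i
      · obtain ⟨iw, hiw⟩ := hne
        obtain ⟨i₀, -, hi₀max⟩ := Finset.exists_max_image Finset.univ s
          Finset.univ_nonempty
        have hi₀max' : ∀ j, s j ≤ s i₀ := fun j => hi₀max j (Finset.mem_univ j)
        obtain ⟨s', t', hInv', hsame, hdec⟩ := step s t hInv i₀ hi₀max'
        have hmpos : 0 < m := by
          have h1 : ρ * m < m := lt_of_lt_of_le hiw (hm iw)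
          by_contra h
          push_neg at h
          nlinarith [hρlt1, hρpos]
        have hs'm : ∀ i, s' i ≤ m := by
          intro i
          by_cases h : i = i₀
          · subst h
            calc s' i ≤ ρ * s i := hdec
              _ ≤ ρ * m := mul_le_mul_of_nonneg_left (hm i) hρpos.le
              _ ≤ 1 * m := mul_le_mul_of_nonneg_right hρlt1.le hmpos.le
              _ = m := one_mul m
          · rw [hsame i h]; exact hm i
        have hsub : Finset.univ.filter (fun i => ρ * m < s' i) ⊆
            (Finset.univ.filter (fun i => ρ * m < s i)).erase i₀ := by
          intro i hi
          rw [Finset.mem_filter] at hi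
          have hne' : i ≠ i₀ := by
            intro h; subst h
            have : s' i ≤ ρ * m :=
              hdec.trans (mul_le_mul_of_nonneg_left (hm i) hρpos.le)
            linarith [hi.2]
          rw [Finset.mem_erase]
          refine ⟨hne', Finset.mem_filter.2 ⟨Finset.mem_univ _, ?_⟩⟩
          rw [← hsame i hne']; exact hi.2
        have hi₀mem : i₀ ∈ Finset.univ.filter (fun i => ρ * m < s i) :=
          Finset.mem_filter.2 ⟨Finset.mem_univ _, lt_of_lt_of_le hiw (hi₀max' iw)⟩
        have hcard' : (Finset.univ.filter (fun i => ρ * m < s' i)).card ≤ n := by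
          have h1 := Finset.card_le_card hsub
          have h2 := Finset.card_erase_of_mem hi₀mem
          have h3 := Finset.card_pos.2 ⟨i₀, hi₀mem⟩
          omega
        exact ih m s' t' hInv' hs'm hcard'
      · push_neg at hne
        exact ⟨s, t, hInv, hne⟩
  -- Lemma B: iterate
  have lemB : ∀ n : ℕ, ∃ s t : Fin d → ℝ, SSInv d K A B smin y s t ∧
      ∀ i, s i ≤ ρ ^ n := by
    intro n
    induction n with
    | zero =>
      refine ⟨fun _ => 1, fun _ => 0, ⟨fun _ => one_pos, ?_, ?_, ?_, ?_⟩, fun i => by simp⟩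
      · intro i z hz; simpa using hz
      · intro i j; simpa using hsminle1
      · simpa using hy.1
      · simpa using hy.2
    | succ n ih =>
      obtain ⟨s, t, hInv, hb⟩ := ih
      obtain ⟨s', t', hInv', hb'⟩ := lemA d (ρ ^ n) s t hInv hb
        (le_trans (Finset.card_filter_le _ _) (by simp))
      refine ⟨s', t', hInv', fun i => ?_⟩
      calc s' i ≤ ρ * ρ ^ n := hb' i
        _ = ρ ^ (n + 1) := by ring
  -- conclude by closedness
  have hymem : y ∈ closure {y : ℝ | ∃ x : Fin d → ℝ, (∀ i, x i ∈ K i) ∧ (∑ i, x i) = y} := by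
    rw [Metric.mem_closure_iff]
    intro ε hε
    set C : ℝ := ∑ i, (B i - A i) with hCdef
    have hCpos : 0 < C := Finset.sum_pos (fun i _ => by linarith [hAB i]) Finset.univ_nonempty
    obtain ⟨n, hn⟩ := exists_pow_lt_of_lt_one (div_pos hε hCpos) hρlt1
    obtain ⟨s, t, ⟨hpos, himg, hpair, hlo, hhi⟩, hb⟩ := lemB n
    set p : ℝ := ∑ i, (s i * A i + t i) with hpdef
    refine ⟨p, ⟨fun i => s i * A i + t i, fun i => himg i _ (hAmem i), rfl⟩, ?_⟩
    have h1 : ∑ i, (s i * B i + t i) - p = ∑ i, s i * (B i - A i) := by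
      rw [hpdef, ← Finset.sum_sub_distrib]
      apply Finset.sum_congr rfl
      intro i _; ring
    have h2 : ∑ i, s i * (B i - A i) ≤ ρ ^ n * C := by
      rw [hCdef, Finset.mul_sum]
      apply Finset.sum_le_sum
      intro i _
      exact mul_le_mul_of_nonneg_right (hb i) (by linarith [hAB i])
    have h3 : ρ ^ n * C < ε := by
      have := (lt_div_iff₀ hCpos).1 hn
      linarith
    have h4 : 0 ≤ y - p := by linarith
    rw [Real.dist_eq, abs_of_nonneg h4]
    linarith
  exact hSclosed.closure_subset hymem
end

section
/- Let K₁ and K₂ be self-similar sets as in the context, and let f : ℝ × ℝ → ℝ be C¹. If for every (x,y) ∈ [A₁,B₁] × [A₂,B₂] one has ∂_x f(x,y) > 0 and ∂_y f(x,y) > 0, and for every 1 ≤ i ≤ p−1 and 1 ≤ j ≤ q−1, s_min·(B₂ − A₂)·∂_y f(x,y) + (φ_i(B₁) − φ_{i+1}(A₁))·∂_x f(x,y) ≥ 0 and s_min·(B₁ − A₁)·∂_x f(x,y) + (ψ_j(B₂) − ψ_{j+1}(A₂))·∂_y f(x,y) ≥ 0, then f(K₁, K₂) = {f(x,y) : x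 ∈ K₁, y ∈ K₂} is a closed interval, i.e., there exist reals a ≤ b with f(K₁,K₂) = [a,b]. -/
open Set

lemma mvt_rect (f : ℝ×ℝ→ℝ) (hf : ContDiff ℝ 1 f) {A₁ B₁ A₂ B₂ : ℝ} {z₁ z₂ : ℝ×ℝ}
    (h₁₁ : z₁.1 ∈ Icc A₁ B₁) (h₁₂ : z₁.2 ∈ Icc A₂ B₂)
    (h₂₁ : z₂.1 ∈ Icc A₁ B₁) (h₂₂ : z₂.2 ∈ Icc A₂ B₂) :
    ∃ ξ : ℝ×ℝ, ξ.1 ∈ Icc A₁ B₁ ∧ ξ.2 ∈ Icc A₂ B₂ ∧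
      f z₂ - f z₁ = (z₂.1 - z₁.1) * fderiv ℝ f ξ (1,0) + (z₂.2 - z₁.2) * fderiv ℝ f ξ (0,1) := by
  have hdf : Differentiable ℝ f := hf.differentiable one_ne_zero
  set g : ℝ → ℝ := fun s => f (z₁ + s • (z₂ - z₁)) with hg
  have hpath : ∀ s : ℝ, HasDerivAt (fun s : ℝ => z₁ + s • (z₂ - z₁)) (z₂ - z₁) s := by
    intro s
    simpa using ((hasDerivAt_id s).smul_const (z₂ - z₁)).const_add z₁
  have hgd : ∀ s : ℝ, HasDerivAt g (fderiv ℝ f (z₁ + s • (z₂ - z₁)) (z₂ - z₁)) s := by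
    intro s
    exact (hdf _).hasFDerivAt.comp_hasDerivAt s (hpath s)
  obtain ⟨ξ, hξ, hslope⟩ := exists_hasDerivAt_eq_slope g _ (by norm_num : (0:ℝ) < 1)
    (fun s _ => (hgd s).continuousAt.continuousWithinAt) (fun s _ => hgd s)
  obtain ⟨hξ0, hξ1⟩ := hξ
  obtain ⟨ha1, hb1⟩ := h₁₁; obtain ⟨ha2, hb2⟩ := h₁₂
  obtain ⟨hc1, hd1⟩ := h₂₁; obtain ⟨hc2, hd2⟩ := h₂₂
  refine ⟨z₁ + ξ • (z₂ - z₁), ?_, ?_, ?_⟩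
  · simp only [Prod.fst_add, Prod.smul_fst, Prod.fst_sub, smul_eq_mul]
    constructor <;> nlinarith
  · simp only [Prod.snd_add, Prod.smul_snd, Prod.snd_sub, smul_eq_mul]
    constructor <;> nlinarith
  · have h1 : g 1 = f z₂ := by simp [hg]
    have h0 : g 0 = f z₁ := by simp [hg]
    have key : fderiv ℝ f (z₁ + ξ • (z₂ - z₁)) (z₂ - z₁) = f z₂ - f z₁ := by
      rw [hslope, h1, h0]; ring
    have hdecomp : (z₂ - z₁ : ℝ×ℝ) = (z₂.1 - z₁.1) • ((1:ℝ),(0:ℝ)) + (z₂.2 - z₁.2) • ((0:ℝ),(1:ℝ)) := by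
      ext <;> simp
    rw [← key, hdecomp, map_add, map_smul, map_smul, smul_eq_mul, smul_eq_mul]

lemma mvt_rect' (f : ℝ×ℝ→ℝ) (hf : ContDiff ℝ 1 f) {A₁ B₁ A₂ B₂ : ℝ} (x₁ y₁ x₂ y₂ : ℝ)
    (h₁₁ : x₁ ∈ Icc A₁ B₁) (h₁₂ : y₁ ∈ Icc A₂ B₂)
    (h₂₁ : x₂ ∈ Icc A₁ B₁) (h₂₂ : y₂ ∈ Icc A₂ B₂) :
    ∃ ξ : ℝ×ℝ, ξ.1 ∈ Icc A₁ B₁ ∧ ξ.2 ∈ Icc A₂ B₂ ∧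
      f (x₂, y₂) - f (x₁, y₁)
        = (x₂ - x₁) * fderiv ℝ f ξ (1,0) + (y₂ - y₁) * fderiv ℝ f ξ (0,1) :=
  mvt_rect f hf (z₁ := (x₁, y₁)) (z₂ := (x₂, y₂)) h₁₁ h₁₂ h₂₁ h₂₂

set_option maxHeartbeats 1000000 in
/-- Corollary: `f(K₁,K₂)` is a closed interval under the pointwise partial-derivative
conditions on the whole rectangle. -/
theorem image_of_two_self_similar_sets_is_interval
    (p q : ℕ) (hp : 2 ≤ p) (hq : 2 ≤ q)
    (r a : Fin p → ℝ) (ρ b : Fin q → ℝ)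
    (hr : ∀ i, r i ∈ Set.Ioo (0 : ℝ) 1) (hρ : ∀ j, ρ j ∈ Set.Ioo (0 : ℝ) 1)
    (K₁ K₂ : Set ℝ)
    (hK₁ne : K₁.Nonempty) (hK₁c : IsCompact K₁)
    (hK₁ : K₁ = ⋃ i : Fin p, (fun x => r i * x + a i) '' K₁)
    (hK₂ne : K₂.Nonempty) (hK₂c : IsCompact K₂)
    (hK₂ : K₂ = ⋃ j : Fin q, (fun x => ρ j * x + b j) '' K₂)
    (A₁ B₁ A₂ B₂ : ℝ)
    (hA₁ : A₁ = sInf K₁) (hB₁ : B₁ = sSup K₁)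
    (hA₂ : A₂ = sInf K₂) (hB₂ : B₂ = sSup K₂)
    (hAB₁ : A₁ < B₁) (hAB₂ : A₂ < B₂)
    (hord₁ : ∀ i : Fin p, ∀ hi : (i : ℕ) + 1 < p,
      r i * A₁ + a i ≤ r ⟨(i : ℕ) + 1, hi⟩ * A₁ + a ⟨(i : ℕ) + 1, hi⟩)
    (hord₂ : ∀ j : Fin q, ∀ hj : (j : ℕ) + 1 < q,
      ρ j * A₂ + b j ≤ ρ ⟨(j : ℕ) + 1, hj⟩ * A₂ + b ⟨(j : ℕ) + 1, hj⟩)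
    (smin : ℝ)
    (hsmin_le₁ : ∀ i, smin ≤ r i) (hsmin_le₂ : ∀ j, smin ≤ ρ j)
    (hsmin_mem : (∃ i, smin = r i) ∨ (∃ j, smin = ρ j))
    (f : ℝ × ℝ → ℝ) (hf : ContDiff ℝ 1 f)
    (hpos : ∀ z : ℝ × ℝ, z.1 ∈ Set.Icc A₁ B₁ → z.2 ∈ Set.Icc A₂ B₂ →
      0 < fderiv ℝ f z (1, 0) ∧ 0 < fderiv ℝ f z (0, 1))
    (hcond₁ : ∀ z : ℝ × ℝ, z.1 ∈ Set.Icc A₁ B₁ → z.2 ∈ Set.Icc A₂ B₂ →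
      ∀ i : Fin p, ∀ hi : (i : ℕ) + 1 < p,
        0 ≤ smin * (B₂ - A₂) * fderiv ℝ f z (0, 1)
            + ((r i * B₁ + a i) - (r ⟨(i : ℕ) + 1, hi⟩ * A₁ + a ⟨(i : ℕ) + 1, hi⟩))
              * fderiv ℝ f z (1, 0))
    (hcond₂ : ∀ z : ℝ × ℝ, z.1 ∈ Set.Icc A₁ B₁ → z.2 ∈ Set.Icc A₂ B₂ →
      ∀ j : Fin q, ∀ hj : (j : ℕ) + 1 < q,
        0 ≤ smin * (B₁ - A₁) * fderiv ℝ f z (1, 0)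
            + ((ρ j * B₂ + b j) - (ρ ⟨(j : ℕ) + 1, hj⟩ * A₂ + b ⟨(j : ℕ) + 1, hj⟩))
              * fderiv ℝ f z (0, 1)) :
    ∃ c e : ℝ, c ≤ e ∧
      {w : ℝ | ∃ x ∈ K₁, ∃ y ∈ K₂, f (x, y) = w} = Set.Icc c e := by
  classical
  have hp0 : 0 < p := by omega
  have hq0 : 0 < q := by omega
  have hsmin_pos : 0 < smin := by
    rcases hsmin_mem with ⟨i, h⟩ | ⟨j, h⟩
    · exact h ▸ (hr i).1
    · exact h ▸ (hρ j).1
  have hsmin_lt1 : smin < 1 := lt_of_le_of_lt (hsmin_le₁ ⟨0, hp0⟩) (hr ⟨0, hp0⟩).2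
  have hA₁K : A₁ ∈ K₁ := hA₁ ▸ hK₁c.sInf_mem hK₁ne
  have hB₁K : B₁ ∈ K₁ := hB₁ ▸ hK₁c.sSup_mem hK₁ne
  have hA₂K : A₂ ∈ K₂ := hA₂ ▸ hK₂c.sInf_mem hK₂ne
  have hB₂K : B₂ ∈ K₂ := hB₂ ▸ hK₂c.sSup_mem hK₂ne
  have hK₁sub : K₁ ⊆ Icc A₁ B₁ := fun x hx =>
    ⟨hA₁ ▸ csInf_le hK₁c.bddBelow hx, hB₁ ▸ le_csSup hK₁c.bddAbove hx⟩
  have hK₂sub : K₂ ⊆ Icc A₂ B₂ := fun y hy =>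
    ⟨hA₂ ▸ csInf_le hK₂c.bddBelow hy, hB₂ ▸ le_csSup hK₂c.bddAbove hy⟩
  have hmap₁ : ∀ i : Fin p, ∀ x ∈ K₁, r i * x + a i ∈ K₁ := by
    intro i x hx
    rw [hK₁]
    exact mem_iUnion.2 ⟨i, ⟨x, hx, rfl⟩⟩
  have hmap₂ : ∀ j : Fin q, ∀ y ∈ K₂, ρ j * y + b j ∈ K₂ := by
    intro j y hy
    rw [hK₂]
    exact mem_iUnion.2 ⟨j, ⟨y, hy, rfl⟩⟩
  -- chain: first map attains the infimum
  have hchain₁ : ∀ k : ℕ, ∀ hk : k < p,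
      r ⟨0, hp0⟩ * A₁ + a ⟨0, hp0⟩ ≤ r ⟨k, hk⟩ * A₁ + a ⟨k, hk⟩ := by
    intro k
    induction k with
    | zero => intro hk; exact le_rfl
    | succ n ih => intro hk; exact le_trans (ih (by omega)) (hord₁ ⟨n, by omega⟩ hk)
  have hchain₂ : ∀ k : ℕ, ∀ hk : k < q,
      ρ ⟨0, hq0⟩ * A₂ + b ⟨0, hq0⟩ ≤ ρ ⟨k, hk⟩ * A₂ + b ⟨k, hk⟩ := by
    intro k
    induction k with
    | zero => intro hk; exact le_rfl
    | succ n ih => intro hk; exact le_trans (ih (by omega)) (hord₂ ⟨n, by omega⟩ hk)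
  have hfix₁ : r ⟨0, hp0⟩ * A₁ + a ⟨0, hp0⟩ = A₁ := by
    have h1 : A₁ ≤ r ⟨0, hp0⟩ * A₁ + a ⟨0, hp0⟩ := (hK₁sub (hmap₁ _ _ hA₁K)).1
    have h2 : r ⟨0, hp0⟩ * A₁ + a ⟨0, hp0⟩ ≤ A₁ := by
      have : A₁ ∈ ⋃ i : Fin p, (fun x => r i * x + a i) '' K₁ := hK₁ ▸ hA₁K
      obtain ⟨i, y, hy, hA⟩ := by simpa [mem_iUnion] using this
      have hyA : A₁ ≤ y := (hK₁sub hy).1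
      have : r i * A₁ + a i ≤ A₁ := by nlinarith [(hr i).1]
      exact le_trans (hchain₁ i.1 i.2) (by simpa using this)
    linarith
  have hfix₂ : ρ ⟨0, hq0⟩ * A₂ + b ⟨0, hq0⟩ = A₂ := by
    have h1 : A₂ ≤ ρ ⟨0, hq0⟩ * A₂ + b ⟨0, hq0⟩ := (hK₂sub (hmap₂ _ _ hA₂K)).1
    have h2 : ρ ⟨0, hq0⟩ * A₂ + b ⟨0, hq0⟩ ≤ A₂ := by
      have : A₂ ∈ ⋃ j : Fin q, (fun y => ρ j * y + b j) '' K₂ := hK₂ ▸ hA₂K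
      obtain ⟨j, y, hy, hA⟩ := by simpa [mem_iUnion] using this
      have hyA : A₂ ≤ y := (hK₂sub hy).1
      have : ρ j * A₂ + b j ≤ A₂ := by nlinarith [(hρ j).1]
      exact le_trans (hchain₂ j.1 j.2) (by simpa using this)
    linarith
  have hBfix₁ : ∃ i : Fin p, r i * B₁ + a i = B₁ := by
    have : B₁ ∈ ⋃ i : Fin p, (fun x => r i * x + a i) '' K₁ := hK₁ ▸ hB₁K
    obtain ⟨i, y, hy, hB⟩ := by simpa [mem_iUnion] using this
    refine ⟨i, le_antisymm (hK₁sub (hmap₁ _ _ hB₁K)).2 ?_⟩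
    have hyB : y ≤ B₁ := (hK₁sub hy).2
    nlinarith [(hr i).1]
  have hBfix₂ : ∃ j : Fin q, ρ j * B₂ + b j = B₂ := by
    have : B₂ ∈ ⋃ j : Fin q, (fun y => ρ j * y + b j) '' K₂ := hK₂ ▸ hB₂K
    obtain ⟨j, y, hy, hB⟩ := by simpa [mem_iUnion] using this
    refine ⟨j, le_antisymm (hK₂sub (hmap₂ _ _ hB₂K)).2 ?_⟩
    have hyB : y ≤ B₂ := (hK₂sub hy).2
    nlinarith [(hρ j).1]
  -- uniform contraction ratio bound θ
  have hne1 : (Finset.univ : Finset (Fin p)).Nonempty := ⟨⟨0, hp0⟩, Finset.mem_univ _⟩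
  have hne2 : (Finset.univ : Finset (Fin q)).Nonempty := ⟨⟨0, hq0⟩, Finset.mem_univ _⟩
  obtain ⟨θ, hθ1, hθr, hθρ, hθ0⟩ :
      ∃ θ : ℝ, θ < 1 ∧ (∀ i, r i ≤ θ) ∧ (∀ j, ρ j ≤ θ) ∧ 0 < θ := by
    refine ⟨max (Finset.univ.sup' hne1 r) (Finset.univ.sup' hne2 ρ), ?_, ?_, ?_, ?_⟩
    · exact max_lt ((Finset.sup'_lt_iff hne1).2 fun i _ => (hr i).2)
        ((Finset.sup'_lt_iff hne2).2 fun j _ => (hρ j).2)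
    · exact fun i => le_max_of_le_left (Finset.le_sup' r (Finset.mem_univ i))
    · exact fun j => le_max_of_le_right (Finset.le_sup' ρ (Finset.mem_univ j))
    · exact lt_of_lt_of_le (hr ⟨0, hp0⟩).1
        (le_max_of_le_left (Finset.le_sup' r (Finset.mem_univ ⟨0, hp0⟩)))
  -- bound on partial derivatives
  obtain ⟨M', hM'0, hM'⟩ :
      ∃ M' : ℝ, 0 < M' ∧ ∀ z : ℝ×ℝ, z.1 ∈ Icc A₁ B₁ → z.2 ∈ Icc A₂ B₂ →
        fderiv ℝ f z (1,0) ≤ M' ∧ fderiv ℝ f z (0,1) ≤ M' := by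
    have hRect : IsCompact (Icc A₁ B₁ ×ˢ Icc A₂ B₂) := isCompact_Icc.prod isCompact_Icc
    have hcontd : Continuous (fderiv ℝ f) := hf.continuous_fderiv one_ne_zero
    obtain ⟨C, hC⟩ := hRect.exists_bound_of_continuousOn hcontd.continuousOn
    refine ⟨max C 1, lt_of_lt_of_le one_pos (le_max_right _ _), ?_⟩
    intro z hz1 hz2
    have hzC : ‖fderiv ℝ f z‖ ≤ C := hC z (Set.mem_prod.2 ⟨hz1, hz2⟩)
    constructor
    · calc fderiv ℝ f z (1,0) ≤ ‖fderiv ℝ f z (1,0)‖ := le_abs_self _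
        _ ≤ ‖fderiv ℝ f z‖ * ‖((1:ℝ),(0:ℝ))‖ := (fderiv ℝ f z).le_opNorm _
        _ ≤ C * 1 := by
            refine mul_le_mul hzC ?_ (norm_nonneg _) (le_trans (norm_nonneg _) hzC)
            simp [Prod.norm_def]
        _ ≤ max C 1 := by simp
    · calc fderiv ℝ f z (0,1) ≤ ‖fderiv ℝ f z (0,1)‖ := le_abs_self _
        _ ≤ ‖fderiv ℝ f z‖ * ‖((0:ℝ),(1:ℝ))‖ := (fderiv ℝ f z).le_opNorm _
        _ ≤ C * 1 := by
            refine mul_le_mul hzC ?_ (norm_nonneg _) (le_trans (norm_nonneg _) hzC)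
            simp [Prod.norm_def]
        _ ≤ max C 1 := by simp
  -- monotonicity + Lipschitz-type bound
  have hmono : ∀ x₁ y₁ x₂ y₂ : ℝ, x₁ ∈ Icc A₁ B₁ → y₁ ∈ Icc A₂ B₂ →
      x₂ ∈ Icc A₁ B₁ → y₂ ∈ Icc A₂ B₂ → x₁ ≤ x₂ → y₁ ≤ y₂ →
      f (x₁, y₁) ≤ f (x₂, y₂) ∧
        f (x₂, y₂) - f (x₁, y₁) ≤ M' * ((x₂ - x₁) + (y₂ - y₁)) := by
    intro x₁ y₁ x₂ y₂ h11 h12 h21 h22 hle1 hle2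
    obtain ⟨ξ, hξ1, hξ2, heq⟩ := mvt_rect' f hf x₁ y₁ x₂ y₂ h11 h12 h21 h22
    obtain ⟨hx, hy⟩ := hpos ξ hξ1 hξ2
    obtain ⟨hMx, hMy⟩ := hM' ξ hξ1 hξ2
    constructor
    · nlinarith
    · nlinarith
  -- one subdivision step in the x-direction
  have step_x : ∀ lam c mu d : ℝ, 0 < lam → 0 < mu →
      (∀ x ∈ K₁, lam * x + c ∈ K₁) → (∀ y ∈ K₂, mu * y + d ∈ K₂) →
      smin * mu ≤ lam → smin * lam ≤ mu → mu ≤ lam →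
      ∀ t : ℝ, f (lam * A₁ + c, mu * A₂ + d) ≤ t → t ≤ f (lam * B₁ + c, mu * B₂ + d) →
      ∃ lam' c' : ℝ, 0 < lam' ∧ (∀ x ∈ K₁, lam' * x + c' ∈ K₁) ∧
        smin * mu ≤ lam' ∧ smin * lam' ≤ mu ∧ lam' * mu ≤ θ * (lam * mu) ∧
        f (lam' * A₁ + c', mu * A₂ + d) ≤ t ∧ t ≤ f (lam' * B₁ + c', mu * B₂ + d) := by
    intro lam c mu d hlam hmu hm1 hm2 hi1 hi2 hml t ht1 ht2
    obtain ⟨istar, histar⟩ := hBfix₁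
    have hex : ∃ k : ℕ, ∃ hk : k < p,
        t ≤ f (lam * (r ⟨k, hk⟩ * B₁ + a ⟨k, hk⟩) + c, mu * B₂ + d) := by
      refine ⟨istar.1, istar.2, ?_⟩
      have he : (⟨istar.1, istar.2⟩ : Fin p) = istar := rfl
      rw [he, histar]
      exact ht2
    obtain ⟨k, ⟨hk, htk⟩, hmin⟩ :
        ∃ k : ℕ, (∃ hk : k < p,
            t ≤ f (lam * (r ⟨k, hk⟩ * B₁ + a ⟨k, hk⟩) + c, mu * B₂ + d)) ∧
          ∀ m, m < k → ¬ (∃ hm : m < p,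
            t ≤ f (lam * (r ⟨m, hm⟩ * B₁ + a ⟨m, hm⟩) + c, mu * B₂ + d)) :=
      ⟨Nat.find hex, Nat.find_spec hex, fun m hm => Nat.find_min hex hm⟩
    have hkx : ∀ i : Fin p, lam * (r i * A₁ + a i) + c ∈ K₁ :=
      fun i => hm1 _ (hmap₁ i A₁ hA₁K)
    have hkx' : ∀ i : Fin p, lam * (r i * B₁ + a i) + c ∈ K₁ :=
      fun i => hm1 _ (hmap₁ i B₁ hB₁K)
    refine ⟨lam * r ⟨k, hk⟩, lam * a ⟨k, hk⟩ + c, mul_pos hlam (hr _).1, ?_, ?_, ?_, ?_, ?_, ?_⟩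
    · intro x hx
      have h2 := hm1 _ (hmap₁ ⟨k, hk⟩ x hx)
      have he : lam * r ⟨k, hk⟩ * x + (lam * a ⟨k, hk⟩ + c)
          = lam * (r ⟨k, hk⟩ * x + a ⟨k, hk⟩) + c := by ring
      rw [he]; exact h2
    · nlinarith [hsmin_le₁ ⟨k, hk⟩]
    · nlinarith [(hr ⟨k, hk⟩).2, (hr ⟨k, hk⟩).1, mul_pos hsmin_pos hlam]
    · nlinarith [hθr ⟨k, hk⟩, mul_pos hlam hmu]
    · -- lower bound for the chosen cell
      have harg : lam * r ⟨k, hk⟩ * A₁ + (lam * a ⟨k, hk⟩ + c)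
          = lam * (r ⟨k, hk⟩ * A₁ + a ⟨k, hk⟩) + c := by ring
      rw [harg]
      rcases Nat.eq_zero_or_pos k with hk0 | hkpos
      · have e : (⟨k, hk⟩ : Fin p) = ⟨0, hp0⟩ := by apply Fin.ext; exact hk0
        rw [e, hfix₁]; exact ht1
      · have hk1 : k - 1 < p := by omega
        have hmin' := hmin (k - 1) (by omega)
        push_neg at hmin'
        have hub := hmin' hk1
        obtain ⟨ξ, hξ1, hξ2, heq⟩ := mvt_rect' f hf
          (lam * (r ⟨k, hk⟩ * A₁ + a ⟨k, hk⟩) + c) (mu * A₂ + d)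
          (lam * (r ⟨k - 1, hk1⟩ * B₁ + a ⟨k - 1, hk1⟩) + c) (mu * B₂ + d)
          (hK₁sub (hkx ⟨k, hk⟩)) (hK₂sub (hm2 A₂ hA₂K))
          (hK₁sub (hkx' ⟨k - 1, hk1⟩)) (hK₂sub (hm2 B₂ hB₂K))
        have hsucc : ((⟨k - 1, hk1⟩ : Fin p) : ℕ) + 1 < p := by
          show k - 1 + 1 < p; omega
        have hc := hcond₁ ξ hξ1 hξ2 ⟨k - 1, hk1⟩ hsucc
        have he2 : (⟨((⟨k - 1, hk1⟩ : Fin p) : ℕ) + 1, hsucc⟩ : Fin p) = ⟨k, hk⟩ := by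
          apply Fin.ext; show k - 1 + 1 = k; omega
        rw [he2] at hc
        obtain ⟨hx, hy⟩ := hpos ξ hξ1 hξ2
        have h1 : 0 ≤ lam * (smin * (B₂ - A₂) * fderiv ℝ f ξ (0,1)
            + ((r ⟨k - 1, hk1⟩ * B₁ + a ⟨k - 1, hk1⟩) - (r ⟨k, hk⟩ * A₁ + a ⟨k, hk⟩))
              * fderiv ℝ f ξ (1,0)) := mul_nonneg hlam.le hc
        have h2 : smin * lam * ((B₂ - A₂) * fderiv ℝ f ξ (0,1))
            ≤ mu * ((B₂ - A₂) * fderiv ℝ f ξ (0,1)) :=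
          mul_le_mul_of_nonneg_right hi2 (mul_nonneg (by linarith) hy.le)
        linarith [h1, h2, heq, hub]
    · have harg : lam * r ⟨k, hk⟩ * B₁ + (lam * a ⟨k, hk⟩ + c)
          = lam * (r ⟨k, hk⟩ * B₁ + a ⟨k, hk⟩) + c := by ring
      rw [harg]; exact htk
  -- one subdivision step in the y-direction
  have step_y : ∀ lam c mu d : ℝ, 0 < lam → 0 < mu →
      (∀ x ∈ K₁, lam * x + c ∈ K₁) → (∀ y ∈ K₂, mu * y + d ∈ K₂) →
      smin * mu ≤ lam → smin * lam ≤ mu → lam ≤ mu →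
      ∀ t : ℝ, f (lam * A₁ + c, mu * A₂ + d) ≤ t → t ≤ f (lam * B₁ + c, mu * B₂ + d) →
      ∃ mu' d' : ℝ, 0 < mu' ∧ (∀ y ∈ K₂, mu' * y + d' ∈ K₂) ∧
        smin * mu' ≤ lam ∧ smin * lam ≤ mu' ∧ lam * mu' ≤ θ * (lam * mu) ∧
        f (lam * A₁ + c, mu' * A₂ + d') ≤ t ∧ t ≤ f (lam * B₁ + c, mu' * B₂ + d') := by
    intro lam c mu d hlam hmu hm1 hm2 hi1 hi2 hml t ht1 ht2
    obtain ⟨jstar, hjstar⟩ := hBfix₂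
    have hex : ∃ k : ℕ, ∃ hk : k < q,
        t ≤ f (lam * B₁ + c, mu * (ρ ⟨k, hk⟩ * B₂ + b ⟨k, hk⟩) + d) := by
      refine ⟨jstar.1, jstar.2, ?_⟩
      have he : (⟨jstar.1, jstar.2⟩ : Fin q) = jstar := rfl
      rw [he, hjstar]
      exact ht2
    obtain ⟨k, ⟨hk, htk⟩, hmin⟩ :
        ∃ k : ℕ, (∃ hk : k < q,
            t ≤ f (lam * B₁ + c, mu * (ρ ⟨k, hk⟩ * B₂ + b ⟨k, hk⟩) + d)) ∧
          ∀ m, m < k → ¬ (∃ hm : m < q,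
            t ≤ f (lam * B₁ + c, mu * (ρ ⟨m, hm⟩ * B₂ + b ⟨m, hm⟩) + d)) :=
      ⟨Nat.find hex, Nat.find_spec hex, fun m hm => Nat.find_min hex hm⟩
    have hky : ∀ j : Fin q, mu * (ρ j * A₂ + b j) + d ∈ K₂ :=
      fun j => hm2 _ (hmap₂ j A₂ hA₂K)
    have hky' : ∀ j : Fin q, mu * (ρ j * B₂ + b j) + d ∈ K₂ :=
      fun j => hm2 _ (hmap₂ j B₂ hB₂K)
    refine ⟨mu * ρ ⟨k, hk⟩, mu * b ⟨k, hk⟩ + d, mul_pos hmu (hρ _).1, ?_, ?_, ?_, ?_, ?_, ?_⟩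
    · intro y hy
      have h2 := hm2 _ (hmap₂ ⟨k, hk⟩ y hy)
      have he : mu * ρ ⟨k, hk⟩ * y + (mu * b ⟨k, hk⟩ + d)
          = mu * (ρ ⟨k, hk⟩ * y + b ⟨k, hk⟩) + d := by ring
      rw [he]; exact h2
    · nlinarith [(hρ ⟨k, hk⟩).2, (hρ ⟨k, hk⟩).1, mul_pos hsmin_pos hmu]
    · nlinarith [hsmin_le₂ ⟨k, hk⟩]
    · nlinarith [hθρ ⟨k, hk⟩, mul_pos hlam hmu]
    · have harg : mu * ρ ⟨k, hk⟩ * A₂ + (mu * b ⟨k, hk⟩ + d)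
          = mu * (ρ ⟨k, hk⟩ * A₂ + b ⟨k, hk⟩) + d := by ring
      rw [harg]
      rcases Nat.eq_zero_or_pos k with hk0 | hkpos
      · have e : (⟨k, hk⟩ : Fin q) = ⟨0, hq0⟩ := by apply Fin.ext; exact hk0
        rw [e, hfix₂]; exact ht1
      · have hk1 : k - 1 < q := by omega
        have hmin' := hmin (k - 1) (by omega)
        push_neg at hmin'
        have hub := hmin' hk1
        obtain ⟨ξ, hξ1, hξ2, heq⟩ := mvt_rect' f hf
          (lam * A₁ + c) (mu * (ρ ⟨k, hk⟩ * A₂ + b ⟨k, hk⟩) + d)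
          (lam * B₁ + c) (mu * (ρ ⟨k - 1, hk1⟩ * B₂ + b ⟨k - 1, hk1⟩) + d)
          (hK₁sub (hm1 A₁ hA₁K)) (hK₂sub (hky ⟨k, hk⟩))
          (hK₁sub (hm1 B₁ hB₁K)) (hK₂sub (hky' ⟨k - 1, hk1⟩))
        have hsucc : ((⟨k - 1, hk1⟩ : Fin q) : ℕ) + 1 < q := by
          show k - 1 + 1 < q; omega
        have hc := hcond₂ ξ hξ1 hξ2 ⟨k - 1, hk1⟩ hsucc
        have he2 : (⟨((⟨k - 1, hk1⟩ : Fin q) : ℕ) + 1, hsucc⟩ : Fin q) = ⟨k, hk⟩ := by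
          apply Fin.ext; show k - 1 + 1 = k; omega
        rw [he2] at hc
        obtain ⟨hx, hy⟩ := hpos ξ hξ1 hξ2
        have h1 : 0 ≤ mu * (smin * (B₁ - A₁) * fderiv ℝ f ξ (1,0)
            + ((ρ ⟨k - 1, hk1⟩ * B₂ + b ⟨k - 1, hk1⟩) - (ρ ⟨k, hk⟩ * A₂ + b ⟨k, hk⟩))
              * fderiv ℝ f ξ (0,1)) := mul_nonneg hmu.le hc
        have h2 : smin * mu * ((B₁ - A₁) * fderiv ℝ f ξ (1,0))
            ≤ lam * ((B₁ - A₁) * fderiv ℝ f ξ (1,0)) :=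
          mul_le_mul_of_nonneg_right hi1 (mul_nonneg (by linarith) hx.le)
        linarith [h1, h2, heq, hub]
    · have harg : mu * ρ ⟨k, hk⟩ * B₂ + (mu * b ⟨k, hk⟩ + d)
          = mu * (ρ ⟨k, hk⟩ * B₂ + b ⟨k, hk⟩) + d := by ring
      rw [harg]; exact htk
  -- iterated subdivision
  have key : ∀ n : ℕ, ∀ lam c mu d : ℝ, 0 < lam → 0 < mu →
      (∀ x ∈ K₁, lam * x + c ∈ K₁) → (∀ y ∈ K₂, mu * y + d ∈ K₂) →
      smin * mu ≤ lam → smin * lam ≤ mu →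
      ∀ t : ℝ, f (lam * A₁ + c, mu * A₂ + d) ≤ t → t ≤ f (lam * B₁ + c, mu * B₂ + d) →
      ∃ lam' c' mu' d' : ℝ, 0 < lam' ∧ 0 < mu' ∧
        (∀ x ∈ K₁, lam' * x + c' ∈ K₁) ∧ (∀ y ∈ K₂, mu' * y + d' ∈ K₂) ∧
        smin * mu' ≤ lam' ∧ smin * lam' ≤ mu' ∧ lam' * mu' ≤ θ ^ n * (lam * mu) ∧
        f (lam' * A₁ + c', mu' * A₂ + d') ≤ t ∧ t ≤ f (lam' * B₁ + c', mu' * B₂ + d') := by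
    intro n
    induction n with
    | zero =>
      intro lam c mu d hlam hmu hm1 hm2 hi1 hi2 t ht1 ht2
      exact ⟨lam, c, mu, d, hlam, hmu, hm1, hm2, hi1, hi2, by simp, ht1, ht2⟩
    | succ n ih =>
      intro lam c mu d hlam hmu hm1 hm2 hi1 hi2 t ht1 ht2
      rcases le_total mu lam with hml | hml
      · obtain ⟨lam', c', hlam', hm1', hi1', hi2', hprod, ht1', ht2'⟩ :=
          step_x lam c mu d hlam hmu hm1 hm2 hi1 hi2 hml t ht1 ht2
        obtain ⟨l2, c2, m2, d2, h1, h2, h3, h4, h5, h6, h7, h8, h9⟩ :=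
          ih lam' c' mu d hlam' hmu hm1' hm2 hi1' hi2' t ht1' ht2'
        refine ⟨l2, c2, m2, d2, h1, h2, h3, h4, h5, h6, ?_, h8, h9⟩
        calc l2 * m2 ≤ θ ^ n * (lam' * mu) := h7
          _ ≤ θ ^ n * (θ * (lam * mu)) := by
              exact mul_le_mul_of_nonneg_left hprod (pow_nonneg hθ0.le n)
          _ = θ ^ (n + 1) * (lam * mu) := by ring
      · obtain ⟨mu', d', hmu', hm2', hi1', hi2', hprod, ht1', ht2'⟩ :=
          step_y lam c mu d hlam hmu hm1 hm2 hi1 hi2 hml t ht1 ht2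
        obtain ⟨l2, c2, m2, d2, h1, h2, h3, h4, h5, h6, h7, h8, h9⟩ :=
          ih lam c mu' d' hlam hmu' hm1 hm2' hi1' hi2' t ht1' ht2'
        refine ⟨l2, c2, m2, d2, h1, h2, h3, h4, h5, h6, ?_, h8, h9⟩
        calc l2 * m2 ≤ θ ^ n * (lam * mu') := h7
          _ ≤ θ ^ n * (θ * (lam * mu)) := by
              exact mul_le_mul_of_nonneg_left hprod (pow_nonneg hθ0.le n)
          _ = θ ^ (n + 1) * (lam * mu) := by ring
  -- the image set
  set E : Set ℝ := {w : ℝ | ∃ x ∈ K₁, ∃ y ∈ K₂, f (x, y) = w} with hE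
  have hEim : E = f '' (K₁ ×ˢ K₂) := by
    ext w
    constructor
    · rintro ⟨x, hx, y, hy, hw⟩
      exact ⟨(x, y), ⟨hx, hy⟩, hw⟩
    · rintro ⟨⟨x, y⟩, ⟨hx, hy⟩, hw⟩
      exact ⟨x, hx, y, hy, hw⟩
  have hEcl : IsClosed E := by
    rw [hEim]
    exact ((hK₁c.prod hK₂c).image hf.continuous).isClosed
  have hmM : f (A₁, A₂) ≤ f (B₁, B₂) :=
    (hmono A₁ A₂ B₁ B₂ (hK₁sub hA₁K) (hK₂sub hA₂K) (hK₁sub hB₁K) (hK₂sub hB₂K)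
      hAB₁.le hAB₂.le).1
  refine ⟨f (A₁, A₂), f (B₁, B₂), hmM, ?_⟩
  apply subset_antisymm
  · rintro w ⟨x, hx, y, hy, hw⟩
    obtain ⟨hx1, hx2⟩ := hK₁sub hx
    obtain ⟨hy1, hy2⟩ := hK₂sub hy
    constructor
    · rw [← hw]
      exact (hmono A₁ A₂ x y (hK₁sub hA₁K) (hK₂sub hA₂K) (hK₁sub hx) (hK₂sub hy) hx1 hy1).1
    · rw [← hw]
      exact (hmono x y B₁ B₂ (hK₁sub hx) (hK₂sub hy) (hK₁sub hB₁K) (hK₂sub hB₂K) hx2 hy2).1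
  · intro t ht
    rw [← hEcl.closure_eq]
    rw [Metric.mem_closure_iff]
    intro ε hε
    have hD : 0 < M' * ((B₁ - A₁) + (B₂ - A₂)) := by
      apply mul_pos hM'0; linarith
    set δ : ℝ := ε / (M' * ((B₁ - A₁) + (B₂ - A₂))) with hδ
    have hδ0 : 0 < δ := div_pos hε hD
    obtain ⟨n, hn⟩ := exists_pow_lt_of_lt_one (mul_pos hsmin_pos (mul_pos hδ0 hδ0)) hθ1
    have hone₁ : ∀ x ∈ K₁, (1:ℝ) * x + 0 ∈ K₁ := by intro x hx; simpa using hx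
    have hone₂ : ∀ y ∈ K₂, (1:ℝ) * y + 0 ∈ K₂ := by intro y hy; simpa using hy
    obtain ⟨lam', c', mu', d', h1, h2, h3, h4, h5, h6, h7, h8, h9⟩ :=
      key n 1 0 1 0 one_pos one_pos hone₁ hone₂
        (by linarith [hsmin_lt1]) (by linarith [hsmin_lt1]) t
        (by norm_num; exact ht.1) (by norm_num; exact ht.2)
    have hprod : lam' * mu' < smin * (δ * δ) := by
      calc lam' * mu' ≤ θ ^ n * (1 * 1) := h7
        _ = θ ^ n := by ring
        _ < smin * (δ * δ) := hn
    have hsq₁ : lam' * lam' < δ * δ := by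
      have t1 : lam' * (smin * lam') ≤ lam' * mu' := mul_le_mul_of_nonneg_left h6 h1.le
      nlinarith [t1, hprod, hsmin_pos]
    have hsq₂ : mu' * mu' < δ * δ := by
      have t1 : mu' * (smin * mu') ≤ mu' * lam' := mul_le_mul_of_nonneg_left h5 h2.le
      nlinarith [t1, hprod, hsmin_pos]
    have hlamδ : lam' < δ := by nlinarith [hsq₁, hδ0, h1]
    have hmuδ : mu' < δ := by nlinarith [hsq₂, hδ0, h2]
    refine ⟨f (lam' * A₁ + c', mu' * A₂ + d'), ⟨lam' * A₁ + c', h3 A₁ hA₁K,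
      mu' * A₂ + d', h4 A₂ hA₂K, rfl⟩, ?_⟩
    have hcorner := hmono (lam' * A₁ + c') (mu' * A₂ + d') (lam' * B₁ + c') (mu' * B₂ + d')
      (hK₁sub (h3 A₁ hA₁K)) (hK₂sub (h4 A₂ hA₂K)) (hK₁sub (h3 B₁ hB₁K)) (hK₂sub (h4 B₂ hB₂K))
      (by nlinarith) (by nlinarith)
    have hosc : f (lam' * B₁ + c', mu' * B₂ + d') - f (lam' * A₁ + c', mu' * A₂ + d')
        ≤ M' * (lam' * (B₁ - A₁) + mu' * (B₂ - A₂)) := by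
      have := hcorner.2
      calc f (lam' * B₁ + c', mu' * B₂ + d') - f (lam' * A₁ + c', mu' * A₂ + d')
          ≤ M' * ((lam' * B₁ + c' - (lam' * A₁ + c')) + (mu' * B₂ + d' - (mu' * A₂ + d'))) := this
        _ = M' * (lam' * (B₁ - A₁) + mu' * (B₂ - A₂)) := by ring
    have hlt : M' * (lam' * (B₁ - A₁) + mu' * (B₂ - A₂)) < ε := by
      have hδε : δ * (M' * ((B₁ - A₁) + (B₂ - A₂))) = ε := by
        rw [hδ]; field_simp; exact div_self (ne_of_gt (by linarith))
      nlinarith [mul_lt_mul_of_pos_right hlamδ (show (0:ℝ) < B₁ - A₁ by linarith),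
        mul_lt_mul_of_pos_right hmuδ (show (0:ℝ) < B₂ - A₂ by linarith), hM'0, hδε]
    rw [Real.dist_eq]
    rw [abs_sub_lt_iff]
    constructor
    · linarith [h8, hosc]
    · linarith [h9, hosc]
end

section
/- Let K₁ and K₂ be self-similar sets as in the context, with A₁ ≥ 0 and A₂ ≥ 0. If there exists a point (x₀,y₀) ∈ K₁ × K₂ such that for every 1 ≤ i ≤ p−1 and every 1 ≤ j ≤ q−1, s_min·(B₂ − A₂)·x₀ + (φ_i(B₁) − φ_{i+1}(A₁))·y₀ > 0 and s_min·(B₁ − A₁)·y₀ + (ψ_j(B₂) − ψ_{j+1}(A₂))·x₀ > 0, then the product set K₁·K₂ = {x·y : x ∈ K₁, y ∈ K₂} has nonempty interior in ℝ. -/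
open Set

lemma chain_mono' {m : ℕ} (g : Fin m → ℝ)
    (h : ∀ k : Fin m, ∀ hk : (k : ℕ) + 1 < m, g k ≤ g ⟨(k : ℕ) + 1, hk⟩) :
    Monotone g := by
  have key : ∀ n : ℕ, ∀ i j : Fin m, (j : ℕ) = (i : ℕ) + n → g i ≤ g j := by
    intro n
    induction n with
    | zero => intro i j hij; have : i = j := Fin.ext (by omega); rw [this]
    | succ n ih =>
      intro i j hij
      have hjm : (j : ℕ) < m := j.isLt
      have hj' : (i : ℕ) + n < m := by omega
      have h1 : g i ≤ g ⟨(i : ℕ) + n, hj'⟩ := ih i _ rfl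
      have hlt : ((⟨(i : ℕ) + n, hj'⟩ : Fin m) : ℕ) + 1 < m := by simp only [Fin.val_mk]; omega
      have h2 := h ⟨(i : ℕ) + n, hj'⟩ hlt
      have hje : (⟨((⟨(i : ℕ) + n, hj'⟩ : Fin m) : ℕ) + 1, hlt⟩ : Fin m) = j :=
        Fin.ext (by simp only [Fin.val_mk]; omega)
      rw [hje] at h2
      exact h1.trans h2
  intro i j hij
  exact key ((j : ℕ) - (i : ℕ)) i j (by omega)

lemma split_step' {m : ℕ} (hm : 0 < m) (R T : Fin m → ℝ) (A B : ℝ)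
    (hR0 : ∀ k, 0 ≤ R k)
    (hA : ∀ k, A ≤ R k * A + T k)
    (hAB : A ≤ B)
    (hord : ∀ k : Fin m, ∀ hk : (k : ℕ) + 1 < m,
      R k * A + T k ≤ R ⟨(k : ℕ) + 1, hk⟩ * A + T ⟨(k : ℕ) + 1, hk⟩)
    (hbot : R ⟨0, hm⟩ * A + T ⟨0, hm⟩ = A)
    (htop : ∃ k, R k * B + T k = B)
    (c d X Y u v t : ℝ)
    (hc : 0 ≤ c) (hX0 : 0 ≤ X) (hXA : X ≤ c * A + d)
    (hu : 0 ≤ u) (huv : u ≤ v) (huY : u ≤ Y)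
    (hmargin : ∀ k : Fin m, ∀ hk : (k : ℕ) + 1 < m,
      0 ≤ X * (v - u) + c * ((R k * B + T k) - (R ⟨(k : ℕ) + 1, hk⟩ * A + T ⟨(k : ℕ) + 1, hk⟩)) * Y)
    (ht : (c * A + d) * u ≤ t) (ht' : t ≤ (c * B + d) * v) :
    ∃ k : Fin m, (c * (R k * A + T k) + d) * u ≤ t ∧ t ≤ (c * (R k * B + T k) + d) * v := by
  -- left endpoints
  set l : Fin m → ℝ := fun k => (c * (R k * A + T k) + d) * u with hl
  have hlmono : Monotone l := by
    have hg : Monotone (fun k : Fin m => R k * A + T k) := chain_mono' _ hord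
    intro i j hij
    have h' : R i * A + T i ≤ R j * A + T j := hg hij
    simp only [hl]
    nlinarith [mul_nonneg (mul_nonneg hc (sub_nonneg.2 h')) hu]
  -- overlap
  have hoverlap : ∀ k : Fin m, ∀ hk : (k : ℕ) + 1 < m,
      l ⟨(k : ℕ) + 1, hk⟩ ≤ (c * (R k * B + T k) + d) * v := by
    intro k hk
    have h1 : A ≤ R k * B + T k := by
      nlinarith [hA k, mul_nonneg (hR0 k) (sub_nonneg.2 hAB)]
    have hP : X ≤ c * (R k * B + T k) + d := by
      nlinarith [mul_le_mul_of_nonneg_left h1 hc]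
    have hm1 := hmargin k hk
    simp only [hl]
    set P := R k * B + T k with hPdef
    set Q := R ⟨(k : ℕ) + 1, hk⟩ * A + T ⟨(k : ℕ) + 1, hk⟩ with hQdef
    rcases le_or_gt Q P with hQP | hQP
    · nlinarith [mul_nonneg (hX0.trans hP) (sub_nonneg.2 huv),
        mul_nonneg (mul_nonneg hc (sub_nonneg.2 hQP)) hu]
    · have h2 : X * (v - u) ≤ (c * P + d) * (v - u) :=
        mul_le_mul_of_nonneg_right hP (sub_nonneg.2 huv)
      have hcd : c * (P - Q) ≤ 0 :=
        mul_nonpos_of_nonneg_of_nonpos hc (by linarith)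
      have h3 : c * (P - Q) * Y ≤ c * (P - Q) * u := by nlinarith
      nlinarith [h2, h3, hm1]
  -- choose the largest k with l k ≤ t
  classical
  have hfne : (Finset.univ.filter (fun k : Fin m => l k ≤ t)).Nonempty := by
    refine ⟨⟨0, hm⟩, ?_⟩
    simp only [Finset.mem_filter, Finset.mem_univ, true_and, hl, hbot]
    exact ht
  set kmax := (Finset.univ.filter (fun k : Fin m => l k ≤ t)).max' hfne with hkmax
  have hkmax_mem : l kmax ≤ t := by
    have := Finset.max'_mem _ hfne
    simpa using this
  by_cases hnext : (kmax : ℕ) + 1 < m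
  · refine ⟨kmax, hkmax_mem, ?_⟩
    have hnotin : ¬ l ⟨(kmax : ℕ) + 1, hnext⟩ ≤ t := by
      intro hmem
      have : (⟨(kmax : ℕ) + 1, hnext⟩ : Fin m) ≤ kmax :=
        Finset.le_max' _ _ (by simpa using hmem)
      have : (kmax : ℕ) + 1 ≤ (kmax : ℕ) := this
      omega
    push_neg at hnotin
    exact le_trans hnotin.le (hoverlap kmax hnext)
  · obtain ⟨ks, hks⟩ := htop
    refine ⟨ks, ?_, ?_⟩
    · have : ks ≤ kmax := by
        have h1 : (ks : ℕ) < m := ks.isLt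
        have : (ks : ℕ) ≤ (kmax : ℕ) := by omega
        exact this
      exact le_trans (hlmono this) hkmax_mem
    · rw [hks]; exact ht'

def RectInv (K₁ K₂ : Set ℝ) (A₁ B₁ A₂ B₂ X X' Yl Y s c d e h : ℝ) : Prop :=
  0 < c ∧ 0 ≤ d ∧ 0 < e ∧ 0 ≤ h ∧
  (∀ x ∈ K₁, c * x + d ∈ K₁) ∧ (∀ y ∈ K₂, e * y + h ∈ K₂) ∧
  X ≤ c * A₁ + d ∧ c * B₁ + d ≤ X' ∧ Yl ≤ e * A₂ + h ∧ e * B₂ + h ≤ Y ∧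
  s * c ≤ e ∧ s * e ≤ c

lemma RectInv.swap {K₁ K₂ : Set ℝ} {A₁ B₁ A₂ B₂ X X' Yl Y s c d e h : ℝ}
    (H : RectInv K₁ K₂ A₁ B₁ A₂ B₂ X X' Yl Y s c d e h) :
    RectInv K₂ K₁ A₂ B₂ A₁ B₁ Yl Y X X' s e h c d := by
  obtain ⟨h1, h2, h3, h4, h5, h6, h7, h8, h9, h10, h11, h12⟩ := H
  exact ⟨h3, h4, h1, h2, h6, h5, h9, h10, h7, h8, h12, h11⟩

lemma rect_step_left {p : ℕ} (hp : 0 < p) (r a : Fin p → ℝ) (K₁ K₂ : Set ℝ)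
    (A₁ B₁ A₂ B₂ X X' Yl Y s : ℝ)
    (hr0 : ∀ i, 0 < r i) (hr1 : ∀ i, r i ≤ 1)
    (ha0 : ∀ i, 0 ≤ a i)
    (hmaps : ∀ i, ∀ x ∈ K₁, r i * x + a i ∈ K₁)
    (hAle : ∀ i, A₁ ≤ r i * A₁ + a i)
    (hBle : ∀ i, r i * B₁ + a i ≤ B₁)
    (hord : ∀ i : Fin p, ∀ hi : (i : ℕ) + 1 < p,
      r i * A₁ + a i ≤ r ⟨(i : ℕ) + 1, hi⟩ * A₁ + a ⟨(i : ℕ) + 1, hi⟩)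
    (hbot : r ⟨0, hp⟩ * A₁ + a ⟨0, hp⟩ = A₁)
    (htop : ∃ i, r i * B₁ + a i = B₁)
    (hAB₁ : A₁ ≤ B₁) (hAB₂ : A₂ ≤ B₂) (hA₂0 : 0 ≤ A₂)
    (hs0 : 0 ≤ s) (hsr : ∀ i, s ≤ r i)
    (hX0 : 0 ≤ X)
    (hmargin : ∀ i : Fin p, ∀ hi : (i : ℕ) + 1 < p,
      0 ≤ s * (B₂ - A₂) * X
        + ((r i * B₁ + a i) - (r ⟨(i : ℕ) + 1, hi⟩ * A₁ + a ⟨(i : ℕ) + 1, hi⟩)) * Y)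
    (c d e h t : ℝ)
    (hInv : RectInv K₁ K₂ A₁ B₁ A₂ B₂ X X' Yl Y s c d e h)
    (hec : e ≤ c)
    (ht1 : (c * A₁ + d) * (e * A₂ + h) ≤ t) (ht2 : t ≤ (c * B₁ + d) * (e * B₂ + h)) :
    ∃ i : Fin p, RectInv K₁ K₂ A₁ B₁ A₂ B₂ X X' Yl Y s (c * r i) (c * a i + d) e h ∧
      (c * r i * A₁ + (c * a i + d)) * (e * A₂ + h) ≤ t ∧
      t ≤ (c * r i * B₁ + (c * a i + d)) * (e * B₂ + h) := by
  obtain ⟨hc, hd, he, hh, hm1, hm2, hXA, hBX', hYl, hY, hsc, hse⟩ := hInv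
  have hu0 : 0 ≤ e * A₂ + h := by positivity
  have huv : e * A₂ + h ≤ e * B₂ + h := by
    linarith [mul_le_mul_of_nonneg_left hAB₂ he.le]
  have huY : e * A₂ + h ≤ Y := le_trans huv hY
  have hmargin' : ∀ k : Fin p, ∀ hk : (k : ℕ) + 1 < p,
      0 ≤ X * ((e * B₂ + h) - (e * A₂ + h))
        + c * ((r k * B₁ + a k) - (r ⟨(k : ℕ) + 1, hk⟩ * A₁ + a ⟨(k : ℕ) + 1, hk⟩)) * Y := by
    intro k hk
    have hm := hmargin k hk
    have h1 : X * ((e * B₂ + h) - (e * A₂ + h)) = X * (e * (B₂ - A₂)) := by ring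
    have h2 : s * c * (B₂ - A₂) ≤ e * (B₂ - A₂) :=
      mul_le_mul_of_nonneg_right hsc (by linarith)
    have h3 : X * (s * c * (B₂ - A₂)) ≤ X * (e * (B₂ - A₂)) :=
      mul_le_mul_of_nonneg_left h2 hX0
    linarith [h3, mul_le_mul_of_nonneg_left hm hc.le]
  obtain ⟨k, hk1, hk2⟩ := split_step' hp r a A₁ B₁ (fun i => (hr0 i).le) hAle hAB₁ hord hbot htop
    c d X Y (e * A₂ + h) (e * B₂ + h) t hc.le hX0 hXA hu0 huv huY hmargin' ht1 ht2
  refine ⟨k, ⟨?_, ?_, he, hh, ?_, hm2, ?_, ?_, hYl, hY, ?_, ?_⟩, ?_, ?_⟩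
  · exact mul_pos hc (hr0 k)
  · have := ha0 k
    positivity
  · intro x hx
    have : c * (r k * x + a k) + d ∈ K₁ := hm1 _ (hmaps k x hx)
    convert this using 1
    ring
  · have h1 : A₁ ≤ r k * A₁ + a k := hAle k
    linarith [mul_le_mul_of_nonneg_left h1 hc.le]
  · have h1 : r k * B₁ + a k ≤ B₁ := hBle k
    linarith [mul_le_mul_of_nonneg_left h1 hc.le]
  · -- s * (c * r k) ≤ e
    have h2 : c * r k ≤ c := mul_le_of_le_one_right hc.le (hr1 k)
    have h3 : s * (c * r k) ≤ s * c := mul_le_mul_of_nonneg_left h2 hs0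
    linarith
  · -- s * e ≤ c * r k
    have h1 : s * e ≤ s * c := mul_le_mul_of_nonneg_left hec hs0
    have h2 : s * c ≤ r k * c := mul_le_mul_of_nonneg_right (hsr k) hc.le
    have h3 : r k * c = c * r k := mul_comm _ _
    linarith
  · have e1 : c * r k * A₁ + (c * a k + d) = c * (r k * A₁ + a k) + d := by ring
    rw [e1]; exact hk1
  · have e1 : c * r k * B₁ + (c * a k + d) = c * (r k * B₁ + a k) + d := by ring
    rw [e1]; exact hk2

lemma eps_arith (S Δ x y ε : ℝ) (hS : 0 < S) (hε : 0 < ε)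
    (hεle : ε ≤ (S * x + Δ * y) / (S + |Δ| + 1)) :
    0 ≤ S * max (x - ε) 0 + Δ * (y + ε) := by
  have hM : 0 < S + |Δ| + 1 := by positivity
  have h0 : ε * (S + |Δ| + 1) ≤ S * x + Δ * y := (le_div_iff₀ hM).1 hεle
  have h1 : S * (x - ε) ≤ S * max (x - ε) 0 :=
    mul_le_mul_of_nonneg_left (le_max_left _ _) hS.le
  have h2 : -|Δ| * ε ≤ Δ * ε := mul_le_mul_of_nonneg_right (neg_abs_le Δ) hε.le
  linarith [h1, h2, h0]

set_option maxHeartbeats 2000000 in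
/-- Corollary: the product set `K₁ · K₂` contains interior under a pointwise condition. -/
theorem product_of_two_self_similar_sets_has_interior
    (p q : ℕ) (hp : 2 ≤ p) (hq : 2 ≤ q)
    (r a : Fin p → ℝ) (ρ b : Fin q → ℝ)
    (hr : ∀ i, r i ∈ Set.Ioo (0 : ℝ) 1) (hρ : ∀ j, ρ j ∈ Set.Ioo (0 : ℝ) 1)
    (K₁ K₂ : Set ℝ)
    (hK₁ne : K₁.Nonempty) (hK₁c : IsCompact K₁)
    (hK₁ : K₁ = ⋃ i : Fin p, (fun x => r i * x + a i) '' K₁)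
    (hK₂ne : K₂.Nonempty) (hK₂c : IsCompact K₂)
    (hK₂ : K₂ = ⋃ j : Fin q, (fun x => ρ j * x + b j) '' K₂)
    (A₁ B₁ A₂ B₂ : ℝ)
    (hA₁ : A₁ = sInf K₁) (hB₁ : B₁ = sSup K₁)
    (hA₂ : A₂ = sInf K₂) (hB₂ : B₂ = sSup K₂)
    (hAB₁ : A₁ < B₁) (hAB₂ : A₂ < B₂)
    (hA₁0 : 0 ≤ A₁) (hA₂0 : 0 ≤ A₂)
    (hord₁ : ∀ i : Fin p, ∀ hi : (i : ℕ) + 1 < p,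
      r i * A₁ + a i ≤ r ⟨(i : ℕ) + 1, hi⟩ * A₁ + a ⟨(i : ℕ) + 1, hi⟩)
    (hord₂ : ∀ j : Fin q, ∀ hj : (j : ℕ) + 1 < q,
      ρ j * A₂ + b j ≤ ρ ⟨(j : ℕ) + 1, hj⟩ * A₂ + b ⟨(j : ℕ) + 1, hj⟩)
    (smin : ℝ)
    (hsmin_le₁ : ∀ i, smin ≤ r i) (hsmin_le₂ : ∀ j, smin ≤ ρ j)
    (hsmin_mem : (∃ i, smin = r i) ∨ (∃ j, smin = ρ j))
    (x₀ y₀ : ℝ) (hx₀ : x₀ ∈ K₁) (hy₀ : y₀ ∈ K₂)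
    (hcond₁ : ∀ i : Fin p, ∀ hi : (i : ℕ) + 1 < p,
      0 < smin * (B₂ - A₂) * x₀
          + ((r i * B₁ + a i) - (r ⟨(i : ℕ) + 1, hi⟩ * A₁ + a ⟨(i : ℕ) + 1, hi⟩)) * y₀)
    (hcond₂ : ∀ j : Fin q, ∀ hj : (j : ℕ) + 1 < q,
      0 < smin * (B₁ - A₁) * y₀
          + ((ρ j * B₂ + b j) - (ρ ⟨(j : ℕ) + 1, hj⟩ * A₂ + b ⟨(j : ℕ) + 1, hj⟩)) * x₀) :
    (interior {w : ℝ | ∃ x ∈ K₁, ∃ y ∈ K₂, x * y = w}).Nonempty := by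
  have hp0 : 0 < p := by omega
  have hq0 : 0 < q := by omega
  have hpne : (Finset.univ : Finset (Fin p)).Nonempty := ⟨⟨0, hp0⟩, Finset.mem_univ _⟩
  have hqne : (Finset.univ : Finset (Fin q)).Nonempty := ⟨⟨0, hq0⟩, Finset.mem_univ _⟩
  -- the maximal contraction ratio
  set θ : ℝ := max (Finset.univ.sup' hpne r) (Finset.univ.sup' hqne ρ) with hθdef
  have hθr : ∀ i, r i ≤ θ := fun i =>
    le_trans (Finset.le_sup' r (Finset.mem_univ i)) (le_max_left _ _)
  have hθρ : ∀ j, ρ j ≤ θ := fun j =>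
    le_trans (Finset.le_sup' ρ (Finset.mem_univ j)) (le_max_right _ _)
  have hθ1 : θ < 1 := by
    apply max_lt <;> rw [Finset.sup'_lt_iff]
    · exact fun i _ => (hr i).2
    · exact fun j _ => (hρ j).2
  have hθ0 : 0 < θ := lt_of_lt_of_le (hr ⟨0, hp0⟩).1 (hθr _)
  clear_value θ
  have hs0 : 0 < smin := by
    rcases hsmin_mem with ⟨i, hi⟩ | ⟨j, hj⟩
    · rw [hi]; exact (hr i).1
    · rw [hj]; exact (hρ j).1
  have hsθ : smin ≤ θ := by
    rcases hsmin_mem with ⟨i, hi⟩ | ⟨j, hj⟩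
    · rw [hi]; exact hθr i
    · rw [hj]; exact hθρ j
  have hs1 : smin < 1 := lt_of_le_of_lt hsθ hθ1
  -- basic facts about K₁
  have hbdd₁ : ∀ x ∈ K₁, A₁ ≤ x ∧ x ≤ B₁ := by
    intro x hx
    exact ⟨hA₁ ▸ csInf_le hK₁c.bddBelow hx, hB₁ ▸ le_csSup hK₁c.bddAbove hx⟩
  have hA₁K : A₁ ∈ K₁ := hA₁ ▸ hK₁c.sInf_mem hK₁ne
  have hB₁K : B₁ ∈ K₁ := hB₁ ▸ hK₁c.sSup_mem hK₁ne
  have hbdd₂ : ∀ y ∈ K₂, A₂ ≤ y ∧ y ≤ B₂ := by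
    intro y hy
    exact ⟨hA₂ ▸ csInf_le hK₂c.bddBelow hy, hB₂ ▸ le_csSup hK₂c.bddAbove hy⟩
  have hA₂K : A₂ ∈ K₂ := hA₂ ▸ hK₂c.sInf_mem hK₂ne
  have hB₂K : B₂ ∈ K₂ := hB₂ ▸ hK₂c.sSup_mem hK₂ne
  have hmaps₁ : ∀ i, ∀ x ∈ K₁, r i * x + a i ∈ K₁ := by
    intro i x hx
    rw [hK₁]
    exact Set.mem_iUnion.2 ⟨i, ⟨x, hx, rfl⟩⟩
  have hmaps₂ : ∀ j, ∀ y ∈ K₂, ρ j * y + b j ∈ K₂ := by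
    intro j y hy
    rw [hK₂]
    exact Set.mem_iUnion.2 ⟨j, ⟨y, hy, rfl⟩⟩
  have hAle₁ : ∀ i, A₁ ≤ r i * A₁ + a i := fun i => (hbdd₁ _ (hmaps₁ i A₁ hA₁K)).1
  have hBle₁ : ∀ i, r i * B₁ + a i ≤ B₁ := fun i => (hbdd₁ _ (hmaps₁ i B₁ hB₁K)).2
  have hAle₂ : ∀ j, A₂ ≤ ρ j * A₂ + b j := fun j => (hbdd₂ _ (hmaps₂ j A₂ hA₂K)).1
  have hBle₂ : ∀ j, ρ j * B₂ + b j ≤ B₂ := fun j => (hbdd₂ _ (hmaps₂ j B₂ hB₂K)).2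
  have ha₁0 : ∀ i, 0 ≤ a i := by
    intro i
    nlinarith [hAle₁ i, mul_nonneg hA₁0 (sub_nonneg.2 (hr i).2.le)]
  have hb₂0 : ∀ j, 0 ≤ b j := by
    intro j
    nlinarith [hAle₂ j, mul_nonneg hA₂0 (sub_nonneg.2 (hρ j).2.le)]
  have hlA₁ : Monotone (fun i : Fin p => r i * A₁ + a i) := chain_mono' _ hord₁
  have hlA₂ : Monotone (fun j : Fin q => ρ j * A₂ + b j) := chain_mono' _ hord₂
  have hbot₁ : r ⟨0, hp0⟩ * A₁ + a ⟨0, hp0⟩ = A₁ := by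
    have hmem : A₁ ∈ ⋃ i : Fin p, (fun x => r i * x + a i) '' K₁ := hK₁ ▸ hA₁K
    obtain ⟨i, x, hx, hfx⟩ := Set.mem_iUnion.1 hmem
    have h1 : r i * A₁ + a i ≤ r i * x + a i := by
      nlinarith [(hbdd₁ x hx).1, (hr i).1]
    have h2 : r ⟨0, hp0⟩ * A₁ + a ⟨0, hp0⟩ ≤ r i * A₁ + a i := hlA₁ (Fin.mk_le_of_le_val (Nat.zero_le _))
    have h3 := hAle₁ ⟨0, hp0⟩
    simp only at hfx
    linarith [hfx ▸ h1]
  have hbot₂ : ρ ⟨0, hq0⟩ * A₂ + b ⟨0, hq0⟩ = A₂ := by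
    have hmem : A₂ ∈ ⋃ j : Fin q, (fun x => ρ j * x + b j) '' K₂ := hK₂ ▸ hA₂K
    obtain ⟨j, y, hy, hfy⟩ := Set.mem_iUnion.1 hmem
    have h1 : ρ j * A₂ + b j ≤ ρ j * y + b j := by
      nlinarith [(hbdd₂ y hy).1, (hρ j).1]
    have h2 : ρ ⟨0, hq0⟩ * A₂ + b ⟨0, hq0⟩ ≤ ρ j * A₂ + b j := hlA₂ (Fin.mk_le_of_le_val (Nat.zero_le _))
    have h3 := hAle₂ ⟨0, hq0⟩
    simp only at hfy
    linarith [hfy ▸ h1]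
  have htop₁ : ∃ i, r i * B₁ + a i = B₁ := by
    have hmem : B₁ ∈ ⋃ i : Fin p, (fun x => r i * x + a i) '' K₁ := hK₁ ▸ hB₁K
    obtain ⟨i, x, hx, hfx⟩ := Set.mem_iUnion.1 hmem
    refine ⟨i, le_antisymm (hBle₁ i) ?_⟩
    have h1 : r i * x + a i ≤ r i * B₁ + a i := by
      nlinarith [(hbdd₁ x hx).2, (hr i).1]
    simp only at hfx
    linarith [hfx ▸ h1]
  have htop₂ : ∃ j, ρ j * B₂ + b j = B₂ := by
    have hmem : B₂ ∈ ⋃ j : Fin q, (fun x => ρ j * x + b j) '' K₂ := hK₂ ▸ hB₂K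
    obtain ⟨j, y, hy, hfy⟩ := Set.mem_iUnion.1 hmem
    refine ⟨j, le_antisymm (hBle₂ j) ?_⟩
    have h1 : ρ j * y + b j ≤ ρ j * B₂ + b j := by
      nlinarith [(hbdd₂ y hy).2, (hρ j).1]
    simp only at hfy
    linarith [hfy ▸ h1]
  have hB₁pos : 0 < B₁ := lt_of_le_of_lt hA₁0 hAB₁
  have hB₂pos : 0 < B₂ := lt_of_le_of_lt hA₂0 hAB₂
  have hx₀B : A₁ ≤ x₀ ∧ x₀ ≤ B₁ := hbdd₁ x₀ hx₀
  have hy₀B : A₂ ≤ y₀ ∧ y₀ ≤ B₂ := hbdd₂ y₀ hy₀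
  -- choice of the margin ε
  classical
  obtain ⟨ε, hε0, hepsX, hepsY⟩ :
      ∃ ε : ℝ, 0 < ε ∧
        (∀ i : Fin p, ∀ hi : (i : ℕ) + 1 < p,
          0 ≤ smin * (B₂ - A₂) * (max (x₀ - ε) 0)
            + ((r i * B₁ + a i) - (r ⟨(i : ℕ) + 1, hi⟩ * A₁ + a ⟨(i : ℕ) + 1, hi⟩)) * (y₀ + ε)) ∧
        (∀ j : Fin q, ∀ hj : (j : ℕ) + 1 < q,
          0 ≤ smin * (B₁ - A₁) * (max (y₀ - ε) 0)
            + ((ρ j * B₂ + b j) - (ρ ⟨(j : ℕ) + 1, hj⟩ * A₂ + b ⟨(j : ℕ) + 1, hj⟩)) * (x₀ + ε)) := by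
    set g₁ : Fin p → ℝ := fun i =>
      if hi : (i : ℕ) + 1 < p then
        (smin * (B₂ - A₂) * x₀
          + ((r i * B₁ + a i) - (r ⟨(i : ℕ) + 1, hi⟩ * A₁ + a ⟨(i : ℕ) + 1, hi⟩)) * y₀)
        / (smin * (B₂ - A₂)
          + |(r i * B₁ + a i) - (r ⟨(i : ℕ) + 1, hi⟩ * A₁ + a ⟨(i : ℕ) + 1, hi⟩)| + 1)
      else 1 with hg₁def
    set g₂ : Fin q → ℝ := fun j =>
      if hj : (j : ℕ) + 1 < q then
        (smin * (B₁ - A₁) * y₀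
          + ((ρ j * B₂ + b j) - (ρ ⟨(j : ℕ) + 1, hj⟩ * A₂ + b ⟨(j : ℕ) + 1, hj⟩)) * x₀)
        / (smin * (B₁ - A₁)
          + |(ρ j * B₂ + b j) - (ρ ⟨(j : ℕ) + 1, hj⟩ * A₂ + b ⟨(j : ℕ) + 1, hj⟩)| + 1)
      else 1 with hg₂def
    have hg₁pos : ∀ i, 0 < g₁ i := by
      intro i
      simp only [hg₁def]
      split
      · rename_i hi
        apply div_pos (hcond₁ i hi)
        have h1 : (0:ℝ) < smin * (B₂ - A₂) := mul_pos hs0 (by linarith)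
        linarith [abs_nonneg ((r i * B₁ + a i) - (r ⟨(i : ℕ) + 1, hi⟩ * A₁ + a ⟨(i : ℕ) + 1, hi⟩))]
      · exact one_pos
    have hg₂pos : ∀ j, 0 < g₂ j := by
      intro j
      simp only [hg₂def]
      split
      · rename_i hj
        apply div_pos (hcond₂ j hj)
        have h1 : (0:ℝ) < smin * (B₁ - A₁) := mul_pos hs0 (by linarith)
        linarith [abs_nonneg ((ρ j * B₂ + b j) - (ρ ⟨(j : ℕ) + 1, hj⟩ * A₂ + b ⟨(j : ℕ) + 1, hj⟩))]
      · exact one_pos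
    refine ⟨min (Finset.univ.inf' hpne g₁) (Finset.univ.inf' hqne g₂), ?_, ?_, ?_⟩
    · apply lt_min <;> rw [Finset.lt_inf'_iff]
      · exact fun i _ => hg₁pos i
      · exact fun j _ => hg₂pos j
    · intro i hi
      have hεpos : 0 < min (Finset.univ.inf' hpne g₁) (Finset.univ.inf' hqne g₂) := by
        apply lt_min <;> rw [Finset.lt_inf'_iff]
        · exact fun i _ => hg₁pos i
        · exact fun j _ => hg₂pos j
      apply eps_arith _ _ _ _ _ (mul_pos hs0 (by linarith : (0:ℝ) < B₂ - A₂)) hεpos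
      have h1 : min (Finset.univ.inf' hpne g₁) (Finset.univ.inf' hqne g₂) ≤ g₁ i :=
        le_trans (min_le_left _ _) (Finset.inf'_le g₁ (Finset.mem_univ i))
      rw [hg₁def] at h1
      simp only at h1
      rw [dif_pos hi] at h1
      exact h1
    · intro j hj
      have hεpos : 0 < min (Finset.univ.inf' hpne g₁) (Finset.univ.inf' hqne g₂) := by
        apply lt_min <;> rw [Finset.lt_inf'_iff]
        · exact fun i _ => hg₁pos i
        · exact fun j _ => hg₂pos j
      apply eps_arith _ _ _ _ _ (mul_pos hs0 (by linarith : (0:ℝ) < B₁ - A₁)) hεpos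
      have h1 : min (Finset.univ.inf' hpne g₁) (Finset.univ.inf' hqne g₂) ≤ g₂ j :=
        le_trans (min_le_right _ _) (Finset.inf'_le g₂ (Finset.mem_univ j))
      rw [hg₂def] at h1
      simp only at h1
      rw [dif_pos hj] at h1
      exact h1
  -- descend along the coding of x₀
  have desc1 : ∀ n : ℕ, ∃ c d x', 0 < c ∧ c ≤ θ ^ n ∧ 0 ≤ d ∧
      (∀ x ∈ K₁, c * x + d ∈ K₁) ∧ x' ∈ K₁ ∧ c * x' + d = x₀ := by
    intro n
    induction n with
    | zero =>
      exact ⟨1, 0, x₀, one_pos, by simp, le_refl 0, by intro x hx; simpa using hx, hx₀, by ring⟩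
    | succ n ih =>
      obtain ⟨c, d, x', hc, hcθ, hd, hmap, hx', heq⟩ := ih
      have hx'' : x' ∈ ⋃ i : Fin p, (fun x => r i * x + a i) '' K₁ := hK₁ ▸ hx'
      obtain ⟨i, y, hy, hfy⟩ := Set.mem_iUnion.1 hx''
      simp only at hfy
      refine ⟨c * r i, c * a i + d, y, mul_pos hc (hr i).1, ?_, ?_, ?_, hy, ?_⟩
      · calc c * r i ≤ θ ^ n * θ :=
              mul_le_mul hcθ (hθr i) (hr i).1.le (pow_nonneg hθ0.le n)
          _ = θ ^ (n + 1) := (pow_succ θ n).symm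
      · exact add_nonneg (mul_nonneg hc.le (ha₁0 i)) hd
      · intro x hx
        have h2 := hmap _ (hmaps₁ i x hx)
        convert h2 using 1
        ring
      · rw [← hfy] at heq
        rw [← heq]
        ring
  -- descend along the coding of y₀, stopping as soon as the ratio drops below w
  have desc2 : ∀ w : ℝ, 0 < w → ∀ n : ℕ, ∀ e h y', 0 < e → 0 ≤ h →
      (∀ y ∈ K₂, e * y + h ∈ K₂) → y' ∈ K₂ → e * y' + h = y₀ → w < e → e * θ ^ n ≤ w →
      ∃ e' h' y'', 0 < e' ∧ 0 ≤ h' ∧ (∀ y ∈ K₂, e' * y + h' ∈ K₂) ∧ y'' ∈ K₂ ∧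
        e' * y'' + h' = y₀ ∧ smin * w ≤ e' ∧ e' ≤ w := by
    intro w hw n
    induction n with
    | zero =>
      intro e h y' he hh hmap hy' heq hwe hle
      exfalso
      simp only [pow_zero, mul_one] at hle
      linarith
    | succ n ih =>
      intro e h y' he hh hmap hy' heq hwe hle
      have hy'' : y' ∈ ⋃ j : Fin q, (fun x => ρ j * x + b j) '' K₂ := hK₂ ▸ hy'
      obtain ⟨j, z, hz, hfz⟩ := Set.mem_iUnion.1 hy''
      simp only at hfz
      have he' : 0 < e * ρ j := mul_pos he (hρ j).1
      have hh' : 0 ≤ e * b j + h := add_nonneg (mul_nonneg he.le (hb₂0 j)) hh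
      have hmap' : ∀ y ∈ K₂, (e * ρ j) * y + (e * b j + h) ∈ K₂ := by
        intro y hy
        have h2 := hmap _ (hmaps₂ j y hy)
        convert h2 using 1
        ring
      have heq' : (e * ρ j) * z + (e * b j + h) = y₀ := by
        rw [← hfz] at heq
        rw [← heq]
        ring
      have hlow : smin * w ≤ e * ρ j := by
        have h1 : smin * w ≤ smin * e := mul_le_mul_of_nonneg_left hwe.le hs0.le
        have h2 : smin * e ≤ ρ j * e := mul_le_mul_of_nonneg_right (hsmin_le₂ j) he.le
        have h3 : ρ j * e = e * ρ j := mul_comm _ _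
        linarith
      rcases le_or_gt (e * ρ j) w with hstop | hcont
      · exact ⟨e * ρ j, e * b j + h, z, he', hh', hmap', hz, heq', hlow, hstop⟩
      · apply ih (e * ρ j) (e * b j + h) z he' hh' hmap' hz heq' hcont
        have h1 : e * ρ j * θ ^ n ≤ e * θ * θ ^ n :=
          mul_le_mul_of_nonneg_right (mul_le_mul_of_nonneg_left (hθρ j) he.le)
            (pow_nonneg hθ0.le n)
        have h2 : e * θ * θ ^ n = e * θ ^ (n + 1) := by rw [pow_succ]; ring
        linarith
  -- the initial rectangle
  have hBA₁ : (0:ℝ) < B₁ - A₁ := by linarith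
  have hBA₂ : (0:ℝ) < B₂ - A₂ := by linarith
  have hδ0 : 0 < min (ε / (B₁ - A₁)) (ε / (B₂ - A₂)) :=
    lt_min (div_pos hε0 hBA₁) (div_pos hε0 hBA₂)
  obtain ⟨n₁, hn₁⟩ := exists_pow_lt_of_lt_one hδ0 hθ1
  obtain ⟨c₀, d₀, x₁, hc₀, hc₀θ, hd₀, hmapc₀, hx₁, heqx⟩ := desc1 (n₁ + 1)
  have hc₀δ : c₀ < min (ε / (B₁ - A₁)) (ε / (B₂ - A₂)) := by
    have h1 : θ ^ (n₁ + 1) ≤ θ ^ n₁ := by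
      rw [pow_succ]
      exact mul_le_of_le_one_right (pow_nonneg hθ0.le n₁) hθ1.le
    linarith
  have hc₀1 : c₀ < 1 := by
    have h1 : θ ^ (n₁ + 1) ≤ θ ^ 1 := pow_le_pow_of_le_one hθ0.le hθ1.le (by omega)
    simp only [pow_one] at h1
    linarith
  obtain ⟨n₂, hn₂⟩ := exists_pow_lt_of_lt_one hc₀ hθ1
  obtain ⟨e₀, h₀, y₁, he₀, hh₀, hmape₀, hy₁, heqy, he₀low, he₀hi⟩ :=
    desc2 c₀ hc₀ n₂ 1 0 y₀ one_pos le_rfl (by intro y hy; simpa using hy) hy₀ (by ring) hc₀1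
      (by simpa using hn₂.le)
  have hc₀BA₁ : c₀ * (B₁ - A₁) ≤ ε := by
    have h1 : c₀ ≤ ε / (B₁ - A₁) := (hc₀δ.le.trans (min_le_left _ _))
    calc c₀ * (B₁ - A₁) ≤ (ε / (B₁ - A₁)) * (B₁ - A₁) :=
          mul_le_mul_of_nonneg_right h1 hBA₁.le
      _ = ε := by field_simp
  have hc₀BA₂ : c₀ * (B₂ - A₂) ≤ ε := by
    have h1 : c₀ ≤ ε / (B₂ - A₂) := (hc₀δ.le.trans (min_le_right _ _))
    calc c₀ * (B₂ - A₂) ≤ (ε / (B₂ - A₂)) * (B₂ - A₂) :=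
          mul_le_mul_of_nonneg_right h1 hBA₂.le
      _ = ε := by field_simp
  have hInv₀ : RectInv K₁ K₂ A₁ B₁ A₂ B₂ (max (x₀ - ε) 0) (x₀ + ε) (max (y₀ - ε) 0) (y₀ + ε)
      smin c₀ d₀ e₀ h₀ := by
    have hx₁B := hbdd₁ x₁ hx₁
    have hy₁B := hbdd₂ y₁ hy₁
    have he₀BA₂ : e₀ * (B₂ - A₂) ≤ c₀ * (B₂ - A₂) := mul_le_mul_of_nonneg_right he₀hi hBA₂.le
    refine ⟨hc₀, hd₀, he₀, hh₀, hmapc₀, hmape₀, ?_, ?_, ?_, ?_, he₀low, ?_⟩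
    · apply max_le
      · linarith [mul_le_mul_of_nonneg_left hx₁B.2 hc₀.le]
      · exact add_nonneg (mul_nonneg hc₀.le hA₁0) hd₀
    · linarith [mul_le_mul_of_nonneg_left hx₁B.1 hc₀.le]
    · apply max_le
      · linarith [mul_le_mul_of_nonneg_left hy₁B.2 he₀.le]
      · exact add_nonneg (mul_nonneg he₀.le hA₂0) hh₀
    · linarith [mul_le_mul_of_nonneg_left hy₁B.1 he₀.le]
    · calc smin * e₀ ≤ 1 * e₀ := mul_le_mul_of_nonneg_right hs1.le he₀.le
        _ = e₀ := one_mul _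
        _ ≤ c₀ := he₀hi
  -- one subdivision step
  have step : ∀ c d e h t, RectInv K₁ K₂ A₁ B₁ A₂ B₂ (max (x₀ - ε) 0) (x₀ + ε)
        (max (y₀ - ε) 0) (y₀ + ε) smin c d e h →
      (c * A₁ + d) * (e * A₂ + h) ≤ t → t ≤ (c * B₁ + d) * (e * B₂ + h) →
      ∃ c' d' e' h', RectInv K₁ K₂ A₁ B₁ A₂ B₂ (max (x₀ - ε) 0) (x₀ + ε)
          (max (y₀ - ε) 0) (y₀ + ε) smin c' d' e' h' ∧
        (c' * A₁ + d') * (e' * A₂ + h') ≤ t ∧ t ≤ (c' * B₁ + d') * (e' * B₂ + h') ∧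
        c' * e' ≤ θ * (c * e) := by
    intro c d e h t hI ht1 ht2
    have hc : 0 < c := hI.1
    have he : 0 < e := hI.2.2.1
    have hce0 : (0:ℝ) ≤ c * e := (mul_pos hc he).le
    rcases le_total e c with hec | hce
    · obtain ⟨i, hI', hta, htb⟩ := rect_step_left hp0 r a K₁ K₂ A₁ B₁ A₂ B₂
        (max (x₀ - ε) 0) (x₀ + ε) (max (y₀ - ε) 0) (y₀ + ε) smin
        (fun i => (hr i).1) (fun i => (hr i).2.le) ha₁0 hmaps₁ hAle₁ hBle₁ hord₁ hbot₁ htop₁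
        hAB₁.le hAB₂.le hA₂0 hs0.le hsmin_le₁ (le_max_right _ _) hepsX
        c d e h t hI hec ht1 ht2
      refine ⟨c * r i, c * a i + d, e, h, hI', hta, htb, ?_⟩
      have h1 : (c * e) * r i ≤ (c * e) * θ := mul_le_mul_of_nonneg_left (hθr i) hce0
      linarith only [h1]
    · have ht1' : (e * A₂ + h) * (c * A₁ + d) ≤ t := by rw [mul_comm]; exact ht1
      have ht2' : t ≤ (e * B₂ + h) * (c * B₁ + d) := by rw [mul_comm]; exact ht2
      obtain ⟨j, hI', hta, htb⟩ := rect_step_left hq0 ρ b K₂ K₁ A₂ B₂ A₁ B₁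
        (max (y₀ - ε) 0) (y₀ + ε) (max (x₀ - ε) 0) (x₀ + ε) smin
        (fun j => (hρ j).1) (fun j => (hρ j).2.le) hb₂0 hmaps₂ hAle₂ hBle₂ hord₂ hbot₂ htop₂
        hAB₂.le hAB₁.le hA₁0 hs0.le hsmin_le₂ (le_max_right _ _) hepsY
        e h c d t hI.swap hce ht1' ht2'
      refine ⟨c, d, e * ρ j, e * b j + h, hI'.swap, ?_, ?_, ?_⟩
      · rw [mul_comm]; exact hta
      · rw [mul_comm] at htb; exact htb
      · have h1 : (c * e) * ρ j ≤ (c * e) * θ := mul_le_mul_of_nonneg_left (hθρ j) hce0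
        linarith only [h1]
  -- iterating the subdivision
  have iter : ∀ n : ℕ, ∀ c d e h t, RectInv K₁ K₂ A₁ B₁ A₂ B₂ (max (x₀ - ε) 0) (x₀ + ε)
        (max (y₀ - ε) 0) (y₀ + ε) smin c d e h →
      (c * A₁ + d) * (e * A₂ + h) ≤ t → t ≤ (c * B₁ + d) * (e * B₂ + h) →
      ∃ c' d' e' h', RectInv K₁ K₂ A₁ B₁ A₂ B₂ (max (x₀ - ε) 0) (x₀ + ε)
          (max (y₀ - ε) 0) (y₀ + ε) smin c' d' e' h' ∧
        (c' * A₁ + d') * (e' * A₂ + h') ≤ t ∧ t ≤ (c' * B₁ + d') * (e' * B₂ + h') ∧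
        c' * e' ≤ θ ^ n * (c * e) := by
    intro n
    induction n with
    | zero =>
      intro c d e h t hI h1 h2
      exact ⟨c, d, e, h, hI, h1, h2, by simp⟩
    | succ n ih =>
      intro c d e h t hI h1 h2
      obtain ⟨c1, d1, e1, h1', hI1, hb1, hb2, hprod⟩ := step c d e h t hI h1 h2
      obtain ⟨c2, d2, e2, h2', hI2, hc1, hc2, hprod2⟩ := ih c1 d1 e1 h1' t hI1 hb1 hb2
      refine ⟨c2, d2, e2, h2', hI2, hc1, hc2, ?_⟩
      calc c2 * e2 ≤ θ ^ n * (c1 * e1) := hprod2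
        _ ≤ θ ^ n * (θ * (c * e)) :=
            mul_le_mul_of_nonneg_left hprod (pow_nonneg hθ0.le n)
        _ = θ ^ (n + 1) * (c * e) := by rw [pow_succ]; ring
  -- the product set is compact, hence closed
  have hSimg : {w : ℝ | ∃ x ∈ K₁, ∃ y ∈ K₂, x * y = w}
      = (fun z : ℝ × ℝ => z.1 * z.2) '' (K₁ ×ˢ K₂) := by
    ext w
    constructor
    · rintro ⟨x, hx, y, hy, hxy⟩
      exact ⟨(x, y), ⟨hx, hy⟩, hxy⟩
    · rintro ⟨⟨x, y⟩, ⟨hx, hy⟩, hxy⟩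
      exact ⟨x, hx, y, hy, hxy⟩
  have hSclosed : IsClosed {w : ℝ | ∃ x ∈ K₁, ∃ y ∈ K₂, x * y = w} := by
    rw [hSimg]
    exact ((hK₁c.prod hK₂c).image (continuous_fst.mul continuous_snd)).isClosed
  have hX'pos : (0:ℝ) < x₀ + ε := by linarith [hx₀B.1]
  have hY'pos : (0:ℝ) < y₀ + ε := by linarith [hy₀B.1]
  -- the target interval is contained in the product set
  have hsub : Icc ((c₀ * A₁ + d₀) * (e₀ * A₂ + h₀)) ((c₀ * B₁ + d₀) * (e₀ * B₂ + h₀))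
      ⊆ {w : ℝ | ∃ x ∈ K₁, ∃ y ∈ K₂, x * y = w} := by
    intro t ht
    rw [← hSclosed.closure_eq]
    rw [Metric.mem_closure_iff]
    intro η hη
    have hC : (0:ℝ) < (B₂ - A₂) * (x₀ + ε) + (B₁ - A₁) * (y₀ + ε) :=
      add_pos (mul_pos hBA₂ hX'pos) (mul_pos hBA₁ hY'pos)
    set γ : ℝ := η / (2 * ((B₂ - A₂) * (x₀ + ε) + (B₁ - A₁) * (y₀ + ε))) with hγdef
    have hγ0 : 0 < γ := div_pos hη (by linarith)
    have hγC : γ * ((B₂ - A₂) * (x₀ + ε) + (B₁ - A₁) * (y₀ + ε)) < η := by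
      rw [hγdef]
      rw [div_mul_eq_mul_div]
      rw [div_lt_iff₀ (by linarith)]
      exact mul_lt_mul_of_pos_left (by linarith) hη
    clear_value γ
    have hc₀e₀ : 0 < c₀ * e₀ := mul_pos hc₀ he₀
    have htg : 0 < smin * (γ * γ) / (c₀ * e₀) := by positivity
    obtain ⟨n, hn⟩ := exists_pow_lt_of_lt_one htg hθ1
    obtain ⟨c', d', e', h', hI, hb1, hb2, hprod⟩ := iter n c₀ d₀ e₀ h₀ t hInv₀ ht.1 ht.2
    obtain ⟨hc', hd', he', hh', hm1, hm2, hXc, hcX', hYe, heY, hsc, hse⟩ := hI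
    have hprod' : c' * e' < smin * (γ * γ) := by
      have h1 : θ ^ n * (c₀ * e₀) < (smin * (γ * γ) / (c₀ * e₀)) * (c₀ * e₀) :=
        mul_lt_mul_of_pos_right hn hc₀e₀
      have h2 : (smin * (γ * γ) / (c₀ * e₀)) * (c₀ * e₀) = smin * (γ * γ) := by
        field_simp
      linarith only [h1, h2, hprod]
    have hc'γ : c' < γ := by
      by_contra hcon
      push_neg at hcon
      have h3 : smin * (γ * γ) ≤ smin * (c' * c') :=
        mul_le_mul_of_nonneg_left (mul_le_mul hcon hcon hγ0.le hc'.le) hs0.le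
      have h5 : (smin * c') * c' ≤ e' * c' := mul_le_mul_of_nonneg_right hsc hc'.le
      linarith only [h3, h5, hprod']
    have he'γ : e' < γ := by
      by_contra hcon
      push_neg at hcon
      have h3 : smin * (γ * γ) ≤ smin * (e' * e') :=
        mul_le_mul_of_nonneg_left (mul_le_mul hcon hcon hγ0.le he'.le) hs0.le
      have h5 : (smin * e') * e' ≤ c' * e' := mul_le_mul_of_nonneg_right hse he'.le
      linarith only [h3, h5, hprod']
    refine ⟨(c' * A₁ + d') * (e' * A₂ + h'),
      ⟨c' * A₁ + d', hm1 _ hA₁K, e' * A₂ + h', hm2 _ hA₂K, rfl⟩, ?_⟩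
    have hv0 : 0 ≤ e' * A₂ + h' := add_nonneg (mul_nonneg he'.le hA₂0) hh'
    have hvY : e' * A₂ + h' ≤ y₀ + ε := by
      have h1 : e' * A₂ ≤ e' * B₂ := mul_le_mul_of_nonneg_left hAB₂.le he'.le
      linarith only [h1, heY]
    have t1 : (c' * B₁ + d') * (e' * (B₂ - A₂)) ≤ (x₀ + ε) * (e' * (B₂ - A₂)) :=
      mul_le_mul_of_nonneg_right hcX' (mul_nonneg he'.le hBA₂.le)
    have t2 : (x₀ + ε) * (e' * (B₂ - A₂)) ≤ (x₀ + ε) * (γ * (B₂ - A₂)) :=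
      mul_le_mul_of_nonneg_left (mul_le_mul_of_nonneg_right he'γ.le hBA₂.le) hX'pos.le
    have t3 : (c' * (B₁ - A₁)) * (e' * A₂ + h') ≤ (c' * (B₁ - A₁)) * (y₀ + ε) :=
      mul_le_mul_of_nonneg_left hvY (mul_nonneg hc'.le hBA₁.le)
    have t4 : (c' * (B₁ - A₁)) * (y₀ + ε) ≤ (γ * (B₁ - A₁)) * (y₀ + ε) :=
      mul_le_mul_of_nonneg_right (mul_le_mul_of_nonneg_right hc'γ.le hBA₁.le) hY'pos.le
    rw [Real.dist_eq, abs_of_nonneg (sub_nonneg.2 hb1)]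
    linarith only [hb1, hb2, t1, t2, t3, t4, hγC]
  -- the interval is nondegenerate
  have hlo : 0 ≤ c₀ * A₁ + d₀ := add_nonneg (mul_nonneg hc₀.le hA₁0) hd₀
  have hhi2 : 0 < e₀ * B₂ + h₀ := by linarith only [mul_pos he₀ hB₂pos, hh₀]
  have hlohi : (c₀ * A₁ + d₀) * (e₀ * A₂ + h₀) < (c₀ * B₁ + d₀) * (e₀ * B₂ + h₀) := by
    have h1 : (c₀ * A₁ + d₀) * (e₀ * A₂ + h₀) ≤ (c₀ * A₁ + d₀) * (e₀ * B₂ + h₀) := by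
      have h0 := mul_le_mul_of_nonneg_left hAB₂.le he₀.le
      apply mul_le_mul_of_nonneg_left _ hlo
      linarith only [h0]
    have h2 : (c₀ * A₁ + d₀) * (e₀ * B₂ + h₀) < (c₀ * B₁ + d₀) * (e₀ * B₂ + h₀) := by
      apply mul_lt_mul_of_pos_right _ hhi2
      have h0 := mul_lt_mul_of_pos_left hAB₁ hc₀
      linarith only [h0]
    linarith only [h1, h2]
  obtain ⟨w, hw1, hw2⟩ := exists_between hlohi
  have hIoo : Ioo ((c₀ * A₁ + d₀) * (e₀ * A₂ + h₀)) ((c₀ * B₁ + d₀) * (e₀ * B₂ + h₀))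
      ⊆ interior {w : ℝ | ∃ x ∈ K₁, ∃ y ∈ K₂, x * y = w} :=
    interior_maximal (subset_trans Ioo_subset_Icc_self hsub) isOpen_Ioo
  exact ⟨w, hIoo ⟨hw1, hw2⟩⟩
end

section
/- Let C be the middle-third Cantor set. Then {1/x₁ + 1/x₂ + 1/x₃ + 1/x₄ : x₁, x₂, x₃, x₄ ∈ C, each x_i ≠ 0} = [4, ∞). -/
open Set

noncomputable section
set_option maxHeartbeats 1000000

lemma mem_cantorSet_iff {x : ℝ} : x ∈ cantorSet ↔ ∀ n, x ∈ preCantorSet n := Set.mem_iInter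

lemma cantorSet_div_three {x : ℝ} (hx : x ∈ cantorSet) : x / 3 ∈ cantorSet := by
  rw [mem_cantorSet_iff] at hx ⊢
  intro n
  cases n with
  | zero =>
    have h := hx 0
    simp only [preCantorSet_zero, Set.mem_Icc] at h ⊢
    constructor <;> linarith [h.1, h.2]
  | succ n => exact Or.inl ⟨x, hx n, rfl⟩

lemma cantorSet_two_add_div_three {x : ℝ} (hx : x ∈ cantorSet) : (2 + x) / 3 ∈ cantorSet := by
  rw [mem_cantorSet_iff] at hx ⊢
  intro n
  cases n with
  | zero =>
    have h := hx 0
    simp only [preCantorSet_zero, Set.mem_Icc] at h ⊢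
    constructor <;> linarith [h.1, h.2]
  | succ n => exact Or.inr ⟨x, hx n, rfl⟩

lemma cantorSet_div_pow {x : ℝ} (hx : x ∈ cantorSet) (m : ℕ) : x / 3 ^ m ∈ cantorSet := by
  induction m with
  | zero => simpa using hx
  | succ m ih =>
    have : x / 3 ^ (m + 1) = (x / 3 ^ m) / 3 := by
      rw [div_div]; ring_nf
    rw [this]
    exact cantorSet_div_three ih

/-- The summand sequence for a digit stream. -/
def dTerm (d : ℕ → Bool) (k : ℕ) : ℝ := (cond (d k) 2 0 : ℝ) / 3 ^ (k + 1)

lemma dTerm_nonneg (d : ℕ → Bool) (k : ℕ) : 0 ≤ dTerm d k := by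
  unfold dTerm; cases d k <;> simp <;> positivity

lemma dTerm_le (d : ℕ → Bool) (k : ℕ) : dTerm d k ≤ 2 * (1/3 : ℝ) ^ (k+1) := by
  unfold dTerm
  have h : ((2:ℝ)) / 3 ^ (k+1) = 2 * (1/3 : ℝ) ^ (k+1) := by
    rw [div_pow]; ring
  cases d k
  · simp only [cond_false, zero_div]
    positivity
  · simp only [cond_true, h, le_refl]



lemma geom_summable : Summable (fun k : ℕ => 2 * (1/3 : ℝ) ^ (k+1)) := by
  apply Summable.mul_left
  exact (summable_geometric_of_lt_one (by norm_num) (by norm_num)).comp_injective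
    (add_left_injective 1)

lemma geom_tsum : ∑' k : ℕ, 2 * (1/3 : ℝ) ^ (k+1) = 1 := by
  have h : ∀ k : ℕ, 2 * (1/3 : ℝ) ^ (k+1) = (2/3) * (1/3)^k := by
    intro k; rw [pow_succ]; ring
  simp only [h]
  rw [tsum_mul_left, tsum_geometric_of_lt_one (by norm_num) (by norm_num)]
  norm_num

lemma dSummable (d : ℕ → Bool) : Summable (dTerm d) :=
  Summable.of_nonneg_of_le (dTerm_nonneg d) (dTerm_le d) geom_summable

/-- The real number with ternary digits given by `d` (0 ↦ digit 0, 1 ↦ digit 2). -/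
def dSum (d : ℕ → Bool) : ℝ := ∑' k, dTerm d k

/-- partial sum -/
def dPart (d : ℕ → Bool) (n : ℕ) : ℝ := ∑ k ∈ Finset.range n, dTerm d k

lemma dPart_le_dSum (d : ℕ → Bool) (n : ℕ) : dPart d n ≤ dSum d := by
  rw [dSum, ← (dSummable d).sum_add_tsum_nat_add n]
  have : 0 ≤ ∑' k, dTerm d (k + n) :=
    tsum_nonneg fun k => dTerm_nonneg d _
  unfold dPart
  linarith

lemma dSum_le_dPart_add (d : ℕ → Bool) (n : ℕ) : dSum d ≤ dPart d n + (1/3 : ℝ) ^ n := by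
  rw [dSum, ← (dSummable d).sum_add_tsum_nat_add n]
  unfold dPart
  have h1 : ∑' k, dTerm d (k + n) ≤ ∑' k : ℕ, 2 * (1/3 : ℝ) ^ (k + n + 1) := by
    apply Summable.tsum_le_tsum _ ((dSummable d).comp_injective (add_left_injective n)) 
      (geom_summable.comp_injective (add_left_injective n) |>.congr (by intro k; rfl))
    · intro k; exact dTerm_le d (k + n)
  have h2 : ∑' k : ℕ, 2 * (1/3 : ℝ) ^ (k + n + 1) = (1/3 : ℝ)^n * ∑' k : ℕ, 2 * (1/3 : ℝ) ^ (k + 1) := by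
    rw [← tsum_mul_left]
    congr 1; funext k; rw [show k + n + 1 = (k+1) + n by ring, pow_add]; ring
  rw [geom_tsum] at h2
  nlinarith [h1, h2]

lemma dSum_nonneg (d : ℕ → Bool) : 0 ≤ dSum d := tsum_nonneg (dTerm_nonneg d)

lemma dSum_le_one (d : ℕ → Bool) : dSum d ≤ 1 := by
  have := dSum_le_dPart_add d 0
  simpa [dPart] using this

lemma dSum_succ_shift (d : ℕ → Bool) :
    dSum d = ((cond (d 0) 2 0 : ℝ) + dSum (fun k => d (k+1))) / 3 := by
  rw [dSum, (dSummable d).tsum_eq_zero_add]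
  have h0 : dTerm d 0 = (cond (d 0) 2 0 : ℝ) / 3 := by simp [dTerm]
  have h1 : ∀ k, dTerm d (k+1) = dTerm (fun j => d (j+1)) k / 3 := by
    intro k
    simp only [dTerm, div_div, ← pow_succ]
  simp only [h0, h1]
  rw [tsum_div_const]
  rw [dSum]
  ring

lemma dSum_mem_preCantorSet (n : ℕ) : ∀ d : ℕ → Bool, dSum d ∈ preCantorSet n := by
  induction n with
  | zero => exact fun d => ⟨dSum_nonneg d, dSum_le_one d⟩
  | succ n ih =>
    intro d
    rcases hd : d 0 with _ | _
    · left
      exact ⟨dSum (fun k => d (k+1)), ih _, by rw [dSum_succ_shift d, hd]; norm_num⟩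
    · right
      exact ⟨dSum (fun k => d (k+1)), ih _, by rw [dSum_succ_shift d, hd]; norm_num⟩

lemma dSum_mem_cantorSet (d : ℕ → Bool) : dSum d ∈ cantorSet :=
  Set.mem_iInter.mpr fun n => dSum_mem_preCantorSet n d


/-- `phi w x = 3w/(2+x)`, the reciprocal `1/x'` of a scaled Cantor point. -/
def phi (w x : ℝ) : ℝ := 3 * w / (2 + x)

lemma phi_sub (w : ℝ) {x y : ℝ} (hx : 0 ≤ x) (hy : 0 ≤ y) :
    phi w x - phi w y = 3 * w * (y - x) / ((2 + x) * (2 + y)) := by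
  unfold phi
  rw [div_sub_div _ _ (by linarith : (2:ℝ) + x ≠ 0) (by linarith : (2:ℝ) + y ≠ 0)]
  ring_nf

lemma phi_anti (w : ℝ) (hw : 0 ≤ w) {x y : ℝ} (hx : 0 ≤ x) (hxy : x ≤ y) :
    phi w y ≤ phi w x := by
  unfold phi
  exact div_le_div_of_nonneg_left (by linarith) (by linarith) (by linarith)

/-- width lower bound -/
lemma width_lb {w a l : ℝ} (hw : 0 < w) (ha : 0 ≤ a) (hl : 0 ≤ l) (h1 : a + l ≤ 1) :
    w * l / 3 ≤ phi w a - phi w (a + l) := by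
  rw [phi_sub w ha (by linarith), show a + l - a = l by ring,
    show w * l / 3 = 3 * w * l / 9 by ring]
  exact div_le_div_of_nonneg_left (by positivity) (by nlinarith) (by nlinarith)

/-- width upper bound -/
lemma width_ub {w a l : ℝ} (hw : 0 < w) (ha : 0 ≤ a) (hl : 0 ≤ l) :
    phi w a - phi w (a + l) ≤ 3 * w * l / 4 := by
  rw [phi_sub w ha (by linarith), show a + l - a = l by ring]
  exact div_le_div_of_nonneg_left (by positivity) (by nlinarith) (by nlinarith)

/-- gap upper bound -/
lemma gap_ub {w a l : ℝ} (hw : 0 < w) (ha : 0 ≤ a) (hl : 0 ≤ l) :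
    phi w (a + l/3) - phi w (a + 2*l/3) ≤ w * l / 4 := by
  rw [phi_sub w (by linarith) (by linarith),
    show 3 * w * (a + 2*l/3 - (a + l/3)) = w * l by ring]
  exact div_le_div_of_nonneg_left (by positivity) (by nlinarith) (by nlinarith)


lemma step {w a l R S t : ℝ} (hw : 0 < w) (ha : 0 ≤ a) (hl : 0 < l) (hal : a + l ≤ 1)
    (hRS : w * l / 4 ≤ S - R)
    (hlo : R + phi w (a + l) ≤ t) (hhi : t ≤ S + phi w a) :
    ∃ b, (b = a ∨ b = a + 2*l/3) ∧ 0 ≤ b ∧ b + l/3 ≤ 1 ∧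
      R + phi w (b + l/3) ≤ t ∧ t ≤ S + phi w b := by
  by_cases hc : t ≤ S + phi w (a + 2*l/3)
  · refine ⟨a + 2*l/3, Or.inr rfl, by linarith, by linarith, ?_, hc⟩
    rw [show a + 2*l/3 + l/3 = a + l by ring]
    exact hlo
  · push_neg at hc
    have hg := gap_ub hw ha hl.le (w := w)
    exact ⟨a, Or.inl rfl, ha, by linarith, by linarith, hhi⟩

lemma roundStep {w1 w2 w3 w4 t a1 a2 a3 a4 l : ℝ}
    (hw1 : 0 < w1) (hw2 : 0 < w2) (hw3 : 0 < w3) (hw4 : 0 < w4)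
    (h1 : w1/4 ≤ w2/3 + w3/3 + w4/3)
    (h2 : w2/4 ≤ w1/9 + w3/3 + w4/3)
    (h3 : w3/4 ≤ w1/9 + w2/9 + w4/3)
    (h4 : w4/4 ≤ w1/9 + w2/9 + w3/9)
    (hl : 0 < l)
    (ha1 : 0 ≤ a1) (ha1' : a1 + l ≤ 1) (ha2 : 0 ≤ a2) (ha2' : a2 + l ≤ 1)
    (ha3 : 0 ≤ a3) (ha3' : a3 + l ≤ 1) (ha4 : 0 ≤ a4) (ha4' : a4 + l ≤ 1)
    (hlo : phi w1 (a1+l) + phi w2 (a2+l) + phi w3 (a3+l) + phi w4 (a4+l) ≤ t)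
    (hhi : t ≤ phi w1 a1 + phi w2 a2 + phi w3 a3 + phi w4 a4) :
    ∃ b1 b2 b3 b4,
      (b1 = a1 ∨ b1 = a1 + 2*l/3) ∧ (b2 = a2 ∨ b2 = a2 + 2*l/3) ∧
      (b3 = a3 ∨ b3 = a3 + 2*l/3) ∧ (b4 = a4 ∨ b4 = a4 + 2*l/3) ∧
      (0 ≤ b1 ∧ b1 + l/3 ≤ 1) ∧ (0 ≤ b2 ∧ b2 + l/3 ≤ 1) ∧
      (0 ≤ b3 ∧ b3 + l/3 ≤ 1) ∧ (0 ≤ b4 ∧ b4 + l/3 ≤ 1) ∧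
      (phi w1 (b1+l/3) + phi w2 (b2+l/3) + phi w3 (b3+l/3) + phi w4 (b4+l/3) ≤ t) ∧
      (t ≤ phi w1 b1 + phi w2 b2 + phi w3 b3 + phi w4 b4) := by
  have hl3 : (0:ℝ) < l/3 := by linarith
  have W2 := width_lb hw2 ha2 hl.le ha2'
  have W3 := width_lb hw3 ha3 hl.le ha3'
  have W4 := width_lb hw4 ha4 hl.le ha4'
  -- coordinate 1
  obtain ⟨b1, hb1or, hb1z, hb1o, hlo1, hhi1⟩ :=
    step (t := t) (R := phi w2 (a2+l) + phi w3 (a3+l) + phi w4 (a4+l))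
      (S := phi w2 a2 + phi w3 a3 + phi w4 a4)
      hw1 ha1 hl ha1'
      (by nlinarith [mul_le_mul_of_nonneg_right h1 hl.le])
      (by linarith) (by linarith)
  have W1' := width_lb hw1 hb1z hl3.le hb1o
  -- coordinate 2
  obtain ⟨b2, hb2or, hb2z, hb2o, hlo2, hhi2⟩ :=
    step (t := t) (R := phi w1 (b1+l/3) + phi w3 (a3+l) + phi w4 (a4+l))
      (S := phi w1 b1 + phi w3 a3 + phi w4 a4)
      hw2 ha2 hl ha2'
      (by nlinarith [mul_le_mul_of_nonneg_right h2 hl.le])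
      (by linarith) (by linarith)
  have W2' := width_lb hw2 hb2z hl3.le hb2o
  -- coordinate 3
  obtain ⟨b3, hb3or, hb3z, hb3o, hlo3, hhi3⟩ :=
    step (t := t) (R := phi w1 (b1+l/3) + phi w2 (b2+l/3) + phi w4 (a4+l))
      (S := phi w1 b1 + phi w2 b2 + phi w4 a4)
      hw3 ha3 hl ha3'
      (by nlinarith [mul_le_mul_of_nonneg_right h3 hl.le])
      (by linarith) (by linarith)
  have W3' := width_lb hw3 hb3z hl3.le hb3o
  -- coordinate 4
  obtain ⟨b4, hb4or, hb4z, hb4o, hlo4, hhi4⟩ :=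
    step (t := t) (R := phi w1 (b1+l/3) + phi w2 (b2+l/3) + phi w3 (b3+l/3))
      (S := phi w1 b1 + phi w2 b2 + phi w3 b3)
      hw4 ha4 hl ha4'
      (by nlinarith [mul_le_mul_of_nonneg_right h4 hl.le])
      (by linarith) (by linarith)
  exact ⟨b1, b2, b3, b4, hb1or, hb2or, hb3or, hb4or,
    ⟨hb1z, hb1o⟩, ⟨hb2z, hb2o⟩, ⟨hb3z, hb3o⟩, ⟨hb4z, hb4o⟩,
    by linarith, by linarith⟩

section Engine

variable {w1 w2 w3 w4 t : ℝ}

/-- length at level n -/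
def lenC (n : ℕ) : ℝ := (1/3 : ℝ) ^ n

lemma lenC_pos (n : ℕ) : 0 < lenC n := by unfold lenC; positivity

lemma lenC_succ (n : ℕ) : lenC (n+1) = lenC n / 3 := by
  simp [lenC, pow_succ]; ring

/-- the invariant -/
def CInv (w1 w2 w3 w4 t : ℝ) (n : ℕ) (p : ℝ × ℝ × ℝ × ℝ) : Prop :=
  (0 ≤ p.1 ∧ p.1 + lenC n ≤ 1) ∧ (0 ≤ p.2.1 ∧ p.2.1 + lenC n ≤ 1) ∧
  (0 ≤ p.2.2.1 ∧ p.2.2.1 + lenC n ≤ 1) ∧ (0 ≤ p.2.2.2 ∧ p.2.2.2 + lenC n ≤ 1) ∧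
  (phi w1 (p.1 + lenC n) + phi w2 (p.2.1 + lenC n) + phi w3 (p.2.2.1 + lenC n)
      + phi w4 (p.2.2.2 + lenC n) ≤ t) ∧
  (t ≤ phi w1 p.1 + phi w2 p.2.1 + phi w3 p.2.2.1 + phi w4 p.2.2.2)

/-- one-step relation: each coordinate either stays or jumps by `2 · lenC (n+1)`. -/
def Nxt (n : ℕ) (p q : ℝ × ℝ × ℝ × ℝ) : Prop :=
  (q.1 = p.1 ∨ q.1 = p.1 + 2 * lenC (n+1)) ∧
  (q.2.1 = p.2.1 ∨ q.2.1 = p.2.1 + 2 * lenC (n+1)) ∧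
  (q.2.2.1 = p.2.2.1 ∨ q.2.2.1 = p.2.2.1 + 2 * lenC (n+1)) ∧
  (q.2.2.2 = p.2.2.2 ∨ q.2.2.2 = p.2.2.2 + 2 * lenC (n+1))

lemma key (hw1 : 0 < w1) (hw2 : 0 < w2) (hw3 : 0 < w3) (hw4 : 0 < w4)
    (h1 : w1/4 ≤ w2/3 + w3/3 + w4/3)
    (h2 : w2/4 ≤ w1/9 + w3/3 + w4/3)
    (h3 : w3/4 ≤ w1/9 + w2/9 + w4/3)
    (h4 : w4/4 ≤ w1/9 + w2/9 + w3/9) :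
    ∀ n p, CInv w1 w2 w3 w4 t n p →
      ∃ q, Nxt n p q ∧ CInv w1 w2 w3 w4 t (n+1) q := by
  intro n p hp
  obtain ⟨⟨A1, A1'⟩, ⟨A2, A2'⟩, ⟨A3, A3'⟩, ⟨A4, A4'⟩, hlo, hhi⟩ := hp
  obtain ⟨b1, b2, b3, b4, o1, o2, o3, o4, B1, B2, B3, B4, lo', hi'⟩ :=
    roundStep (l := lenC n) hw1 hw2 hw3 hw4 h1 h2 h3 h4 (lenC_pos n)
      A1 A1' A2 A2' A3 A3' A4 A4' hlo hhi
  have h23 : 2 * lenC n / 3 = 2 * lenC (n+1) := by rw [lenC_succ]; ring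
  have h13 : lenC n / 3 = lenC (n+1) := by rw [lenC_succ]
  refine ⟨(b1, b2, b3, b4), ⟨?_, ?_, ?_, ?_⟩, ?_, ?_, ?_, ?_, ?_, ?_⟩
  · rw [← h23]; exact o1
  · rw [← h23]; exact o2
  · rw [← h23]; exact o3
  · rw [← h23]; exact o4
  · exact ⟨B1.1, by rw [← h13]; exact B1.2⟩
  · exact ⟨B2.1, by rw [← h13]; exact B2.2⟩
  · exact ⟨B3.1, by rw [← h13]; exact B3.2⟩
  · exact ⟨B4.1, by rw [← h13]; exact B4.2⟩
  · show phi w1 (b1 + lenC (n+1)) + phi w2 (b2 + lenC (n+1)) + phi w3 (b3 + lenC (n+1))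
        + phi w4 (b4 + lenC (n+1)) ≤ t
    rw [← h13]; exact lo'
  · exact hi'

end Engine

lemma engine {w1 w2 w3 w4 t : ℝ}
    (hw1 : 0 < w1) (hw2 : 0 < w2) (hw3 : 0 < w3) (hw4 : 0 < w4)
    (h1 : w1/4 ≤ w2/3 + w3/3 + w4/3)
    (h2 : w2/4 ≤ w1/9 + w3/3 + w4/3)
    (h3 : w3/4 ≤ w1/9 + w2/9 + w4/3)
    (h4 : w4/4 ≤ w1/9 + w2/9 + w3/9)
    (hlo : w1 + w2 + w3 + w4 ≤ t) (hhi : t ≤ 3*(w1 + w2 + w3 + w4)/2) :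
    ∃ c1 ∈ cantorSet, ∃ c2 ∈ cantorSet, ∃ c3 ∈ cantorSet, ∃ c4 ∈ cantorSet,
      t = phi w1 c1 + phi w2 c2 + phi w3 c3 + phi w4 c4 := by
  classical
  have inv0 : CInv w1 w2 w3 w4 t 0 (0, 0, 0, 0) := by
    refine ⟨⟨le_refl 0, by norm_num [lenC]⟩, ⟨le_refl 0, by norm_num [lenC]⟩,
      ⟨le_refl 0, by norm_num [lenC]⟩, ⟨le_refl 0, by norm_num [lenC]⟩, ?_, ?_⟩
    · show phi w1 (0 + lenC 0) + phi w2 (0 + lenC 0) + phi w3 (0 + lenC 0) + phi w4 (0 + lenC 0) ≤ t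
      have : ∀ w : ℝ, phi w (0 + lenC 0) = w := by
        intro w; simp [phi, lenC]; ring
      rw [this, this, this, this]; exact hlo
    · show t ≤ phi w1 0 + phi w2 0 + phi w3 0 + phi w4 0
      have : ∀ w : ℝ, phi w 0 = 3 * w / 2 := by intro w; simp [phi]
      rw [this, this, this, this]; linarith
  have hkey := key (t := t) hw1 hw2 hw3 hw4 h1 h2 h3 h4
  let F : ∀ n : ℕ, {p : ℝ × ℝ × ℝ × ℝ // CInv w1 w2 w3 w4 t n p} := fun n =>
    Nat.rec ⟨(0,0,0,0), inv0⟩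
      (fun n prev => ⟨(hkey n prev.1 prev.2).choose,
        (hkey n prev.1 prev.2).choose_spec.2⟩) n
  have hchain : ∀ n, Nxt n (F n).1 (F (n+1)).1 := fun n =>
    (hkey n (F n).1 (F n).2).choose_spec.1
  -- digit streams
  let d1 : ℕ → Bool := fun n => decide ((F (n+1)).1.1 ≠ (F n).1.1)
  let d2 : ℕ → Bool := fun n => decide ((F (n+1)).1.2.1 ≠ (F n).1.2.1)
  let d3 : ℕ → Bool := fun n => decide ((F (n+1)).1.2.2.1 ≠ (F n).1.2.2.1)
  let d4 : ℕ → Bool := fun n => decide ((F (n+1)).1.2.2.2 ≠ (F n).1.2.2.2)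
  have hterm : ∀ (x y : ℝ) (n : ℕ), (y = x ∨ y = x + 2 * lenC (n+1)) →
      y = x + (cond (decide (y ≠ x)) 2 0 : ℝ) / 3 ^ (n+1) := by
    intro x y n hor
    rcases hor with h | h
    · simp [h]
    · have hne : y ≠ x := by
        rw [h]; have := lenC_pos (n+1); intro hc; nlinarith
      rw [decide_eq_true hne]
      simp only [cond_true]
      have hl : lenC (n+1) = 1 / 3 ^ (n+1) := by
        unfold lenC; rw [div_pow]; norm_num
      rw [h, hl]; ring
  have hpart : ∀ n, dPart d1 n = (F n).1.1 ∧ dPart d2 n = (F n).1.2.1 ∧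
      dPart d3 n = (F n).1.2.2.1 ∧ dPart d4 n = (F n).1.2.2.2 := by
    intro n
    induction n with
    | zero => refine ⟨?_, ?_, ?_, ?_⟩ <;> simp [dPart, F]
    | succ n ih =>
      have hc := hchain n
      have e1 := hterm _ _ n hc.1
      have e2 := hterm _ _ n hc.2.1
      have e3 := hterm _ _ n hc.2.2.1
      have e4 := hterm _ _ n hc.2.2.2
      refine ⟨?_, ?_, ?_, ?_⟩
      · rw [dPart, Finset.sum_range_succ, ← dPart, ih.1, dTerm]; exact (e1).symm
      · rw [dPart, Finset.sum_range_succ, ← dPart, ih.2.1, dTerm]; exact (e2).symm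
      · rw [dPart, Finset.sum_range_succ, ← dPart, ih.2.2.1, dTerm]; exact (e3).symm
      · rw [dPart, Finset.sum_range_succ, ← dPart, ih.2.2.2, dTerm]; exact (e4).symm
  set c1 := dSum d1 with hc1
  set c2 := dSum d2 with hc2
  set c3 := dSum d3 with hc3
  set c4 := dSum d4 with hc4
  refine ⟨c1, dSum_mem_cantorSet d1, c2, dSum_mem_cantorSet d2,
    c3, dSum_mem_cantorSet d3, c4, dSum_mem_cantorSet d4, ?_⟩
  -- approximation bound at every level
  have hbound : ∀ n, |t - (phi w1 c1 + phi w2 c2 + phi w3 c3 + phi w4 c4)|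
      ≤ 3 * (w1 + w2 + w3 + w4) / 4 * lenC n := by
    intro n
    obtain ⟨⟨A1, A1'⟩, ⟨A2, A2'⟩, ⟨A3, A3'⟩, ⟨A4, A4'⟩, hlo', hhi'⟩ := (F n).2
    have hp := hpart n
    have hLn : lenC n = (1/3 : ℝ) ^ n := rfl
    have hcb : ∀ (d : ℕ → Bool) (a : ℝ), dPart d n = a →
        a ≤ dSum d ∧ dSum d ≤ a + lenC n := by
      intro d a ha
      constructor
      · rw [← ha]; exact dPart_le_dSum d n
      · rw [← ha, hLn]; exact dSum_le_dPart_add d n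
    obtain ⟨l1, u1⟩ := hcb d1 _ hp.1
    obtain ⟨l2, u2⟩ := hcb d2 _ hp.2.1
    obtain ⟨l3, u3⟩ := hcb d3 _ hp.2.2.1
    obtain ⟨l4, u4⟩ := hcb d4 _ hp.2.2.2
    have p1u := phi_anti w1 hw1.le A1 l1
    have p1l := phi_anti w1 hw1.le (le_trans A1 l1) u1
    have p2u := phi_anti w2 hw2.le A2 l2
    have p2l := phi_anti w2 hw2.le (le_trans A2 l2) u2
    have p3u := phi_anti w3 hw3.le A3 l3
    have p3l := phi_anti w3 hw3.le (le_trans A3 l3) u3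
    have p4u := phi_anti w4 hw4.le A4 l4
    have p4l := phi_anti w4 hw4.le (le_trans A4 l4) u4
    have wu1 := width_ub (a := (F n).1.1) (l := lenC n) hw1 A1 (lenC_pos n).le
    have wu2 := width_ub (a := (F n).1.2.1) (l := lenC n) hw2 A2 (lenC_pos n).le
    have wu3 := width_ub (a := (F n).1.2.2.1) (l := lenC n) hw3 A3 (lenC_pos n).le
    have wu4 := width_ub (a := (F n).1.2.2.2) (l := lenC n) hw4 A4 (lenC_pos n).le
    rw [abs_le]
    constructor <;> linarith
  -- conclude equality
  by_contra hne
  have habs : 0 < |t - (phi w1 c1 + phi w2 c2 + phi w3 c3 + phi w4 c4)| :=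
    abs_pos.mpr (sub_ne_zero.mpr hne)
  have hKpos : 0 < 3 * (w1 + w2 + w3 + w4) / 4 := by linarith
  obtain ⟨n, hn⟩ := exists_pow_lt_of_lt_one (div_pos habs hKpos)
    (show (1/3 : ℝ) < 1 by norm_num)
  have h2 := (lt_div_iff₀ hKpos).mp hn
  have := hbound n
  rw [show lenC n = (1/3:ℝ)^n from rfl] at this
  nlinarith


lemma exists_scale {y : ℝ} (hy : 4 ≤ y) : ∃ m : ℕ, 4 * 3^m ≤ y ∧ y < 12 * 3^m := by
  classical
  have hex : ∃ n : ℕ, y < 4 * 3^(n+1) := by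
    obtain ⟨n, hn⟩ := pow_unbounded_of_one_lt (R := ℝ) (y/4) (by norm_num : (1:ℝ) < 3)
    refine ⟨n, ?_⟩
    have h3 : (3:ℝ)^n ≤ 3^(n+1) := by
      apply pow_le_pow_right₀ (by norm_num) (by omega)
    have := (div_lt_iff₀ (by norm_num : (0:ℝ) < 4)).mp hn
    nlinarith
  let m := Nat.find hex
  have hm : y < 4 * 3^(m+1) := Nat.find_spec hex
  have hps : (3:ℝ)^(m+1) = 3 * 3^m := by rw [pow_succ]; ring
  refine ⟨m, ?_, by rw [hps] at hm; linarith⟩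
  rcases Nat.eq_zero_or_pos m with h0 | hpos
  · rw [h0]; norm_num; linarith
  · have hk : ¬ y < 4 * 3^((m-1)+1) := Nat.find_min hex (by omega)
    push_neg at hk
    have : m - 1 + 1 = m := by omega
    rwa [this] at hk

lemma phi_pow (e : ℕ) (c : ℝ) (hc : 0 ≤ c) : phi ((3:ℝ)^e) c = 3^e * phi 1 c := by
  unfold phi
  have : (2:ℝ) + c ≠ 0 := by linarith
  field_simp

lemma mem_of_rep {y : ℝ} (m e1 e2 e3 e4 : ℕ)
    (h : ∃ c1 ∈ cantorSet, ∃ c2 ∈ cantorSet, ∃ c3 ∈ cantorSet, ∃ c4 ∈ cantorSet,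
      y / 3^m = phi ((3:ℝ)^e1) c1 + phi ((3:ℝ)^e2) c2 + phi ((3:ℝ)^e3) c3
        + phi ((3:ℝ)^e4) c4) :
    ∃ x₁ ∈ cantorSet, ∃ x₂ ∈ cantorSet, ∃ x₃ ∈ cantorSet, ∃ x₄ ∈ cantorSet,
      x₁ ≠ 0 ∧ x₂ ≠ 0 ∧ x₃ ≠ 0 ∧ x₄ ≠ 0 ∧ y = 1/x₁ + 1/x₂ + 1/x₃ + 1/x₄ := by
  obtain ⟨c1, hc1, c2, hc2, c3, hc3, c4, hc4, hrep⟩ := h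
  have hcs : ∀ {c : ℝ}, c ∈ cantorSet → 0 ≤ c := fun hc =>
    (cantorSet_subset_unitInterval hc).1
  have key : ∀ (c : ℝ) (e : ℕ), c ∈ cantorSet →
      ∃ x ∈ cantorSet, x ≠ 0 ∧ 1/x = 3^m * phi ((3:ℝ)^e) c := by
    intro c e hc
    refine ⟨(2 + c)/3/3^(m+e), cantorSet_div_pow (cantorSet_two_add_div_three hc) (m+e),
      ?_, ?_⟩
    · have h0 : (0:ℝ) < (2 + c)/3/3^(m+e) := by
        have := hcs hc; positivity
      exact ne_of_gt h0
    · have h2c : (2:ℝ) + c ≠ 0 := by have := hcs hc; linarith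
      rw [phi_pow e c (hcs hc)]
      unfold phi
      rw [pow_add]
      field_simp
  obtain ⟨x1, hx1, hn1, he1⟩ := key c1 e1 hc1
  obtain ⟨x2, hx2, hn2, he2⟩ := key c2 e2 hc2
  obtain ⟨x3, hx3, hn3, he3⟩ := key c3 e3 hc3
  obtain ⟨x4, hx4, hn4, he4⟩ := key c4 e4 hc4
  refine ⟨x1, hx1, x2, hx2, x3, hx3, x4, hx4, hn1, hn2, hn3, hn4, ?_⟩
  rw [he1, he2, he3, he4, ← mul_add, ← mul_add, ← mul_add, ← hrep]
  have h3m : (3:ℝ)^m ≠ 0 := by positivity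
  field_simp

/-- An Erdős–Straus-type theorem on the middle-third Cantor set:
`1/C + 1/C + 1/C + 1/C = [4, ∞)`. -/
theorem four_reciprocals_of_cantorSet_eq_Ici_four :
    {y : ℝ | ∃ x₁ ∈ cantorSet, ∃ x₂ ∈ cantorSet, ∃ x₃ ∈ cantorSet, ∃ x₄ ∈ cantorSet,
        x₁ ≠ 0 ∧ x₂ ≠ 0 ∧ x₃ ≠ 0 ∧ x₄ ≠ 0 ∧
        y = 1 / x₁ + 1 / x₂ + 1 / x₃ + 1 / x₄}
      = Set.Ici (4 : ℝ) := by
  ext y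
  simp only [Set.mem_setOf_eq, Set.mem_Ici]
  constructor
  · rintro ⟨x1, h1, x2, h2, x3, h3, x4, h4, n1, n2, n3, n4, rfl⟩
    have key : ∀ {x : ℝ}, x ∈ cantorSet → x ≠ 0 → 1 ≤ 1/x := by
      intro x hx hn
      have h01 := cantorSet_subset_unitInterval hx
      have hpos : 0 < x := lt_of_le_of_ne h01.1 (Ne.symm hn)
      rw [le_div_iff₀ hpos]
      simpa using h01.2
    have k1 := key h1 n1
    have k2 := key h2 n2
    have k3 := key h3 n3
    have k4 := key h4 n4
    linarith
  · intro hy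
    obtain ⟨m, hml, hmu⟩ := exists_scale hy
    have h3m : (0:ℝ) < 3^m := by positivity
    have hsl : 4 ≤ y / 3^m := by rw [le_div_iff₀ h3m]; linarith
    have hsu : y / 3^m < 12 := by rw [div_lt_iff₀ h3m]; linarith
    rcases le_or_gt (y / 3^m) 6 with hc6 | hc6
    · -- weights (1,1,1,1), range [4,6]
      apply mem_of_rep m 0 0 0 0
      have := engine (w1 := (3:ℝ)^0) (w2 := (3:ℝ)^0) (w3 := (3:ℝ)^0) (w4 := (3:ℝ)^0)
        (t := y / 3^m) (by norm_num) (by norm_num) (by norm_num) (by norm_num)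
        (by norm_num) (by norm_num) (by norm_num) (by norm_num)
        (by norm_num; linarith) (by norm_num; linarith)
      exact this
    · rcases le_or_gt (y / 3^m) 9 with hc9 | hc9
      · -- weights (3,1,1,1), range [6,9]
        apply mem_of_rep m 1 0 0 0
        exact engine (w1 := (3:ℝ)^1) (w2 := (3:ℝ)^0) (w3 := (3:ℝ)^0) (w4 := (3:ℝ)^0)
          (t := y / 3^m) (by norm_num) (by norm_num) (by norm_num) (by norm_num)
          (by norm_num) (by norm_num) (by norm_num) (by norm_num)
          (by norm_num; linarith) (by norm_num; linarith)
      · -- weights (3,3,1,1), range [8,12]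
        apply mem_of_rep m 1 1 0 0
        exact engine (w1 := (3:ℝ)^1) (w2 := (3:ℝ)^1) (w3 := (3:ℝ)^0) (w4 := (3:ℝ)^0)
          (t := y / 3^m) (by norm_num) (by norm_num) (by norm_num) (by norm_num)
          (by norm_num) (by norm_num) (by norm_num) (by norm_num)
          (by norm_num; linarith) (by norm_num; linarith)


end
end

section
/- Let C be the middle-third Cantor set. Then {1/x + 1/y + 1/z : x, y, z ∈ C, x, y, z ≠ 0} ⊆ [3, 9/2] ∪ [5, ∞), and {1/x + 1/y : x, y ∈ C, x, y ≠ 0} ⊆ [2, 3] ∪ [4, ∞). In particular, since 3 and 5 belong to the first set and 2 and 4 belong to the second, neither set is an interval (neither set is order-connected). -/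
open Set

lemma one_mem_preCantorSet' (n : ℕ) : (1:ℝ) ∈ preCantorSet n := by
  induction n with
  | zero => simp [preCantorSet]
  | succ n ih => exact Or.inr ⟨1, ih, by norm_num⟩

lemma one_mem_cantorSet' : (1:ℝ) ∈ cantorSet :=
  Set.mem_iInter.mpr one_mem_preCantorSet'

lemma third_mem_cantorSet' : (1/3:ℝ) ∈ cantorSet := by
  refine Set.mem_iInter.mpr fun n => ?_
  cases n with
  | zero => constructor <;> norm_num
  | succ n => exact Or.inl ⟨1, one_mem_preCantorSet' n, by norm_num⟩

/-- For nonzero x in the Cantor set, 1/x ∈ [1, 3/2] or 1/x ≥ 3. -/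
lemma inv_cantor_cases {x : ℝ} (hx : x ∈ cantorSet) (hx0 : x ≠ 0) :
    (1 ≤ 1/x ∧ 1/x ≤ 3/2) ∨ 3 ≤ 1/x := by
  have h01 : x ∈ Set.Icc (0:ℝ) 1 := cantorSet_subset_unitInterval hx
  have hpos : 0 < x := lt_of_le_of_ne h01.1 (Ne.symm hx0)
  have h1 : x ∈ preCantorSet 1 := Set.mem_iInter.mp hx 1
  rcases h1 with ⟨a, ha, rfl⟩ | ⟨a, ha, rfl⟩
  · -- x = a/3 with a ∈ [0,1], so x ≤ 1/3
    have ha' : a ∈ Set.Icc (0:ℝ) 1 := ha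
    right
    simp only at hpos ⊢
    rw [le_div_iff₀ hpos]
    nlinarith [ha'.2, hpos]
  · -- x = (2+a)/3 with a ∈ [0,1], so 2/3 ≤ x ≤ 1
    have ha' : a ∈ Set.Icc (0:ℝ) 1 := ha
    simp only at hpos ⊢
    left
    constructor
    · rw [le_div_iff₀ hpos]; linarith [ha'.2]
    · rw [div_le_div_iff₀ hpos (by norm_num)]; linarith [ha'.1]

/-- Sharpness: `1/C + 1/C + 1/C ⊆ [3, 9/2] ∪ [5, ∞)` and `1/C + 1/C ⊆ [2, 3] ∪ [4, ∞)`;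
since `3, 5` belong to the first set and `2, 4` to the second, neither set is
order-connected (an interval). -/
theorem three_and_two_reciprocals_of_cantorSet_not_interval :
    {y : ℝ | ∃ x₁ ∈ cantorSet, ∃ x₂ ∈ cantorSet, ∃ x₃ ∈ cantorSet,
        x₁ ≠ 0 ∧ x₂ ≠ 0 ∧ x₃ ≠ 0 ∧ y = 1 / x₁ + 1 / x₂ + 1 / x₃}
      ⊆ Set.Icc (3 : ℝ) (9 / 2) ∪ Set.Ici (5 : ℝ) ∧
    {y : ℝ | ∃ x₁ ∈ cantorSet, ∃ x₂ ∈ cantorSet,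
        x₁ ≠ 0 ∧ x₂ ≠ 0 ∧ y = 1 / x₁ + 1 / x₂}
      ⊆ Set.Icc (2 : ℝ) 3 ∪ Set.Ici (4 : ℝ) ∧
    (3 : ℝ) ∈ {y : ℝ | ∃ x₁ ∈ cantorSet, ∃ x₂ ∈ cantorSet, ∃ x₃ ∈ cantorSet,
        x₁ ≠ 0 ∧ x₂ ≠ 0 ∧ x₃ ≠ 0 ∧ y = 1 / x₁ + 1 / x₂ + 1 / x₃} ∧
    (5 : ℝ) ∈ {y : ℝ | ∃ x₁ ∈ cantorSet, ∃ x₂ ∈ cantorSet, ∃ x₃ ∈ cantorSet,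
        x₁ ≠ 0 ∧ x₂ ≠ 0 ∧ x₃ ≠ 0 ∧ y = 1 / x₁ + 1 / x₂ + 1 / x₃} ∧
    (2 : ℝ) ∈ {y : ℝ | ∃ x₁ ∈ cantorSet, ∃ x₂ ∈ cantorSet,
        x₁ ≠ 0 ∧ x₂ ≠ 0 ∧ y = 1 / x₁ + 1 / x₂} ∧
    (4 : ℝ) ∈ {y : ℝ | ∃ x₁ ∈ cantorSet, ∃ x₂ ∈ cantorSet,
        x₁ ≠ 0 ∧ x₂ ≠ 0 ∧ y = 1 / x₁ + 1 / x₂} ∧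
    ¬ ({y : ℝ | ∃ x₁ ∈ cantorSet, ∃ x₂ ∈ cantorSet, ∃ x₃ ∈ cantorSet,
        x₁ ≠ 0 ∧ x₂ ≠ 0 ∧ x₃ ≠ 0 ∧ y = 1 / x₁ + 1 / x₂ + 1 / x₃}).OrdConnected ∧
    ¬ ({y : ℝ | ∃ x₁ ∈ cantorSet, ∃ x₂ ∈ cantorSet,
        x₁ ≠ 0 ∧ x₂ ≠ 0 ∧ y = 1 / x₁ + 1 / x₂}).OrdConnected := by
  have h3 : {y : ℝ | ∃ x₁ ∈ cantorSet, ∃ x₂ ∈ cantorSet, ∃ x₃ ∈ cantorSet,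
        x₁ ≠ 0 ∧ x₂ ≠ 0 ∧ x₃ ≠ 0 ∧ y = 1 / x₁ + 1 / x₂ + 1 / x₃}
      ⊆ Set.Icc (3 : ℝ) (9 / 2) ∪ Set.Ici (5 : ℝ) := by
    rintro y ⟨a, ha, b, hb, c, hc, ha0, hb0, hc0, rfl⟩
    rcases inv_cantor_cases ha ha0 with h1 | h1 <;>
      rcases inv_cantor_cases hb hb0 with h2 | h2 <;>
      rcases inv_cantor_cases hc hc0 with h3 | h3
    · exact Or.inl ⟨by linarith [h1.1, h2.1, h3.1], by linarith [h1.2, h2.2, h3.2]⟩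
    all_goals exact Or.inr (by
      simp only [Set.mem_Ici]
      first
      | linarith [h1.1, h2.1, h3]
      | linarith [h1.1, h2, h3.1]
      | linarith [h1, h2.1, h3.1]
      | linarith [h1.1, h2, h3]
      | linarith [h1, h2.1, h3]
      | linarith [h1, h2, h3.1]
      | linarith [h1, h2, h3])
  have h2 : {y : ℝ | ∃ x₁ ∈ cantorSet, ∃ x₂ ∈ cantorSet,
        x₁ ≠ 0 ∧ x₂ ≠ 0 ∧ y = 1 / x₁ + 1 / x₂}
      ⊆ Set.Icc (2 : ℝ) 3 ∪ Set.Ici (4 : ℝ) := by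
    rintro y ⟨a, ha, b, hb, ha0, hb0, rfl⟩
    rcases inv_cantor_cases ha ha0 with h1 | h1 <;>
      rcases inv_cantor_cases hb hb0 with h2 | h2
    · exact Or.inl ⟨by linarith [h1.1, h2.1], by linarith [h1.2, h2.2]⟩
    · exact Or.inr (by simp only [Set.mem_Ici]; linarith [h1.1, h2])
    · exact Or.inr (by simp only [Set.mem_Ici]; linarith [h1, h2.1])
    · exact Or.inr (by simp only [Set.mem_Ici]; linarith [h1, h2])
  have m3 : (3 : ℝ) ∈ {y : ℝ | ∃ x₁ ∈ cantorSet, ∃ x₂ ∈ cantorSet, ∃ x₃ ∈ cantorSet,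
      x₁ ≠ 0 ∧ x₂ ≠ 0 ∧ x₃ ≠ 0 ∧ y = 1 / x₁ + 1 / x₂ + 1 / x₃} :=
    ⟨1, one_mem_cantorSet', 1, one_mem_cantorSet', 1, one_mem_cantorSet',
      one_ne_zero, one_ne_zero, one_ne_zero, by norm_num⟩
  have m5 : (5 : ℝ) ∈ {y : ℝ | ∃ x₁ ∈ cantorSet, ∃ x₂ ∈ cantorSet, ∃ x₃ ∈ cantorSet,
      x₁ ≠ 0 ∧ x₂ ≠ 0 ∧ x₃ ≠ 0 ∧ y = 1 / x₁ + 1 / x₂ + 1 / x₃} :=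
    ⟨1/3, third_mem_cantorSet', 1, one_mem_cantorSet', 1, one_mem_cantorSet',
      by norm_num, one_ne_zero, one_ne_zero, by norm_num⟩
  have m2 : (2 : ℝ) ∈ {y : ℝ | ∃ x₁ ∈ cantorSet, ∃ x₂ ∈ cantorSet,
      x₁ ≠ 0 ∧ x₂ ≠ 0 ∧ y = 1 / x₁ + 1 / x₂} :=
    ⟨1, one_mem_cantorSet', 1, one_mem_cantorSet', one_ne_zero, one_ne_zero, by norm_num⟩
  have m4 : (4 : ℝ) ∈ {y : ℝ | ∃ x₁ ∈ cantorSet, ∃ x₂ ∈ cantorSet,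
      x₁ ≠ 0 ∧ x₂ ≠ 0 ∧ y = 1 / x₁ + 1 / x₂} :=
    ⟨1/3, third_mem_cantorSet', 1, one_mem_cantorSet', by norm_num, one_ne_zero, by norm_num⟩
  refine ⟨h3, h2, m3, m5, m2, m4, ?_, ?_⟩
  · intro hoc
    have : (19/4 : ℝ) ∈ _ := hoc.out m3 m5 ⟨by norm_num, by norm_num⟩
    rcases h3 this with h | h
    · exact absurd h.2 (by norm_num)
    · exact absurd h (by norm_num)
  · intro hoc
    have : (7/2 : ℝ) ∈ _ := hoc.out m2 m4 ⟨by norm_num, by norm_num⟩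
    rcases h2 this with h | h
    · exact absurd h.2 (by norm_num)
    · exact absurd h (by norm_num)
end

section
/- Let C be the middle-third Cantor set. Then {1/x₁ + 1/x₂ + 1/x₃ + 1/x₄ : x₁, x₂, x₃, x₄ ∈ C ∩ [2/3, 1]} = [4, 6]. -/
open Set

noncomputable def gg (c : ℝ) : ℝ := 3 / (2 + c)

lemma gg_diff {x z : ℝ} (hx : 0 ≤ x) (hz : x ≤ z) :
    gg x - gg z = 3 * (z - x) / ((2 + x) * (2 + z)) := by
  unfold gg
  have h1 : (2 + x) ≠ 0 := by nlinarith
  have h2 : (2 + z) ≠ 0 := by nlinarith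
  field_simp
  ring

lemma gg_anti {x z : ℝ} (hx : 0 ≤ x) (hz : x ≤ z) : gg z ≤ gg x := by
  have := gg_diff hx hz
  have h1 : (0:ℝ) < (2 + x) * (2 + z) := by nlinarith
  nlinarith [div_nonneg (by nlinarith : (0:ℝ) ≤ 3 * (z - x)) h1.le]

lemma gg_lip {x z : ℝ} (hx : 0 ≤ x) (hz : x ≤ z) : gg x - gg z ≤ z - x := by
  rw [gg_diff hx hz]
  have h1 : (0:ℝ) < (2 + x) * (2 + z) := by nlinarith
  rw [div_le_iff₀ h1]
  nlinarith [mul_nonneg (sub_nonneg.2 hz) (show (0:ℝ) ≤ (2+x)*(2+z) - 3 by nlinarith)]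

lemma gap_lt {a δ : ℝ} (ha : 0 ≤ a) (hδ : 0 < δ) :
    gg (a + δ/3) - gg (a + 2*δ/3) < δ/4 := by
  rw [gg_diff (by linarith) (by linarith)]
  have h1 : (0:ℝ) < (2 + (a + δ/3)) * (2 + (a + 2*δ/3)) := by nlinarith
  rw [div_lt_iff₀ h1]
  have hD : (0:ℝ) < (2 + (a + δ/3)) * (2 + (a + 2*δ/3)) - 4 := by nlinarith
  nlinarith [mul_pos hδ hD]

lemma delta_ge {a δ : ℝ} (ha : 0 ≤ a) (h1 : a + δ ≤ 1) (hδ : 0 < δ) :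
    δ/4 ≤ gg a - gg (a + δ) := by
  rw [gg_diff ha (by linarith)]
  have hp : (0:ℝ) < (2 + a) * (2 + (a + δ)) := by nlinarith
  rw [le_div_iff₀ hp]
  nlinarith [mul_nonneg hδ.le (show (0:ℝ) ≤ 9 - (2+a)*(2+(a+δ)) by nlinarith)]

lemma refine_step {y a δ L U : ℝ} (hδ : 0 < δ)
    (hgap : gg (a + δ/3) - gg (a + 2*δ/3) ≤ U - L)
    (hlo : L + gg (a + δ) ≤ y) (hhi : y ≤ U + gg a) :
    ∃ b, (b = a ∨ b = a + 2*δ/3) ∧ L + gg (b + δ/3) ≤ y ∧ y ≤ U + gg b := by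
  by_cases hc : y ≤ U + gg (a + 2*δ/3)
  · refine ⟨a + 2*δ/3, Or.inr rfl, ?_, hc⟩
    have e : a + 2*δ/3 + δ/3 = a + δ := by ring
    rw [e]; exact hlo
  · exact ⟨a, Or.inl rfl, by linarith [not_le.mp hc], hhi⟩
lemma round_step {y δ a b c d : ℝ} (hδ : 0 < δ)
    (ha0 : 0 ≤ a) (ha1 : a + δ ≤ 1) (hb0 : 0 ≤ b) (hb1 : b + δ ≤ 1)
    (hc0 : 0 ≤ c) (hc1 : c + δ ≤ 1) (hd0 : 0 ≤ d) (hd1 : d + δ ≤ 1)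
    (hlo : gg (a+δ) + gg (b+δ) + gg (c+δ) + gg (d+δ) ≤ y)
    (hhi : y ≤ gg a + gg b + gg c + gg d) :
    ∃ a' b' c' d',
      (a' = a ∨ a' = a + 2*δ/3) ∧ (b' = b ∨ b' = b + 2*δ/3) ∧
      (c' = c ∨ c' = c + 2*δ/3) ∧ (d' = d ∨ d' = d + 2*δ/3) ∧
      gg (a'+δ/3) + gg (b'+δ/3) + gg (c'+δ/3) + gg (d'+δ/3) ≤ y ∧
      y ≤ gg a' + gg b' + gg c' + gg d' := by
  have hδ3 : 0 < δ/3 := by linarith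
  obtain ⟨a', haa, hla, hha⟩ := refine_step (y:=y) (a:=a) (δ:=δ)
      (L := gg (b+δ) + gg (c+δ) + gg (d+δ)) (U := gg b + gg c + gg d) hδ
      (by linarith [gap_lt ha0 hδ, delta_ge hb0 hb1 hδ, delta_ge hc0 hc1 hδ,
        delta_ge hd0 hd1 hδ])
      (by linarith) (by linarith)
  have ha'0 : 0 ≤ a' := by rcases haa with rfl | rfl <;> linarith
  have ha'1 : a' + δ/3 ≤ 1 := by rcases haa with rfl | rfl <;> linarith
  obtain ⟨b', hbb, hlb, hhb⟩ := refine_step (y:=y) (a:=b) (δ:=δ)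
      (L := gg (a'+δ/3) + gg (c+δ) + gg (d+δ)) (U := gg a' + gg c + gg d) hδ
      (by linarith [gap_lt hb0 hδ, delta_ge ha'0 ha'1 hδ3, delta_ge hc0 hc1 hδ,
        delta_ge hd0 hd1 hδ])
      (by linarith) (by linarith)
  have hb'0 : 0 ≤ b' := by rcases hbb with rfl | rfl <;> linarith
  have hb'1 : b' + δ/3 ≤ 1 := by rcases hbb with rfl | rfl <;> linarith
  obtain ⟨c', hcc, hlc, hhc⟩ := refine_step (y:=y) (a:=c) (δ:=δ)
      (L := gg (a'+δ/3) + gg (b'+δ/3) + gg (d+δ)) (U := gg a' + gg b' + gg d) hδ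
      (by linarith [gap_lt hc0 hδ, delta_ge ha'0 ha'1 hδ3, delta_ge hb'0 hb'1 hδ3,
        delta_ge hd0 hd1 hδ])
      (by linarith) (by linarith)
  have hc'0 : 0 ≤ c' := by rcases hcc with rfl | rfl <;> linarith
  have hc'1 : c' + δ/3 ≤ 1 := by rcases hcc with rfl | rfl <;> linarith
  obtain ⟨d', hdd, hld, hhd⟩ := refine_step (y:=y) (a:=d) (δ:=δ)
      (L := gg (a'+δ/3) + gg (b'+δ/3) + gg (c'+δ/3)) (U := gg a' + gg b' + gg c') hδ
      (by linarith [gap_lt hd0 hδ, delta_ge ha'0 ha'1 hδ3, delta_ge hb'0 hb'1 hδ3,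
        delta_ge hc'0 hc'1 hδ3])
      (by linarith) (by linarith)
  exact ⟨a', b', c', d', haa, hbb, hcc, hdd, by linarith, by linarith⟩
def PP (y : ℝ) (n : ℕ) (p : ℝ × ℝ × ℝ × ℝ) : Prop :=
  0 ≤ p.1 ∧ p.1 + (1/3:ℝ)^n ≤ 1 ∧
  0 ≤ p.2.1 ∧ p.2.1 + (1/3:ℝ)^n ≤ 1 ∧
  0 ≤ p.2.2.1 ∧ p.2.2.1 + (1/3:ℝ)^n ≤ 1 ∧
  0 ≤ p.2.2.2 ∧ p.2.2.2 + (1/3:ℝ)^n ≤ 1 ∧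
  gg (p.1 + (1/3:ℝ)^n) + gg (p.2.1 + (1/3:ℝ)^n) + gg (p.2.2.1 + (1/3:ℝ)^n)
    + gg (p.2.2.2 + (1/3:ℝ)^n) ≤ y ∧
  y ≤ gg p.1 + gg p.2.1 + gg p.2.2.1 + gg p.2.2.2

def Incr (n : ℕ) (p q : ℝ × ℝ × ℝ × ℝ) : Prop :=
  (q.1 = p.1 ∨ q.1 = p.1 + 2/3*(1/3:ℝ)^n) ∧
  (q.2.1 = p.2.1 ∨ q.2.1 = p.2.1 + 2/3*(1/3:ℝ)^n) ∧
  (q.2.2.1 = p.2.2.1 ∨ q.2.2.1 = p.2.2.1 + 2/3*(1/3:ℝ)^n) ∧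
  (q.2.2.2 = p.2.2.2 ∨ q.2.2.2 = p.2.2.2 + 2/3*(1/3:ℝ)^n)

lemma step_exists {y : ℝ} (n : ℕ) (p : ℝ × ℝ × ℝ × ℝ) (hp : PP y n p) :
    ∃ q, PP y (n+1) q ∧ Incr n p q := by
  obtain ⟨ha0, ha1, hb0, hb1, hc0, hc1, hd0, hd1, hlo, hhi⟩ := hp
  set δ : ℝ := (1/3:ℝ)^n with hδdef
  have hδ : 0 < δ := by positivity
  obtain ⟨a', b', c', d', haa, hbb, hcc, hdd, hlo', hhi'⟩ :=
    round_step hδ ha0 ha1 hb0 hb1 hc0 hc1 hd0 hd1 hlo hhi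
  have hpow : (1/3:ℝ)^(n+1) = δ/3 := by rw [pow_succ]; ring
  have hpow2 : 2/3*(1/3:ℝ)^n = 2*δ/3 := by ring
  refine ⟨(a', b', c', d'), ?_, ?_⟩
  · refine ⟨?_, ?_, ?_, ?_, ?_, ?_, ?_, ?_, ?_, ?_⟩ <;> simp only [hpow] <;>
      first
      | (rcases haa with rfl | rfl <;> linarith)
      | (rcases hbb with rfl | rfl <;> linarith)
      | (rcases hcc with rfl | rfl <;> linarith)
      | (rcases hdd with rfl | rfl <;> linarith)
      | linarith
  · exact ⟨by rw [hpow2]; exact haa, by rw [hpow2]; exact hbb,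
      by rw [hpow2]; exact hcc, by rw [hpow2]; exact hdd⟩

lemma exists_chain {y : ℝ} (h4 : 4 ≤ y) (h6 : y ≤ 6) :
    ∃ F : ℕ → ℝ × ℝ × ℝ × ℝ,
      F 0 = (0, 0, 0, 0) ∧ (∀ n, PP y n (F n)) ∧ ∀ n, Incr n (F n) (F (n+1)) := by
  have base : PP y 0 ((0:ℝ), (0:ℝ), (0:ℝ), (0:ℝ)) := by
    refine ⟨le_refl _, by norm_num, le_refl _, by norm_num, le_refl _, by norm_num,
      le_refl _, by norm_num, ?_, ?_⟩ <;> simp [gg] <;> norm_num <;> linarith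
  choose f hf using fun n p hp => step_exists (y := y) n p hp
  let g : ∀ n : ℕ, {p : ℝ × ℝ × ℝ × ℝ // PP y n p} := fun n =>
    Nat.rec ⟨((0:ℝ), (0:ℝ), (0:ℝ), (0:ℝ)), base⟩
      (fun k ih => ⟨f k ih.1 ih.2, (hf k ih.1 ih.2).1⟩) n
  refine ⟨fun n => (g n).1, rfl, fun n => (g n).2, fun n => ?_⟩
  exact (hf n (g n).1 (g n).2).2
lemma digit_summable {f : ℕ → ℝ} (hf : ∀ n, f n = 0 ∨ f n = 2/3*(1/3)^n) : Summable f := by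
  apply Summable.of_nonneg_of_le (fun n => ?_) (fun n => ?_)
      ((summable_geometric_of_lt_one (r := (1/3:ℝ)) (by norm_num) (by norm_num)).mul_left (2/3))
  · rcases hf n with h | h <;> rw [h] <;> positivity
  · rcases hf n with h | h
    · rw [h]; positivity
    · exact le_of_eq h

lemma digit_tail {f : ℕ → ℝ} (hf : ∀ n, f n = 0 ∨ f n = 2/3*(1/3)^n) (n : ℕ) :
    0 ≤ ∑' k, f (k + n) ∧ ∑' k, f (k + n) ≤ (1/3:ℝ)^n := by
  have hs : Summable f := digit_summable hf
  have hs' : Summable fun k => f (k + n) := (summable_nat_add_iff n).2 hs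
  have hb : Summable fun k : ℕ => (2/3*(1/3)^n : ℝ) * (1/3)^k :=
    (summable_geometric_of_lt_one (by norm_num) (by norm_num)).mul_left _
  constructor
  · exact tsum_nonneg fun k => by rcases hf (k + n) with h | h <;> rw [h] <;> positivity
  · calc ∑' k, f (k + n) ≤ ∑' k : ℕ, (2/3*(1/3)^n : ℝ) * (1/3)^k := by
          apply Summable.tsum_le_tsum (fun k => ?_) hs' hb
          rcases hf (k + n) with h | h
          · rw [h]; positivity
          · apply le_of_eq; rw [h, pow_add]; ring
      _ = (1/3:ℝ)^n := by
          rw [tsum_mul_left, tsum_geometric_of_lt_one (by norm_num) (by norm_num)]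
          norm_num
          ring
lemma digit_mem_pre : ∀ (m : ℕ) (f : ℕ → ℝ), (∀ n, f n = 0 ∨ f n = 2/3*(1/3)^n) →
    (∑' n, f n) ∈ preCantorSet m := by
  intro m
  induction m with
  | zero =>
    intro f hf
    rw [preCantorSet_zero]
    have h0 := (digit_tail hf 0).1
    have h1 := (digit_tail hf 0).2
    simp only [add_zero, pow_zero] at h0 h1
    exact ⟨h0, h1⟩
  | succ m ih =>
    intro f hf
    have hs : Summable f := digit_summable hf
    have hshift : ∑' n, f n = f 0 + ∑' n, f (n + 1) := Summable.tsum_eq_zero_add hs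
    set f' : ℕ → ℝ := fun k => 3 * f (k + 1) with hf'def
    have hf' : ∀ k, f' k = 0 ∨ f' k = 2/3*(1/3)^k := by
      intro k
      rcases hf (k + 1) with h | h
      · left; simp [hf'def, h]
      · right; simp only [hf'def, h, pow_succ]; ring
    have hT : (∑' k, f' k) ∈ preCantorSet m := ih f' hf'
    have hsum : ∑' k, f' k = 3 * ∑' k, f (k + 1) := tsum_mul_left
    have htail : ∑' k, f (k + 1) = (∑' k, f' k) / 3 := by rw [hsum]; ring
    rw [preCantorSet_succ]
    rcases hf 0 with h0 | h0
    · left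
      exact ⟨∑' k, f' k, hT, by rw [hshift, h0, htail]; ring⟩
    · right
      refine ⟨∑' k, f' k, hT, ?_⟩
      rw [hshift, h0, htail]; norm_num; ring

lemma digit_mem {f : ℕ → ℝ} (hf : ∀ n, f n = 0 ∨ f n = 2/3*(1/3)^n) :
    (∑' n, f n) ∈ cantorSet :=
  Set.mem_iInter.mpr fun m => digit_mem_pre m f hf

lemma right_mem {c : ℝ} (hc : c ∈ cantorSet) : (2 + c)/3 ∈ cantorSet := by
  rw [cantorSet, Set.mem_iInter] at hc ⊢
  intro n
  cases n with
  | zero =>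
    have h := hc 0
    rw [preCantorSet_zero] at h ⊢
    exact ⟨by linarith [h.1], by linarith [h.2]⟩
  | succ n => exact Or.inr ⟨c, hc n, rfl⟩

lemma coord_limit {u : ℕ → ℝ} (h0 : u 0 = 0)
    (hinc : ∀ n, u (n+1) = u n ∨ u (n+1) = u n + 2/3*(1/3)^n) :
    ∃ c, c ∈ cantorSet ∧ ∀ n, u n ≤ c ∧ c ≤ u n + (1/3:ℝ)^n := by
  set f : ℕ → ℝ := fun k => u (k+1) - u k with hfdef
  have hf : ∀ n, f n = 0 ∨ f n = 2/3*(1/3)^n := by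
    intro n
    rcases hinc n with h | h
    · left; simp [hfdef, h]
    · right; simp [hfdef, h]
  have hs : Summable f := digit_summable hf
  refine ⟨∑' k, f k, digit_mem hf, fun n => ?_⟩
  have hpartial : ∑ i ∈ Finset.range n, f i = u n := by
    rw [hfdef, Finset.sum_range_sub, h0, sub_zero]
  have hsplit := Summable.sum_add_tsum_nat_add (f := f) n hs
  have htail := digit_tail hf n
  constructor
  · nlinarith [htail.1, hsplit, hpartial]
  · nlinarith [htail.2, hsplit, hpartial]
lemma main_surj {y : ℝ} (h4 : 4 ≤ y) (h6 : y ≤ 6) :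
    ∃ c₁ c₂ c₃ c₄, c₁ ∈ cantorSet ∧ c₂ ∈ cantorSet ∧ c₃ ∈ cantorSet ∧ c₄ ∈ cantorSet ∧
      gg c₁ + gg c₂ + gg c₃ + gg c₄ = y := by
  obtain ⟨F, hF0, hPP, hinc⟩ := exists_chain h4 h6
  obtain ⟨cA, hcA, hbA⟩ := coord_limit (u := fun n => (F n).1)
    (by show (F 0).1 = 0; rw [hF0]) (fun n => (hinc n).1)
  obtain ⟨cB, hcB, hbB⟩ := coord_limit (u := fun n => (F n).2.1)
    (by show (F 0).2.1 = 0; rw [hF0]) (fun n => (hinc n).2.1)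
  obtain ⟨cC, hcC, hbC⟩ := coord_limit (u := fun n => (F n).2.2.1)
    (by show (F 0).2.2.1 = 0; rw [hF0]) (fun n => (hinc n).2.2.1)
  obtain ⟨cD, hcD, hbD⟩ := coord_limit (u := fun n => (F n).2.2.2)
    (by show (F 0).2.2.2 = 0; rw [hF0]) (fun n => (hinc n).2.2.2)
  refine ⟨cA, cB, cC, cD, hcA, hcB, hcC, hcD, ?_⟩
  set S := gg cA + gg cB + gg cC + gg cD with hS
  have key : ∀ n : ℕ, |y - S| ≤ 4 * (1/3:ℝ)^n := by
    intro n
    obtain ⟨hA0, hA1, hB0, hB1, hC0, hC1, hD0, hD1, hlo, hhi⟩ := hPP n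
    have lipA1 := gg_lip hA0 (hbA n).1
    have lipB1 := gg_lip hB0 (hbB n).1
    have lipC1 := gg_lip hC0 (hbC n).1
    have lipD1 := gg_lip hD0 (hbD n).1
    have lipA2 := gg_lip (le_trans hA0 (hbA n).1) (hbA n).2
    have lipB2 := gg_lip (le_trans hB0 (hbB n).1) (hbB n).2
    have lipC2 := gg_lip (le_trans hC0 (hbC n).1) (hbC n).2
    have lipD2 := gg_lip (le_trans hD0 (hbD n).1) (hbD n).2
    rw [abs_le]
    constructor <;> [nlinarith [hbA n, hbB n, hbC n, hbD n]; nlinarith [hbA n, hbB n, hbC n, hbD n]]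
  have hz : |y - S| = 0 := by
    by_contra h
    have hpos : 0 < |y - S| := lt_of_le_of_ne (abs_nonneg _) (Ne.symm h)
    obtain ⟨n, hn⟩ := exists_pow_lt_of_lt_one (show (0:ℝ) < |y - S|/4 by positivity)
      (show (1/3:ℝ) < 1 by norm_num)
    linarith [key n]
  have := abs_eq_zero.mp hz
  linarith

theorem four_reciprocals_cantorSet_inter_Icc_two_thirds_one :
    {y : ℝ | ∃ x₁ ∈ cantorSet ∩ Set.Icc (2 / 3 : ℝ) 1,
        ∃ x₂ ∈ cantorSet ∩ Set.Icc (2 / 3 : ℝ) 1,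
        ∃ x₃ ∈ cantorSet ∩ Set.Icc (2 / 3 : ℝ) 1,
        ∃ x₄ ∈ cantorSet ∩ Set.Icc (2 / 3 : ℝ) 1,
        y = 1 / x₁ + 1 / x₂ + 1 / x₃ + 1 / x₄}
      = Set.Icc (4 : ℝ) 6 := by
  ext y
  simp only [Set.mem_setOf_eq, Set.mem_Icc, Set.mem_inter_iff]
  constructor
  · rintro ⟨x₁, ⟨-, h1, h1'⟩, x₂, ⟨-, h2, h2'⟩, x₃, ⟨-, h3, h3'⟩, x₄, ⟨-, h4, h4'⟩, rfl⟩
    have p1 : (0:ℝ) < x₁ := by linarith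
    have p2 : (0:ℝ) < x₂ := by linarith
    have p3 : (0:ℝ) < x₃ := by linarith
    have p4 : (0:ℝ) < x₄ := by linarith
    have u1 : 1 ≤ 1/x₁ := by rw [le_div_iff₀ p1]; linarith
    have u2 : 1 ≤ 1/x₂ := by rw [le_div_iff₀ p2]; linarith
    have u3 : 1 ≤ 1/x₃ := by rw [le_div_iff₀ p3]; linarith
    have u4 : 1 ≤ 1/x₄ := by rw [le_div_iff₀ p4]; linarith
    have v1 : 1/x₁ ≤ 3/2 := by rw [div_le_iff₀ p1]; linarith
    have v2 : 1/x₂ ≤ 3/2 := by rw [div_le_iff₀ p2]; linarith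
    have v3 : 1/x₃ ≤ 3/2 := by rw [div_le_iff₀ p3]; linarith
    have v4 : 1/x₄ ≤ 3/2 := by rw [div_le_iff₀ p4]; linarith
    exact ⟨by linarith, by linarith⟩
  · rintro ⟨hy4, hy6⟩
    obtain ⟨c₁, c₂, c₃, c₄, m1, m2, m3, m4, hsum⟩ := main_surj hy4 hy6
    have b1 := cantorSet_subset_unitInterval m1
    have b2 := cantorSet_subset_unitInterval m2
    have b3 := cantorSet_subset_unitInterval m3
    have b4 := cantorSet_subset_unitInterval m4
    refine ⟨(2 + c₁)/3, ⟨right_mem m1, by constructor <;> [linarith [b1.1]; linarith [b1.2]]⟩,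
           (2 + c₂)/3, ⟨right_mem m2, by constructor <;> [linarith [b2.1]; linarith [b2.2]]⟩,
           (2 + c₃)/3, ⟨right_mem m3, by constructor <;> [linarith [b3.1]; linarith [b3.2]]⟩,
           (2 + c₄)/3, ⟨right_mem m4, by constructor <;> [linarith [b4.1]; linarith [b4.2]]⟩, ?_⟩
    rw [one_div_div, one_div_div, one_div_div, one_div_div]
    exact hsum.symm
end
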